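/- arXiv:1702.00039 — 6 statements merged into one kernel-verified Lean document; each statement's English description precedes it below -/
import Mathlib

section
/- The ℤ-module morphism d: H → H determined by d(v) = v⁻¹ and d(h_x) = (h_{x⁻¹})⁻¹ for all x ∈ W is a ring homomorphism. -/
open LaurentPolynomial

/-- The Bruhat order on a Coxeter group: `y ≤ x` if some subword of some (equivalently,
every) reduced word for `x` is a reduced word for `y`. -/
def CoxeterSystem.bruhatLE {B W : Type*} [Group W] {M : CoxeterMatrix B}
    (cs : CoxeterSystem M W) (y x : W) : Prop :=
  ∃ ω : List B, cs.IsReduced ω ∧ cs.wordProd ω = x ∧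
    ∃ ω' : List B, ω'.Sublist ω ∧ cs.IsReduced ω' ∧ cs.wordProd ω' = y

/-- The strict Bruhat order. -/
def CoxeterSystem.bruhatLT {B W : Type*} [Group W] {M : CoxeterMatrix B}
    (cs : CoxeterSystem M W) (y x : W) : Prop :=
  cs.bruhatLE y x ∧ y ≠ x

/-- Membership in `v·ℤ[v] ⊆ ℤ[v, v⁻¹]`, where `v = T 1`. -/
def MemVZv (p : LaurentPolynomial ℤ) : Prop :=
  ∃ q : Polynomial ℤ, p = q.toLaurent * T 1

/-- The `ℤ`-module morphism `d : H → H` determined by `d(v) = v⁻¹` and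
`d(hₓ) = (h_{x⁻¹})⁻¹` for all `x ∈ W` (i.e. `d(p·hₓ) = p(v⁻¹)·(h_{x⁻¹})⁻¹` for
`p ∈ ℤ[v,v⁻¹]`) is a ring homomorphism. -/
theorem hecke_duality_is_ring_hom {B W : Type*} [Group W] {M : CoxeterMatrix B} (cs : CoxeterSystem M W)
    {H : Type*} [Ring H] [Algebra (LaurentPolynomial ℤ) H]
    -- `h` is the standard basis of the Hecke algebra `H` of `(W, S)` over `ℤ[v, v⁻¹]`,
    -- where `v` is the Laurent variable `T 1`
    (h : Module.Basis W (LaurentPolynomial ℤ) H) (h_one : h 1 = 1)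
    -- the multiplication rules characterizing the Hecke algebra:
    -- `hₛ hₓ = h_{sx}` if `sx > x`, and `hₛ hₓ = h_{sx} + (v⁻¹ - v) hₓ` if `sx < x`
    (h_mul_gt : ∀ (i : B) (x : W), cs.length (cs.simple i * x) > cs.length x →
      h (cs.simple i) * h x = h (cs.simple i * x))
    (h_mul_lt : ∀ (i : B) (x : W), cs.length (cs.simple i * x) < cs.length x →
      h (cs.simple i) * h x = h (cs.simple i * x) + ((T (-1) - T 1 : LaurentPolynomial ℤ)) • h x)
    (d : H →ₗ[ℤ] H)
    (hd : ∀ (p : LaurentPolynomial ℤ) (x : W),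
      d (p • h x) = (invert p) • Ring.inverse (h (x⁻¹))) :
    d 1 = 1 ∧ ∀ a b : H, d (a * b) = d a * d b := by
  classical
  set c : LaurentPolynomial ℤ := T (-1) - T 1 with hc_def
  -- `d` on basis elements
  have hd1 : ∀ x : W, d (h x) = Ring.inverse (h x⁻¹) := by
    intro x
    have := hd 1 x
    simpa using this
  -- quadratic relation
  have hss : ∀ i : B, h (cs.simple i) * h (cs.simple i) = 1 + c • h (cs.simple i) := by
    intro i
    have hlen : cs.length (cs.simple i * cs.simple i) < cs.length (cs.simple i) := by
      rw [cs.simple_mul_simple_self, cs.length_one, cs.length_simple]; norm_num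
    have := h_mul_lt i (cs.simple i) hlen
    rwa [cs.simple_mul_simple_self, h_one] at this
  -- `h (cs.simple i)` is a unit with explicit inverse
  have hunit_s : ∀ i : B, IsUnit (h (cs.simple i)) := by
    intro i
    refine ⟨⟨h (cs.simple i), h (cs.simple i) - c • 1, ?_, ?_⟩, rfl⟩
    · rw [mul_sub, hss i, mul_smul_comm, mul_one]; abel
    · rw [sub_mul, hss i, smul_mul_assoc, one_mul]; abel
  have hinv_s : ∀ i : B, Ring.inverse (h (cs.simple i)) = h (cs.simple i) - c • 1 := by
    intro i
    have h1 : h (cs.simple i) * (h (cs.simple i) - c • 1) = 1 := by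
      rw [mul_sub, hss i, mul_smul_comm, mul_one]; abel
    have h2 : (h (cs.simple i) - c • 1) * h (cs.simple i) = 1 := by
      rw [sub_mul, hss i, smul_mul_assoc, one_mul]; abel
    exact Ring.inverse_unit ⟨h (cs.simple i), h (cs.simple i) - c • 1, h1, h2⟩
  -- decomposition of a nontrivial element
  have decomp : ∀ x : W, x ≠ 1 → ∃ (i : B) (x' : W),
      x = cs.simple i * x' ∧ cs.length x' + 1 = cs.length x := by
    intro x hx
    obtain ⟨i, hi⟩ := cs.exists_leftDescent_of_ne_one hx
    refine ⟨i, cs.simple i * x, by rw [← mul_assoc, cs.simple_mul_simple_self, one_mul], ?_⟩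
    rcases cs.length_simple_mul x i with hgt | hlt
    · exact absurd hi (by rw [CoxeterSystem.IsLeftDescent, hgt]; omega)
    · exact hlt
  -- right multiplication rule, increasing case
  have R_gt : ∀ (x : W) (i : B), cs.length (x * cs.simple i) > cs.length x →
      h x * h (cs.simple i) = h (x * cs.simple i) := by
    suffices key : ∀ (n : ℕ) (x : W), cs.length x = n → ∀ (i : B),
        cs.length (x * cs.simple i) > cs.length x → h x * h (cs.simple i) = h (x * cs.simple i) from
      fun x i hgt => key (cs.length x) x rfl i hgt
    intro n
    induction n using Nat.strong_induction_on with
    | _ n ih =>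
      intro x hn i hgt
      by_cases hx : x = 1
      · subst hx; rw [h_one, one_mul, one_mul]
      · obtain ⟨t, x', rfl, hl'⟩ := decomp x hx
        subst hn
        have hgt' : cs.length (cs.simple t * x') > cs.length x' := by omega
        have hxs_len : cs.length (cs.simple t * x' * cs.simple i) = cs.length (cs.simple t * x') + 1 := by
          rcases cs.length_mul_simple (cs.simple t * x') i with h1 | h1 <;> omega
        have hx's_len : cs.length (x' * cs.simple i) = cs.length (cs.simple t * x') := by
          have e : cs.simple t * (x' * cs.simple i) = cs.simple t * x' * cs.simple i := by group
          have hle : cs.length (x' * cs.simple i) ≤ cs.length x' + 1 := by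
            have := cs.length_mul_le x' (cs.simple i)
            rwa [cs.length_simple] at this
          rcases cs.length_simple_mul (x' * cs.simple i) t with h1 | h1 <;>
            rw [e, hxs_len] at h1 <;> omega
        have ihx' : h x' * h (cs.simple i) = h (x' * cs.simple i) :=
          ih (cs.length x') (by omega) x' rfl i (by omega)
        rw [← h_mul_gt t x' hgt', mul_assoc, ihx',
          h_mul_gt t (x' * cs.simple i) (by rw [← mul_assoc] at *; omega), ← mul_assoc]
  -- right multiplication rule, decreasing case
  have R_lt : ∀ (x : W) (i : B), cs.length (x * cs.simple i) < cs.length x →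
      h x * h (cs.simple i) = h (x * cs.simple i) + c • h x := by
    intro x i hlt
    set x' := x * cs.simple i with hx'
    have hxx : x' * cs.simple i = x := by
      rw [hx', mul_assoc, cs.simple_mul_simple_self, mul_one]
    have hgt' : cs.length (x' * cs.simple i) > cs.length x' := by rw [hxx]; omega
    have hx_eq : h x = h x' * h (cs.simple i) := by rw [R_gt x' i hgt', hxx]
    calc h x * h (cs.simple i) = h x' * (h (cs.simple i) * h (cs.simple i)) := by rw [hx_eq, mul_assoc]
      _ = h x' + c • (h x' * h (cs.simple i)) := by
          rw [hss i, mul_add, mul_one, mul_smul_comm]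
      _ = h (x * cs.simple i) + c • h x := by rw [← hx_eq, ← hx']
  -- all basis elements are units
  have hunit : ∀ x : W, IsUnit (h x) := by
    suffices key : ∀ (n : ℕ) (x : W), cs.length x = n → IsUnit (h x) from
      fun x => key (cs.length x) x rfl
    intro n
    induction n using Nat.strong_induction_on with
    | _ n ih =>
      intro x hn
      by_cases hx : x = 1
      · subst hx; rw [h_one]; exact isUnit_one
      · obtain ⟨t, x', rfl, hl'⟩ := decomp x hx
        subst hn
        rw [← h_mul_gt t x' (by omega)]
        exact (hunit_s t).mul (ih (cs.length x') (by omega) x' rfl)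
  -- inverse of product of units
  have hinvrev : ∀ a b : H, IsUnit a → IsUnit b →
      Ring.inverse (a * b) = Ring.inverse b * Ring.inverse a := by
    rintro _ _ ⟨ua, rfl⟩ ⟨ub, rfl⟩
    rw [← Units.val_mul, Ring.inverse_unit, Ring.inverse_unit, Ring.inverse_unit,
      mul_inv_rev, Units.val_mul]
  -- `d` is semilinear over `invert`
  have dsmul : ∀ (a : H) (p : LaurentPolynomial ℤ), d (p • a) = invert p • d a := by
    intro a
    induction h.mem_span a using Submodule.span_induction with
    | mem a ha =>
        obtain ⟨x, rfl⟩ := ha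
        intro p
        rw [hd p x, hd1 x]
    | zero => intro p; rw [smul_zero, map_zero, smul_zero]
    | add a b _ _ iha ihb => intro p; rw [smul_add, map_add, iha, ihb, map_add, smul_add]
    | smul q a _ iha =>
        intro p
        rw [smul_smul, iha, map_mul, mul_smul, iha]
  -- `d` intertwines left multiplication by `h (cs.simple i)`
  have dmul_s : ∀ (i : B) (a : H),
      d (h (cs.simple i) * a) = Ring.inverse (h (cs.simple i)) * d a := by
    intro i a
    induction h.mem_span a using Submodule.span_induction with
    | mem a ha =>
        obtain ⟨y, rfl⟩ := ha
        rcases cs.length_simple_mul y i with hgt | hlt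
        · -- increasing case
          have hmul := h_mul_gt i y (by omega)
          rw [hmul, hd1, hd1]
          have hinvlen : cs.length (y⁻¹ * cs.simple i) > cs.length y⁻¹ := by
            have e : y⁻¹ * cs.simple i = (cs.simple i * y)⁻¹ := by
              rw [mul_inv_rev, cs.inv_simple]
            rw [e, cs.length_inv, cs.length_inv]; omega
          have : h y⁻¹ * h (cs.simple i) = h (y⁻¹ * cs.simple i) := R_gt y⁻¹ i hinvlen
          have e2 : (cs.simple i * y)⁻¹ = y⁻¹ * cs.simple i := by
            rw [mul_inv_rev, cs.inv_simple]
          rw [e2, ← this, hinvrev _ _ (hunit y⁻¹) (hunit_s i)]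
        · -- decreasing case
          have hmul := h_mul_lt i y (by omega)
          have e2 : (cs.simple i * y)⁻¹ = y⁻¹ * cs.simple i := by
            rw [mul_inv_rev, cs.inv_simple]
          -- key relation : h y⁻¹ = h ((cs.simple i * y)⁻¹) * h (cs.simple i)
          have hxs : (cs.simple i * y)⁻¹ * cs.simple i = y⁻¹ := by
            rw [e2, mul_assoc, cs.simple_mul_simple_self, mul_one]
          have hlen2 : cs.length ((cs.simple i * y)⁻¹ * cs.simple i) > cs.length (cs.simple i * y)⁻¹ := by
            rw [hxs, cs.length_inv, cs.length_inv]; omega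
          have hkey : h y⁻¹ = h ((cs.simple i * y)⁻¹) * h (cs.simple i) := by
            rw [R_gt _ i hlen2, hxs]
          have hinv_y : Ring.inverse (h y⁻¹) =
              Ring.inverse (h (cs.simple i)) * Ring.inverse (h ((cs.simple i * y)⁻¹)) := by
            rw [hkey, hinvrev _ _ (hunit _) (hunit_s i)]
          have hsy : h (cs.simple i) * Ring.inverse (h y⁻¹) =
              Ring.inverse (h ((cs.simple i * y)⁻¹)) := by
            rw [hinv_y, ← mul_assoc, Ring.mul_inverse_cancel _ (hunit_s i), one_mul]
          have hinvc : invert c = -c := by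
            rw [hc_def, map_sub, invert_T, invert_T]
            ring_nf
          calc d (h (cs.simple i) * h y)
              = d ((1 : LaurentPolynomial ℤ) • h (cs.simple i * y)) + d (c • h y) := by
                rw [← map_add, one_smul, ← hmul]
            _ = Ring.inverse (h ((cs.simple i * y)⁻¹)) + (-c) • Ring.inverse (h y⁻¹) := by
                rw [hd 1 (cs.simple i * y), hd c y, map_one, one_smul, hinvc]
            _ = h (cs.simple i) * Ring.inverse (h y⁻¹) - c • Ring.inverse (h y⁻¹) := by
                rw [hsy, neg_smul, sub_eq_add_neg]
            _ = (h (cs.simple i) - c • 1) * Ring.inverse (h y⁻¹) := by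
                rw [sub_mul, smul_mul_assoc, one_mul]
            _ = Ring.inverse (h (cs.simple i)) * d (h y) := by rw [← hinv_s i, hd1]
    | zero => rw [mul_zero, map_zero, mul_zero]
    | add a b _ _ iha ihb => rw [mul_add, map_add, iha, ihb, map_add, mul_add]
    | smul q a _ iha =>
        rw [mul_smul_comm, dsmul, iha, dsmul, mul_smul_comm]
  -- `d` intertwines left multiplication by any basis element
  have dmul : ∀ (x : W) (a : H),
      d (h x * a) = Ring.inverse (h x⁻¹) * d a := by
    suffices key : ∀ (n : ℕ) (x : W), cs.length x = n → ∀ a : H,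
        d (h x * a) = Ring.inverse (h x⁻¹) * d a from
      fun x a => key (cs.length x) x rfl a
    intro n
    induction n using Nat.strong_induction_on with
    | _ n ih =>
      intro x hn a
      by_cases hx : x = 1
      · subst hx; rw [h_one, one_mul, inv_one, h_one, Ring.inverse_one, one_mul]
      · obtain ⟨t, x', rfl, hl'⟩ := decomp x hx
        subst hn
        have hx_eq : h (cs.simple t * x') = h (cs.simple t) * h x' := (h_mul_gt t x' (by omega)).symm
        have hinvlen : cs.length (x'⁻¹ * cs.simple t) > cs.length x'⁻¹ := by
          have e : x'⁻¹ * cs.simple t = (cs.simple t * x')⁻¹ := by rw [mul_inv_rev, cs.inv_simple]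
          rw [e, cs.length_inv, cs.length_inv]; omega
        have e2 : (cs.simple t * x')⁻¹ = x'⁻¹ * cs.simple t := by rw [mul_inv_rev, cs.inv_simple]
        have hinveq : Ring.inverse (h ((cs.simple t * x')⁻¹)) =
            Ring.inverse (h (cs.simple t)) * Ring.inverse (h x'⁻¹) := by
          rw [e2, ← R_gt x'⁻¹ t hinvlen, hinvrev _ _ (hunit _) (hunit_s t)]
        rw [hx_eq, mul_assoc, dmul_s, ih (cs.length x') (by omega) x' rfl, hinveq, mul_assoc]
  constructor
  · rw [← h_one, hd1, inv_one, h_one, Ring.inverse_one]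
  · intro a b
    induction h.mem_span a using Submodule.span_induction with
    | mem a ha =>
        obtain ⟨x, rfl⟩ := ha
        rw [dmul x b, hd1 x]
    | zero => rw [zero_mul, map_zero, zero_mul]
    | add a a' _ _ iha iha' => rw [add_mul, map_add, iha, iha', map_add, add_mul]
    | smul q a _ iha =>
        rw [smul_mul_assoc, dsmul, iha, dsmul, smul_mul_assoc]
end

section
/- For every x ∈ W there exists a self-dual element b_x ∈ H with b_x ∈ h_x + Σ_{y<x} vℤ[v]·h_y, where < is the Bruhat order. -/
open LaurentPolynomial List

namespace KLProof

attribute [local instance] Classical.propDecidable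

variable {B W : Type*} [Group W] {M : CoxeterMatrix B} (cs : CoxeterSystem M W)

local prefix:100 "s" => cs.simple
local prefix:100 "π" => cs.wordProd
local prefix:100 "ℓ" => cs.length
local prefix:100 "ris" => cs.rightInvSeq
local prefix:100 "lis" => cs.leftInvSeq

/-! ### The Tits permutation action on `W × ZMod 2` -/

/-- One step of the permutation action. -/
noncomputable def phiFun (i : B) : W × ZMod 2 → W × ZMod 2 :=
  fun p => (s i * p.1 * s i, p.2 + if p.1 = s i then 1 else 0)

lemma phiFun_involutive (i : B) : Function.Involutive (phiFun cs i) := by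
  rintro ⟨w, ε⟩
  have h1 : s i * w * s i = s i ↔ w = s i := by
    constructor
    · intro h
      have := congrArg (fun z => s i * z * s i) h
      simpa [mul_assoc] using this
    · rintro rfl; simp
  have h2 : (1 + 1 : ZMod 2) = 0 := by decide
  simp only [phiFun, Prod.mk.injEq, h1]
  constructor
  · simp [mul_assoc]
  · by_cases hw : w = s i <;> simp [hw, add_assoc, h2]

/-- One step of the permutation action, as a permutation. -/
noncomputable def phi (i : B) : Equiv.Perm (W × ZMod 2) :=
  (phiFun_involutive cs i).toPerm

lemma phi_apply (i : B) (w : W) (ε : ZMod 2) :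
    phi cs i (w, ε) = (s i * w * s i, ε + if w = s i then 1 else 0) := rfl

end KLProof

namespace KLProof

attribute [local instance] Classical.propDecidable

variable {B W : Type*} [Group W] {M : CoxeterMatrix B} (cs : CoxeterSystem M W)

local prefix:100 "s" => cs.simple
local prefix:100 "π" => cs.wordProd
local prefix:100 "ℓ" => cs.length
local prefix:100 "ris" => cs.rightInvSeq
local prefix:100 "lis" => cs.leftInvSeq

lemma zmod2_add_self (x : ZMod 2) : x + x = 0 := by revert x; decide

lemma simple_conj_zpow (i j : B) (c : ℤ) :
    s j * (s i * s j) ^ c * s j = (s i * s j) ^ (-c) := by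
  have h : (MulAut.conj (s j)) ((s i * s j) ^ c) = ((s i * s j)⁻¹) ^ c := by
    rw [map_zpow]
    congr 1
    simp [MulAut.conj_apply, mul_assoc]
  rw [MulAut.conj_apply, cs.inv_simple, inv_zpow, ← zpow_neg] at h
  exact h

lemma simple_mul_zpow (i j : B) (c : ℤ) :
    s j * (s i * s j) ^ c = (s i * s j) ^ (-c) * s j := by
  have := simple_conj_zpow cs i j c
  calc s j * (s i * s j) ^ c = (s j * (s i * s j) ^ c * s j) * s j := by simp
  _ = (s i * s j) ^ (-c) * s j := by rw [this]

lemma phi_mul_pow (i j : B) (m : ℕ) (w : W) (ε : ZMod 2) :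
    ((phi cs i * phi cs j) ^ m) (w, ε) =
      ((s i * s j) ^ (m : ℤ) * w * (s i * s j) ^ (-(m : ℤ)),
       ε + ∑ k ∈ Finset.range m,
         ((if w = (s i * s j) ^ (-(2 * (k : ℤ))) * s j then (1 : ZMod 2) else 0) +
          (if w = (s i * s j) ^ (-(2 * (k : ℤ) + 1)) * s j then (1 : ZMod 2) else 0))) := by
  set P := s i * s j with hP
  induction m with
  | zero => simp
  | succ m ih =>
    rw [pow_succ', Equiv.Perm.mul_apply, ih, Equiv.Perm.mul_apply, phi_apply, phi_apply]
    have key : ∀ c : ℤ, (P ^ (m : ℤ) * w * P ^ (-(m : ℤ)) = P ^ c * s j) ↔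
        (w = P ^ (c - 2 * m) * s j) := by
      intro c
      constructor
      · intro h
        have h2 : w = P ^ (-(m:ℤ)) * (P ^ c * s j) * P ^ (m:ℤ) := by
          rw [← h]; group
        calc w = P ^ (-(m:ℤ)) * P ^ c * (s j * P ^ (m:ℤ)) := by rw [h2]; group
        _ = P ^ (-(m:ℤ)) * P ^ c * (P ^ (-(m:ℤ)) * s j) := by rw [simple_mul_zpow]
        _ = P ^ (c - 2 * m) * s j := by group
      · intro h
        calc P ^ (m : ℤ) * w * P ^ (-(m : ℤ))
            = P ^ (m:ℤ) * P ^ (c - 2*m) * (s j * P ^ (-(m:ℤ))) := by rw [h]; group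
        _ = P ^ (m:ℤ) * P ^ (c - 2*m) * (P ^ (m:ℤ) * s j) := by
              rw [simple_mul_zpow, neg_neg]
        _ = P ^ c * s j := by group
    set a := P ^ (m : ℤ) * w * P ^ (-(m : ℤ)) with ha
    have e1 : (if a = s j then (1:ZMod 2) else 0)
        = (if w = P ^ (-(2 * (m:ℤ))) * s j then (1:ZMod 2) else 0) := by
      refine if_congr ?_ rfl rfl
      have := key 0
      simp only [zpow_zero, one_mul] at this
      rw [this]
      norm_num
    have e2 : (if s j * a * s j = s i then (1:ZMod 2) else 0)
        = (if w = P ^ (-(2 * (m:ℤ) + 1)) * s j then (1:ZMod 2) else 0) := by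
      refine if_congr ?_ rfl rfl
      have hPinv : P ^ (-1 : ℤ) * s j = s j * s i * s j := by
        rw [zpow_neg_one, hP, mul_inv_rev]
        simp [mul_assoc]
      have hc : (s j * a * s j = s i) ↔ (a = P ^ (-1 : ℤ) * s j) := by
        rw [hPinv]
        constructor
        · intro h
          have := congrArg (fun z => s j * z * s j) h
          simpa [mul_assoc] using this
        · intro h
          rw [h]
          simp [mul_assoc]
      rw [hc, key (-1)]
      constructor
      · intro h; rw [h]; ring_nf
      · intro h; rw [h]; ring_nf
    simp only [Prod.mk.injEq]
    constructor
    · show s i * (s j * a * s j) * s i = _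
      have h3 : s i * (s j * a * s j) * s i = P * a * P⁻¹ := by rw [hP, mul_inv_rev, cs.inv_simple, cs.inv_simple]; group
      rw [h3, ha, show (P:W)⁻¹ = P ^ (-1:ℤ) from (zpow_neg_one P).symm]
      push_cast
      group
    · show ε + (∑ k ∈ Finset.range m, _) + _ + _ = _
      rw [Finset.sum_range_succ, e1, e2]
      ring


lemma phi_liftable : CoxeterMatrix.IsLiftable M (phi cs) := by
  intro i j
  apply Equiv.ext
  rintro ⟨w, ε⟩
  rw [phi_mul_pow]
  set P := s i * s j with hP
  set m := M i j with hm
  have hPM : P ^ (m : ℤ) = 1 := by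
    rw [zpow_natCast, hP, hm, cs.simple_mul_simple_pow]
  have hperm : (1 : Equiv.Perm (W × ZMod 2)) (w, ε) = (w, ε) := rfl
  rw [hperm]
  simp only [Prod.mk.injEq]
  have hPMneg : P ^ (-(m:ℤ)) = 1 := by rw [zpow_neg, hPM, inv_one]
  constructor
  · rw [hPM, hPMneg]
    simp
  · set f : ℕ → ZMod 2 := fun c => if w = P ^ (-(c:ℤ)) * s j then 1 else 0 with hf
    have step1 : ∀ n : ℕ, (∑ k ∈ Finset.range n,
        ((if w = P ^ (-(2 * (k : ℤ))) * s j then (1 : ZMod 2) else 0) +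
         (if w = P ^ (-(2 * (k : ℤ) + 1)) * s j then (1 : ZMod 2) else 0)))
        = ∑ c ∈ Finset.range (2 * n), f c := by
      intro n
      have ecast : ∀ (c : ℤ) (c' : ℕ), c = (c' : ℤ) →
          (if w = P ^ (-c) * s j then (1:ZMod 2) else 0) = f c' := by
        intro c c' h
        subst h
        rfl
      induction n with
      | zero => simp
      | succ n ihn =>
        rw [Finset.sum_range_succ, ihn, show 2 * (n+1) = (2*n) + 1 + 1 from by ring,
          Finset.sum_range_succ, Finset.sum_range_succ,
          ecast (2 * (n:ℤ)) (2*n) (by push_cast; ring),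
          ecast (2 * (n:ℤ) + 1) (2*n+1) (by push_cast; ring)]
        ring
    have hfper : ∀ c : ℕ, f (m + c) = f c := by
      intro c
      rw [hf]
      refine if_congr ?_ rfl rfl
      have : (P : W) ^ (-((m + c : ℕ) : ℤ)) = P ^ (-(c:ℤ)) := by
        push_cast
        rw [neg_add, zpow_add]
        rw [show (P:W) ^ (-(m:ℤ)) = (P ^ (m:ℤ))⁻¹ by rw [← zpow_neg], hPM]
        simp
      rw [this]
    rw [step1, two_mul, Finset.sum_range_add]
    have : ∀ c ∈ Finset.range m, f (m + c) = f c := fun c _ => hfper c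
    rw [Finset.sum_congr rfl this, ← Finset.sum_add_distrib]
    have : ∀ c ∈ Finset.range m, f c + f c = 0 := fun c _ => zmod2_add_self _
    rw [Finset.sum_congr rfl this]
    simp

/-- The Tits permutation representation. -/
noncomputable def Phi : W →* Equiv.Perm (W × ZMod 2) :=
  cs.lift ⟨phi cs, phi_liftable cs⟩

lemma Phi_simple (i : B) : Phi cs (s i) = phi cs i :=
  cs.lift_apply_simple (phi_liftable cs) i

lemma Phi_wordProd (ω : List B) (w : W) (ε : ZMod 2) :
    Phi cs (π ω) (w, ε) = (π ω * w * (π ω)⁻¹, ε + ((ris ω).count w : ZMod 2)) := by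
  induction ω generalizing w ε with
  | nil => simp [cs.wordProd_nil, map_one]
  | cons i ω ih =>
    rw [cs.wordProd_cons, map_mul, Equiv.Perm.mul_apply, ih, Phi_simple, phi_apply]
    have hris : ris (i :: ω) = (π ω)⁻¹ * s i * π ω :: ris ω := rfl
    simp only [Prod.mk.injEq]
    constructor
    · rw [mul_inv_rev, cs.inv_simple]
      group
    · rw [hris, List.count_cons]
      have hiff : ((π ω)⁻¹ * s i * π ω = w) ↔ (π ω * w * (π ω)⁻¹ = s i) := by
        constructor
        · intro h; rw [← h]; group
        · intro h; rw [← h]; group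
      simp only [beq_iff_eq]
      by_cases hcase : (π ω)⁻¹ * s i * π ω = w
      · rw [if_pos hcase, if_pos (hiff.mp hcase)]
        push_cast
        ring
      · rw [if_neg hcase, if_neg (fun hh => hcase (hiff.mpr hh))]
        push_cast
        ring

/-- The reflection cocycle. -/
noncomputable def eta (z w : W) : ZMod 2 := (Phi cs z (w, 0)).2

lemma eta_wordProd (ω : List B) (w : W) :
    eta cs (π ω) w = ((ris ω).count w : ZMod 2) := by
  obtain ⟨z, hz⟩ : ∃ z, z = π ω := ⟨π ω, rfl⟩
  rw [eta, Phi_wordProd]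
  simp

lemma Phi_fst (z w : W) (ε : ZMod 2) : (Phi cs z (w, ε)).1 = z * w * z⁻¹ := by
  obtain ⟨ω, hω⟩ := cs.wordProd_surjective z
  subst hω
  rw [Phi_wordProd]

lemma Phi_snd (z w : W) (ε : ZMod 2) : (Phi cs z (w, ε)).2 = ε + eta cs z w := by
  obtain ⟨ω, hω⟩ := cs.wordProd_surjective z
  subst hω
  rw [Phi_wordProd, eta_wordProd]

lemma eta_mul (z₁ z₂ w : W) :
    eta cs (z₁ * z₂) w = eta cs z₂ w + eta cs z₁ (z₂ * w * z₂⁻¹) := by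
  have h1 : Phi cs z₂ (w, 0) = (z₂ * w * z₂⁻¹, eta cs z₂ w) :=
    Prod.ext (Phi_fst cs z₂ w 0) rfl
  rw [eta, map_mul, Equiv.Perm.mul_apply, h1, Phi_snd]

lemma mem_ris_of_eta_one {ω : List B} {t : W} (h : eta cs (π ω) t = 1) : t ∈ ris ω := by
  rw [eta_wordProd] at h
  by_contra hm
  rw [List.count_eq_zero_of_not_mem hm] at h
  simp at h

lemma eta_eq_zero_of_not_inversion {z t : W} (h : ¬ ℓ (z * t) < ℓ z) :
    eta cs z t = 0 := by
  obtain ⟨ω, hred, hπ⟩ := cs.exists_reduced_word' z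
  subst hπ
  have h2 : ∀ x : ZMod 2, x = 0 ∨ x = 1 := by decide
  rcases h2 (eta cs (π ω) t) with h0 | h1
  · exact h0
  · exact absurd (cs.isRightInversion_of_mem_rightInvSeq hred
      (mem_ris_of_eta_one cs h1)).2 h

lemma ris_append (α β : List B) :
    ris (α ++ β) = (ris α).map (fun e => (π β)⁻¹ * e * π β) ++ ris β := by
  induction α with
  | nil => simp
  | cons i α ih =>
    show (π (α ++ β))⁻¹ * s i * π (α ++ β) :: ris (α ++ β) = _
    rw [ih]
    show _ = ((π β)⁻¹ * ((π α)⁻¹ * s i * π α) * π β) :: _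
    rw [cs.wordProd_append, mul_inv_rev]
    congr 1
    group

lemma lis_eq_map_conj (ρ : List B) :
    lis ρ = (ris ρ).map (fun e => π ρ * e * (π ρ)⁻¹) := by
  induction ρ with
  | nil => simp
  | cons j ρ ih =>
    show s j :: (lis ρ).map (MulAut.conj (s j)) = _
    rw [ih, List.map_map]
    show _ = (π (j :: ρ) * ((π ρ)⁻¹ * s j * π ρ) * (π (j :: ρ))⁻¹) :: _
    rw [cs.wordProd_cons, mul_inv_rev, cs.inv_simple]
    congr 1
    · group
      simp [mul_assoc]
    · apply List.map_congr_left
      intro e _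
      show s j * (π ρ * e * (π ρ)⁻¹) * (s j)⁻¹ = s j * π ρ * e * ((π ρ)⁻¹ * s j)
      rw [cs.inv_simple]
      group

lemma conj_injective (c d : W) : Function.Injective (fun e : W => c * e * d) := by
  intro a b hab
  simp only at hab
  exact mul_left_cancel (mul_right_cancel hab)

lemma eta_self {t : W} (ht : cs.IsReflection t) : eta cs t t = 1 := by
  obtain ⟨v, i, rfl⟩ := ht
  obtain ⟨ρ, hρ⟩ := cs.wordProd_surjective v
  subst hρ
  set v := π ρ
  set t := v * s i * v⁻¹ with htdef
  have hπ : π (ρ ++ (i :: ρ.reverse)) = t := by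
    rw [cs.wordProd_append, cs.wordProd_cons, cs.wordProd_reverse, htdef, mul_assoc]
  have hkey := eta_wordProd cs (ρ ++ (i :: ρ.reverse)) t
  rw [hπ] at hkey
  rw [hkey, ris_append, List.count_append]
  have hβ : π (i :: ρ.reverse) = s i * v⁻¹ := by
    rw [cs.wordProd_cons, cs.wordProd_reverse]
  have hc1 : List.count t (List.map (fun e => (π (i :: ρ.reverse))⁻¹ * e * π (i :: ρ.reverse)) (ris ρ))
      = (ris ρ).count (s i) := by
    have : t = (fun e => (π (i :: ρ.reverse))⁻¹ * e * π (i :: ρ.reverse)) (s i) := by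
      show t = (π (i :: ρ.reverse))⁻¹ * s i * π (i :: ρ.reverse)
      rw [hβ, htdef, mul_inv_rev, cs.inv_simple]
      simp [mul_assoc]
    rw [this]
    exact List.count_map_of_injective _ _ (conj_injective _ _) _
  have hc2 : (ris (i :: ρ.reverse)).count t = (ris ρ).count (s i) + 1 := by
    have hris : ris (i :: ρ.reverse)
        = (π ρ.reverse)⁻¹ * s i * π ρ.reverse :: ris ρ.reverse := rfl
    have hhead : (π ρ.reverse)⁻¹ * s i * π ρ.reverse = t := by
      rw [cs.wordProd_reverse, htdef]
      group
      rfl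
    rw [hris, List.count_cons]
    simp only [beq_iff_eq]
    rw [if_pos hhead, cs.rightInvSeq_reverse,
      (List.reverse_perm _).count_eq, lis_eq_map_conj]
    congr 1
    have : t = (fun e => π ρ * e * (π ρ)⁻¹) (s i) := rfl
    rw [this]
    exact List.count_map_of_injective _ _ (conj_injective _ _) _
  rw [hc1, hc2]
  push_cast
  rw [← add_assoc, zmod2_add_self]
  ring

lemma eta_one_of_inversion {z t : W} (ht : cs.IsReflection t) (h : ℓ (z * t) < ℓ z) :
    eta cs z t = 1 := by
  have hz : z = (z * t) * t := by rw [mul_assoc, ht.mul_self, mul_one]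
  have h1 : eta cs ((z * t) * t) t = eta cs t t + eta cs (z * t) (t * t * t⁻¹) :=
    eta_mul cs (z * t) t t
  have h2 : t * t * t⁻¹ = t := by rw [ht.mul_self, one_mul, ht.inv]
  have h3 : eta cs (z * t) t = 0 := by
    apply eta_eq_zero_of_not_inversion
    rw [mul_assoc, ht.mul_self, mul_one]
    omega
  rw [← hz, h2, h3, eta_self cs ht, add_zero] at h1
  exact h1

/-- **Strong exchange property**. -/
theorem strong_exchange {ω : List B} {t : W} (hω : cs.IsReduced ω) (ht : cs.IsReflection t)
    (hl : ℓ (π ω * t) < ℓ (π ω)) : ∃ j < ω.length, π (ω.eraseIdx j) = π ω * t := by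
  have h1 : eta cs (π ω) t = 1 := eta_one_of_inversion cs ht hl
  have h2 : t ∈ ris ω := mem_ris_of_eta_one cs h1
  obtain ⟨j, hj, hjt⟩ := List.mem_iff_getElem.mp h2
  refine ⟨j, by simpa using hj, ?_⟩
  rw [← cs.wordProd_mul_getD_rightInvSeq ω j, List.getD_eq_getElem _ 1 hj, hjt]

/-- Left exchange for simple reflections. -/
theorem left_exchange' {ω : List B} {i : B} (hω : cs.IsReduced ω)
    (hl : ℓ (s i * π ω) < ℓ (π ω)) : ∃ j < ω.length, π (ω.eraseIdx j) = s i * π ω := by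
  have ht : cs.IsReflection ((π ω)⁻¹ * s i * π ω) := by
    have := (cs.isReflection_simple i).conj (π ω)⁻¹
    rwa [inv_inv] at this
  have hmul : π ω * ((π ω)⁻¹ * s i * π ω) = s i * π ω := by group
  have := strong_exchange cs hω ht (by rw [hmul]; exact hl)
  rwa [hmul] at this


/-! ### The Bruhat order via reflection chains -/

/-- A single downward Bruhat step. -/
def bstep (a b : W) : Prop :=
  (∃ t, cs.IsReflection t ∧ a = b * t) ∧ ℓ a < ℓ b

/-- Bruhat order as reflexive-transitive closure of downward steps. -/
def ble (a b : W) : Prop := Relation.ReflTransGen (bstep cs) a b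

lemma ble_refl (a : W) : ble cs a a := Relation.ReflTransGen.refl

lemma ble_trans {a b c : W} (h1 : ble cs a b) (h2 : ble cs b c) : ble cs a c :=
  Relation.ReflTransGen.trans h1 h2

lemma ble_length_le {a b : W} (h : ble cs a b) : ℓ a ≤ ℓ b := by
  induction h with
  | refl => exact le_refl _
  | tail h1 h2 ih => exact le_trans ih (le_of_lt h2.2)

lemma ble_length_lt {a b : W} (h : ble cs a b) (hne : a ≠ b) : ℓ a < ℓ b := by
  rcases h.cases_tail with rfl | ⟨c, hac, hcb⟩
  · exact absurd rfl hne
  · exact lt_of_le_of_lt (ble_length_le cs hac) hcb.2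

lemma ble_of_step {b t : W} (ht : cs.IsReflection t) (hl : ℓ (b * t) < ℓ b) :
    ble cs (b * t) b :=
  Relation.ReflTransGen.single ⟨⟨t, ht, rfl⟩, hl⟩

lemma ble_up {b t : W} (ht : cs.IsReflection t) (hl : ℓ b < ℓ (b * t)) :
    ble cs b (b * t) := by
  have hb : b = (b * t) * t := by rw [mul_assoc, ht.mul_self, mul_one]
  exact Relation.ReflTransGen.single ⟨⟨t, ht, hb⟩, hl⟩

lemma ble_up_left {b : W} {i : B} (hl : ℓ b < ℓ (s i * b)) : ble cs b (s i * b) := by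
  have ht : cs.IsReflection (b⁻¹ * s i * b) := by
    have := (cs.isReflection_simple i).conj b⁻¹
    rwa [inv_inv] at this
  have : (s i * b) * (b⁻¹ * s i * b) = b := by simp [mul_assoc]
  have h2 := ble_of_step cs (b := s i * b) ht (by rw [this]; exact hl)
  rwa [this] at h2

lemma ble_down_left {b : W} {i : B} (hl : ℓ (s i * b) < ℓ b) : ble cs (s i * b) b := by
  have ht : cs.IsReflection (b⁻¹ * s i * b) := by
    have := (cs.isReflection_simple i).conj b⁻¹
    rwa [inv_inv] at this
  have : b * (b⁻¹ * s i * b) = s i * b := by simp [mul_assoc]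
  have h2 := ble_of_step cs (b := b) ht (by rw [this]; exact hl)
  rwa [this] at h2

lemma ble_inv {a b : W} (h : ble cs a b) : ble cs a⁻¹ b⁻¹ := by
  induction h with
  | refl => exact ble_refl cs _
  | tail h1 h2 ih =>
    rename_i b' c'
    rcases h2 with ⟨⟨t, ht, rfl⟩, hlt⟩
    refine ble_trans cs ih
      (Relation.ReflTransGen.single ⟨⟨c' * t * c'⁻¹, ht.conj c', ?_⟩, ?_⟩)
    · rw [mul_inv_rev, ht.inv]
      group
    · rwa [cs.length_inv, cs.length_inv]

/-- Every word contains a reduced sublist with the same product. -/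
lemma exists_reduced_sublist (ω : List B) :
    ∃ τ, τ.Sublist ω ∧ cs.IsReduced τ ∧ π τ = π ω := by
  induction ω using List.reverseRecOn with
  | nil => exact ⟨[], List.Sublist.refl _, by simp [CoxeterSystem.IsReduced], rfl⟩
  | append_singleton ω i ih =>
    obtain ⟨τ, hsub, hred, hπ⟩ := ih
    rcases cs.length_mul_simple (π ω) i with hup | hdown
    · refine ⟨τ ++ [i], hsub.append_right [i], ?_, ?_⟩
      · show ℓ (π (τ ++ [i])) = (τ ++ [i]).length
        rw [cs.wordProd_append, cs.wordProd_singleton, hπ]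
        have hredeq : ℓ (π τ) = τ.length := hred
        rw [hπ] at hredeq
        simp only [List.length_append, List.length_singleton]
        omega
      · simp [cs.wordProd_append, hπ]
    · have hlt : ℓ (π τ * s i) < ℓ (π τ) := by rw [hπ]; omega
      obtain ⟨j, hj, hje⟩ := strong_exchange cs hred (cs.isReflection_simple i) hlt
      refine ⟨τ.eraseIdx j, ?_, ?_, ?_⟩
      · exact (List.eraseIdx_sublist τ j).trans
          (hsub.trans (List.sublist_append_left ω [i]))
      · show ℓ (π (τ.eraseIdx j)) = (τ.eraseIdx j).length
        rw [hje]
        have hredeq : ℓ (π τ) = τ.length := hred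
        have h1 : ℓ (π τ * s i) = τ.length - 1 := by
          rw [hπ] at hredeq ⊢
          omega
        have h2 : (τ.eraseIdx j).length + 1 = τ.length := List.length_eraseIdx_add_one hj
        have h3 : 1 ≤ τ.length := by omega
        rw [h1]
        omega
      · rw [hje, cs.wordProd_append, cs.wordProd_singleton, hπ]

/-- The subword property: `ble` implies subword of every reduced word. -/
theorem subword_of_ble {y x : W} (h : ble cs y x) :
    ∀ ω : List B, cs.IsReduced ω → π ω = x →
      ∃ τ, τ.Sublist ω ∧ cs.IsReduced τ ∧ π τ = y := by
  induction h using Relation.ReflTransGen.head_induction_on with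
  | refl => exact fun ω hred hπ => ⟨ω, List.Sublist.refl _, hred, hπ⟩
  | head hstep _ ih =>
    rename_i a c _
    intro ω hred hπ
    obtain ⟨τc, hsubc, hredc, hπc⟩ := ih ω hred hπ
    rcases hstep with ⟨⟨t, ht, rfl⟩, hlt⟩
    have hlt2 : ℓ (π τc * t) < ℓ (π τc) := by rw [hπc]; exact hlt
    obtain ⟨j, hj, hje⟩ := strong_exchange cs hredc ht hlt2
    obtain ⟨τ, hsub2, hred2, hπ2⟩ := exists_reduced_sublist cs (τc.eraseIdx j)
    refine ⟨τ, hsub2.trans ((List.eraseIdx_sublist τc j).trans hsubc), hred2, ?_⟩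
    rw [hπ2, hje, hπc]

lemma bruhatLE_of_ble {y x : W} (h : ble cs y x) : cs.bruhatLE y x := by
  obtain ⟨ω, hred, hπ⟩ := cs.exists_reduced_word' x
  obtain ⟨τ, hsub, hred2, hπ2⟩ := subword_of_ble cs h ω hred hπ.symm
  exact ⟨ω, hred, hπ.symm, τ, hsub, hred2, hπ2⟩

/-- Base case of the lifting property. -/
lemma lu_base {z w : W} {i : B} (hz : ℓ (z * s i) < ℓ z)
    (hstep : bstep cs w z) (hw : ℓ w < ℓ (w * s i)) : ble cs (w * s i) z := by
  obtain ⟨ρ, hρred, hρ⟩ := cs.exists_reduced_word' (z * s i)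
  have hωred : cs.IsReduced (ρ ++ [i]) := by
    show ℓ (π (ρ ++ [i])) = (ρ ++ [i]).length
    rw [cs.wordProd_append, cs.wordProd_singleton, ← hρ, cs.simple_mul_simple_cancel_right]
    have h1 : ℓ (z * s i) = ρ.length := by rw [hρ]; exact hρred
    have h2 : ℓ (z * s i) + 1 = ℓ z := by
      rcases cs.length_mul_simple z i with hc | hc <;> omega
    simp only [List.length_append, List.length_singleton]
    omega
  have hωπ : π (ρ ++ [i]) = z := by
    rw [cs.wordProd_append, cs.wordProd_singleton, ← hρ, cs.simple_mul_simple_cancel_right]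
  rcases hstep with ⟨⟨t, ht, rfl⟩, hlt⟩
  have hlt2 : ℓ (π (ρ ++ [i]) * t) < ℓ (π (ρ ++ [i])) := by rw [hωπ]; exact hlt
  obtain ⟨j, hj, hje⟩ := strong_exchange cs hωred ht hlt2
  rw [hωπ] at hje
  by_cases hcase : j < ρ.length
  · -- the erased letter is inside ρ
    rw [List.eraseIdx_append_of_lt_length hcase [i]] at hje
    have hws : z * t * s i = π (ρ.eraseIdx j) := by
      rw [← hje, cs.wordProd_append, cs.wordProd_singleton,
        cs.simple_mul_simple_cancel_right]
    have hmem : (ris ρ).getD j 1 ∈ ris ρ := by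
      have hjr : j < (ris ρ).length := by rwa [cs.length_rightInvSeq]
      rw [List.getD_eq_getElem _ 1 hjr]
      exact List.getElem_mem hjr
    have ht' : cs.IsReflection ((ris ρ).getD j 1) :=
      cs.isReflection_of_mem_rightInvSeq ρ hmem
    have hprod : π ρ * ((ris ρ).getD j 1) = π (ρ.eraseIdx j) :=
      cs.wordProd_mul_getD_rightInvSeq ρ j
    have hlen : ℓ (z * t * s i) < ℓ (z * s i) := by
      have h1 : ℓ (π (ρ.eraseIdx j)) ≤ (ρ.eraseIdx j).length := cs.length_wordProd_le _
      have h2 : (ρ.eraseIdx j).length + 1 = ρ.length := List.length_eraseIdx_add_one hcase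
      have h3 : ℓ (z * s i) = ρ.length := by
        rw [hρ]; exact hρred
      rw [hws]
      omega
    have hstep1 : ble cs (z * t * s i) (z * s i) := by
      have : z * t * s i = (z * s i) * ((ris ρ).getD j 1) := by
        rw [hws, ← hprod, hρ]
      rw [this]
      exact ble_of_step cs ht' (by rw [← this]; exact hlen)
    have hstep2 : ble cs (z * s i) z :=
      ble_of_step cs (cs.isReflection_simple i) hz
    exact ble_trans cs hstep1 hstep2
  · -- the erased letter is the final one: w = z * s i
    have hj2 : ρ.length ≤ j := le_of_not_gt hcase
    rw [List.eraseIdx_append_of_length_le hj2 [i]] at hje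
    have hj3 : j - ρ.length = 0 := by
      simp only [List.length_append, List.length_singleton] at hj
      omega
    rw [hj3] at hje
    simp only [List.eraseIdx_zero, List.tail_cons, List.append_nil] at hje
    have : z * t = z * s i := by rw [← hje, hρ]
    rw [this, mul_assoc, cs.simple_mul_simple_self, mul_one]
    exact ble_refl cs z

/-- The lifting property (right-handed), both forms, by strong induction on length. -/
lemma lu_all : ∀ n : ℕ,
    (∀ x y : W, ∀ i : B, ℓ x ≤ n → ble cs y x → ℓ y < ℓ (y * s i) → ℓ x < ℓ (x * s i) →
      ble cs (y * s i) (x * s i)) ∧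
    (∀ z y : W, ∀ i : B, ℓ z ≤ n → ble cs y z → ℓ y < ℓ (y * s i) → ℓ (z * s i) < ℓ z →
      ble cs (y * s i) z) := by
  intro n
  induction n using Nat.strong_induction_on with
  | _ n ih =>
    constructor
    · intro x y i hn h hy hx
      rcases h.cases_tail with rfl | ⟨z, hyz, hzx⟩
      · exact ble_refl cs _
      · have hlz : ℓ z < ℓ x := hzx.2
        by_cases hcase : ℓ z < ℓ (z * s i)
        · have h1 : ble cs (y * s i) (z * s i) :=
            (ih (ℓ z) (lt_of_lt_of_le hlz hn)).1 z y i (le_refl _) hyz hy hcase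
          rcases hzx.1 with ⟨t, ht, rfl⟩
          have ht' : cs.IsReflection (s i * t * s i) := by
            have := ht.conj (s i)
            rwa [cs.inv_simple] at this
          have heq : x * t * s i = (x * s i) * (s i * t * s i) := by simp [mul_assoc]
          have hlen : ℓ (x * t * s i) < ℓ (x * s i) := by
            have h2 : ℓ (x * t * s i) = ℓ (x * t) + 1 := by
              rcases cs.length_mul_simple (x * t) i with hc | hc <;> omega
            omega
          have h3 : ble cs (x * t * s i) (x * s i) := by
            rw [heq]
            exact ble_of_step cs ht' (by rw [← heq]; exact hlen)
          exact ble_trans cs h1 h3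
        · push_neg at hcase
          have hcase2 : ℓ (z * s i) < ℓ z := by
            rcases cs.length_mul_simple z i with hc | hc <;> omega
          have h1 : ble cs (y * s i) z :=
            (ih (ℓ z) (lt_of_lt_of_le hlz hn)).2 z y i (le_refl _) hyz hy hcase2
          have h2 : ble cs z x := Relation.ReflTransGen.single hzx
          have h3 : ble cs x (x * s i) := ble_up cs (cs.isReflection_simple i) hx
          exact ble_trans cs h1 (ble_trans cs h2 h3)
    · intro z y i hn h hy hz
      rcases h.cases_tail with rfl | ⟨w, hyw, hwz⟩
      · omega
      · have hlw : ℓ w < ℓ z := hwz.2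
        by_cases hcase : ℓ (w * s i) < ℓ w
        · have h1 : ble cs (y * s i) w :=
            (ih (ℓ w) (lt_of_lt_of_le hlw hn)).2 w y i (le_refl _) hyw hy hcase
          exact ble_trans cs h1 (Relation.ReflTransGen.single hwz)
        · push_neg at hcase
          have hcase2 : ℓ w < ℓ (w * s i) := by
            rcases cs.length_mul_simple w i with hc | hc <;> omega
          have h1 : ble cs (y * s i) (w * s i) :=
            (ih (ℓ w) (lt_of_lt_of_le hlw hn)).1 w y i (le_refl _) hyw hy hcase2
          exact ble_trans cs h1 (lu_base cs hz hwz hcase2)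

/-- Left-handed monotonicity: if `z ≤ u` and `s u > u` then `s z ≤ s u`. -/
lemma ble_smul {u z : W} {i : B} (hu : ℓ u < ℓ (s i * u)) (h : ble cs z u) :
    ble cs (s i * z) (s i * u) := by
  by_cases hcase : ℓ (s i * z) < ℓ z
  · have h1 : ble cs (s i * z) z := ble_down_left cs hcase
    have h2 : ble cs u (s i * u) := ble_up_left cs hu
    exact ble_trans cs h1 (ble_trans cs h h2)
  · push_neg at hcase
    have hcase2 : ℓ z < ℓ (s i * z) := by
      rcases cs.length_simple_mul z i with hc | hc <;> omega
    have hinv := ble_inv cs h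
    have hy : ℓ z⁻¹ < ℓ (z⁻¹ * s i) := by
      have : ℓ (z⁻¹ * s i) = ℓ (s i * z) := by
        rw [← cs.length_inv (z⁻¹ * s i), mul_inv_rev, cs.inv_simple, inv_inv]
      rw [cs.length_inv] at *
      omega
    have hx : ℓ u⁻¹ < ℓ (u⁻¹ * s i) := by
      have : ℓ (u⁻¹ * s i) = ℓ (s i * u) := by
        rw [← cs.length_inv (u⁻¹ * s i), mul_inv_rev, cs.inv_simple, inv_inv]
      rw [cs.length_inv] at *
      omega
    have := (lu_all cs (ℓ u⁻¹)).1 u⁻¹ z⁻¹ i (le_refl _) hinv hy hx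
    have h2 := ble_inv cs this
    rwa [mul_inv_rev, mul_inv_rev, cs.inv_simple, inv_inv, inv_inv] at h2


/-! ### Laurent polynomial helpers -/

lemma memVZv_zero : MemVZv 0 := ⟨0, by simp⟩

lemma memVZv_add {p q : LaurentPolynomial ℤ} (hp : MemVZv p) (hq : MemVZv q) :
    MemVZv (p + q) := by
  obtain ⟨a, ha⟩ := hp
  obtain ⟨b, hb⟩ := hq
  exact ⟨a + b, by rw [ha, hb, map_add]; ring⟩

lemma memVZv_neg {p : LaurentPolynomial ℤ} (hp : MemVZv p) : MemVZv (-p) := by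
  obtain ⟨a, ha⟩ := hp
  exact ⟨-a, by rw [ha, map_neg]; ring⟩

lemma memVZv_sub {p q : LaurentPolynomial ℤ} (hp : MemVZv p) (hq : MemVZv q) :
    MemVZv (p - q) := by
  rw [sub_eq_add_neg]
  exact memVZv_add hp (memVZv_neg hq)

lemma memVZv_C_mul (m : ℤ) {p : LaurentPolynomial ℤ} (hp : MemVZv p) :
    MemVZv (LaurentPolynomial.C m * p) := by
  obtain ⟨a, ha⟩ := hp
  exact ⟨Polynomial.C m * a, by rw [ha, map_mul, Polynomial.toLaurent_C]; ring⟩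

lemma memVZv_sum {α : Type*} (S : Finset α) (f : α → LaurentPolynomial ℤ)
    (hf : ∀ z ∈ S, MemVZv (f z)) : MemVZv (∑ z ∈ S, f z) :=
  Finset.sum_induction f MemVZv (fun _ _ ha hb => memVZv_add ha hb) memVZv_zero hf

lemma memVZv_sub_constant {q : Polynomial ℤ} :
    MemVZv (q.toLaurent - LaurentPolynomial.C (q.coeff 0)) := by
  refine ⟨q.divX, ?_⟩
  have := Polynomial.X_mul_divX_add (p := q)
  have h2 := congrArg Polynomial.toLaurent this
  rw [map_add, map_mul, Polynomial.toLaurent_X, Polynomial.toLaurent_C] at h2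
  rw [← h2]
  ring

/-! ### The Hecke algebra construction -/

section Hecke

variable {H : Type*} [Ring H] [Algebra (LaurentPolynomial ℤ) H]
variable (h : Module.Basis W (LaurentPolynomial ℤ) H)

/-- Coefficientwise formula for multiplication by `h (s i)` on the left. -/
lemma repr_simple_mul
    (h_mul_gt : ∀ (i : B) (x : W), ℓ (s i * x) > ℓ x →
      h (s i) * h x = h (s i * x))
    (h_mul_lt : ∀ (i : B) (x : W), ℓ (s i * x) < ℓ x →
      h (s i) * h x = h (s i * x) + ((T (-1) - T 1 : LaurentPolynomial ℤ)) • h x)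
    (i : B) (a : H) (z : W) :
    h.repr (h (s i) * a) z = h.repr a (s i * z)
      + (if ℓ (s i * z) < ℓ z then (T (-1) - T 1 : LaurentPolynomial ℤ) * h.repr a z
         else 0) := by
  set R := LaurentPolynomial ℤ with hR
  have hL : (Finsupp.lapply z) ∘ₗ h.repr.toLinearMap ∘ₗ (LinearMap.mulLeft R (h (s i)))
      = ((Finsupp.lapply (s i * z)) ∘ₗ h.repr.toLinearMap)
        + (if ℓ (s i * z) < ℓ z then (T (-1) - T 1 : R) else 0) •
          ((Finsupp.lapply z) ∘ₗ h.repr.toLinearMap) := by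
    apply h.ext
    intro y
    simp only [LinearMap.comp_apply, LinearMap.add_apply, LinearMap.smul_apply,
      LinearMap.mulLeft_apply, LinearEquiv.coe_coe, Finsupp.lapply_apply]
    have hiff : (s i * y = z) ↔ (y = s i * z) := by
      constructor
      · intro hh; rw [← hh, cs.simple_mul_simple_cancel_left]
      · intro hh; rw [hh, cs.simple_mul_simple_cancel_left]
    rcases cs.length_simple_mul y i with hgt | hlt
    · rw [h_mul_gt i y (by omega), h.repr_self, h.repr_self]
      simp only [Finsupp.single_apply]
      by_cases hyz : y = z
      · subst hyz
        have hcond : ¬ ℓ (s i * y) < ℓ y := by omega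
        have hne1 : s i * y ≠ y := fun he => by rw [he] at hgt; omega
        have hne2 : y ≠ s i * y := fun he => hne1 he.symm
        rw [if_neg hcond, if_neg hne1, if_neg hne2]
        simp
      · rw [if_neg hyz, smul_zero, add_zero]
        exact if_congr hiff rfl rfl
    · rw [h_mul_lt i y (by omega), map_add, map_smul, h.repr_self, h.repr_self]
      simp only [Finsupp.add_apply, Finsupp.smul_apply, Finsupp.single_apply]
      by_cases hyz : y = z
      · subst hyz
        have hcond : ℓ (s i * y) < ℓ y := by omega
        rw [if_pos hcond, if_pos rfl]
        congr 1
        exact if_congr hiff rfl rfl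
      · rw [if_neg hyz, smul_zero, add_zero, smul_zero, add_zero]
        exact if_congr hiff rfl rfl
  have h2 := congrArg (fun L : H →ₗ[R] R => L a) hL
  simp only [LinearMap.comp_apply, LinearMap.add_apply, LinearMap.smul_apply,
    LinearMap.mulLeft_apply, LinearEquiv.coe_coe, Finsupp.lapply_apply, smul_eq_mul,
    ite_mul, zero_mul] at h2
  exact h2


lemma hs_unit_eq (h_one : h 1 = 1)
    (h_mul_lt : ∀ (i : B) (x : W), ℓ (s i * x) < ℓ x →
      h (s i) * h x = h (s i * x) + ((T (-1) - T 1 : LaurentPolynomial ℤ)) • h x)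
    (i : B) :
    (h (s i)) * (h (s i) - ((T (-1) - T 1 : LaurentPolynomial ℤ)) • 1) = 1 ∧
    (h (s i) - ((T (-1) - T 1 : LaurentPolynomial ℤ)) • 1) * (h (s i)) = 1 := by
  have hss : h (s i) * h (s i) = 1 + ((T (-1) - T 1 : LaurentPolynomial ℤ)) • h (s i) := by
    have hl : ℓ (s i * s i) < ℓ (s i) := by
      rw [cs.simple_mul_simple_self, cs.length_one, cs.length_simple]; omega
    rw [h_mul_lt i (s i) hl, cs.simple_mul_simple_self, h_one]
  constructor
  · rw [mul_sub, mul_smul_comm, mul_one, hss]; abel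
  · rw [sub_mul, smul_mul_assoc, one_mul, hss]; abel

lemma d_hs (h_one : h 1 = 1)
    (h_mul_lt : ∀ (i : B) (x : W), ℓ (s i * x) < ℓ x →
      h (s i) * h x = h (s i * x) + ((T (-1) - T 1 : LaurentPolynomial ℤ)) • h x)
    (d : H →+* H)
    (hd_h : ∀ x : W, d (h x) = Ring.inverse (h (x⁻¹))) (i : B) :
    d (h (s i)) = h (s i) - ((T (-1) - T 1 : LaurentPolynomial ℤ)) • 1 := by
  obtain ⟨e1, e2⟩ := hs_unit_eq cs h h_one h_mul_lt i
  rw [hd_h, cs.inv_simple]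
  exact Ring.inverse_unit ⟨h (s i), h (s i) - ((T (-1) - T 1 : LaurentPolynomial ℤ)) • 1, e1, e2⟩

lemma d_bs (h_one : h 1 = 1)
    (h_mul_lt : ∀ (i : B) (x : W), ℓ (s i * x) < ℓ x →
      h (s i) * h x = h (s i * x) + ((T (-1) - T 1 : LaurentPolynomial ℤ)) • h x)
    (d : H →+* H)
    (hd_smul : ∀ (p : LaurentPolynomial ℤ) (a : H), d (p • a) = (invert p) • d a)
    (hd_h : ∀ x : W, d (h x) = Ring.inverse (h (x⁻¹))) (i : B) :
    d (h (s i) + (T 1 : LaurentPolynomial ℤ) • 1) = h (s i) + (T 1 : LaurentPolynomial ℤ) • 1 := by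
  rw [map_add, d_hs cs h h_one h_mul_lt d hd_h, hd_smul, map_one d, invert_T, sub_smul]
  abel

lemma kl_aux
    (h_one : h 1 = 1)
    (h_mul_gt : ∀ (i : B) (x : W), ℓ (s i * x) > ℓ x → h (s i) * h x = h (s i * x))
    (h_mul_lt : ∀ (i : B) (x : W), ℓ (s i * x) < ℓ x →
      h (s i) * h x = h (s i * x) + ((T (-1) - T 1 : LaurentPolynomial ℤ)) • h x)
    (d : H →+* H)
    (hd_smul : ∀ (p : LaurentPolynomial ℤ) (a : H), d (p • a) = (invert p) • d a)
    (hd_h : ∀ x : W, d (h x) = Ring.inverse (h (x⁻¹))) :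
    ∀ n : ℕ, ∀ x : W, ℓ x = n → ∃ b : H, d b = b ∧ h.repr b x = 1 ∧
      ∀ y : W, y ≠ x → (MemVZv (h.repr b y) ∧ (h.repr b y ≠ 0 → ble cs y x)) := by
  intro n
  induction n using Nat.strong_induction_on with
  | _ n ihn =>
  intro x hx
  by_cases hx1 : x = 1
  · subst hx1
    refine ⟨1, map_one d, ?_, ?_⟩
    · rw [← h_one, h.repr_self, Finsupp.single_apply, if_pos rfl]
    · intro y hy
      rw [← h_one, h.repr_self, Finsupp.single_apply, if_neg (fun he => hy he.symm)]
      exact ⟨memVZv_zero, fun hne => absurd rfl hne⟩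
  · obtain ⟨i, hi⟩ := cs.exists_leftDescent_of_ne_one hx1
    have hi' : ℓ (s i * x) < ℓ x := hi
    set u := s i * x with hu
    have hsu : s i * u = x := by rw [hu, cs.simple_mul_simple_cancel_left]
    have hlu : ℓ u < ℓ x := hi'
    have hlsu : ℓ u < ℓ (s i * u) := by rw [hsu]; exact hlu
    obtain ⟨bu, hbu_d, hbu_u, hbu_y⟩ := ihn (ℓ u) (by omega) u rfl
    have hxu : x ≠ u := fun he => by rw [he] at hlu; omega
    have hp_x : h.repr bu x = 0 := by
      by_contra hne
      have hble := (hbu_y x hxu).2 hne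
      have := ble_length_le cs hble
      omega
    set c : H := h (s i) * bu + (T 1 : LaurentPolynomial ℤ) • bu with hc
    have hcor : ∀ z, h.repr c z = h.repr bu (s i * z)
        + (T 1 : LaurentPolynomial ℤ) * h.repr bu z
        + (if ℓ (s i * z) < ℓ z then (T (-1) - T 1 : LaurentPolynomial ℤ) * h.repr bu z
           else 0) := by
      intro z
      rw [hc, map_add, map_smul, Finsupp.add_apply, Finsupp.smul_apply, smul_eq_mul,
        repr_simple_mul cs h h_mul_gt h_mul_lt i bu z]
      ring
    have hcd : d c = c := by
      have hfact : c = (h (s i) + (T 1 : LaurentPolynomial ℤ) • 1) * bu := by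
        rw [add_mul, smul_mul_assoc, one_mul, hc]
      rw [hfact, map_mul, d_bs cs h h_one h_mul_lt d hd_smul hd_h, hbu_d]
    have hsupp : ∀ z, h.repr c z ≠ 0 → ble cs z x := by
      intro z hz
      have hsplit : h.repr bu (s i * z) ≠ 0 ∨ h.repr bu z ≠ 0 := by
        by_contra hcon
        push_neg at hcon
        rw [hcor z, hcon.1, hcon.2] at hz
        simp at hz
      have hble_u : ∀ w, h.repr bu w ≠ 0 → ble cs w u := by
        intro w hw
        by_cases hwu : w = u
        · subst hwu; exact ble_refl cs _
        · exact (hbu_y w hwu).2 hw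
      have hux : ble cs u x := by
        have := ble_up_left cs (i := i) (b := u) hlsu
        rwa [hsu] at this
      rcases hsplit with hnz | hnz
      · by_cases hzx : z = x
        · subst hzx; exact ble_refl cs _
        · have h1 : ble cs (s i * z) u := hble_u _ hnz
          have h2 := ble_smul cs hlsu h1
          rwa [cs.simple_mul_simple_cancel_left, hsu] at h2
      · exact ble_trans cs (hble_u z hnz) hux
    have hcx : h.repr c x = 1 := by
      rw [hcor x, ← hu, hbu_u, hp_x]
      simp
    have hmemz : ∀ z, z ≠ x → ∃ m : ℤ, MemVZv (h.repr c z - LaurentPolynomial.C m) := by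
      intro z hzx
      have hszu : s i * z ≠ u := by
        intro he
        apply hzx
        rw [← hsu, ← he, cs.simple_mul_simple_cancel_left]
      have hmem_sz : MemVZv (h.repr bu (s i * z)) := (hbu_y _ hszu).1
      by_cases hcond : ℓ (s i * z) < ℓ z
      · have hzu : z ≠ u := by
          intro he
          rw [he, hsu] at hcond
          omega
        obtain ⟨q1, e1⟩ := hmem_sz
        obtain ⟨q2, e2⟩ := (hbu_y z hzu).1
        refine ⟨q2.coeff 0, ?_⟩
        have e0 := hcor z
        rw [if_pos hcond, e1, e2] at e0
        rw [e0]
        have hT : (T (-1) : LaurentPolynomial ℤ) * T 1 = 1 := by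
          rw [← T_add]; norm_num
        have harith : q1.toLaurent * T 1 + (T 1 : LaurentPolynomial ℤ) * (q2.toLaurent * T 1)
            + (T (-1) - T 1) * (q2.toLaurent * T 1) - LaurentPolynomial.C (q2.coeff 0)
            = q1.toLaurent * T 1 + (q2.toLaurent - LaurentPolynomial.C (q2.coeff 0)) := by
          linear_combination q2.toLaurent * hT
        rw [harith]
        exact memVZv_add ⟨q1, rfl⟩ memVZv_sub_constant
      · refine ⟨0, ?_⟩
        rw [map_zero, sub_zero, hcor z, if_neg hcond, add_zero]
        by_cases hzu : z = u
        · subst hzu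
          rw [hsu, hp_x, hbu_u, zero_add, mul_one]
          exact ⟨1, by rw [Polynomial.toLaurent_one, one_mul]⟩
        · obtain ⟨q1, e1⟩ := hmem_sz
          obtain ⟨q2, e2⟩ := (hbu_y z hzu).1
          rw [e1, e2]
          refine ⟨q1 + Polynomial.X * q2, ?_⟩
          rw [map_add, map_mul, Polynomial.toLaurent_X]
          ring
    have hμ' : ∀ z : W, ∃ m : ℤ, (z ≠ x → MemVZv (h.repr c z - LaurentPolynomial.C m)) := by
      intro z
      by_cases hzx : z = x
      · exact ⟨0, fun hcon => absurd hzx hcon⟩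
      · obtain ⟨m, hm⟩ := hmemz z hzx
        exact ⟨m, fun _ => hm⟩
    choose μ hμ using hμ'
    set S : Finset W := (h.repr c).support.erase x with hS
    have hbz' : ∀ z : W, ∃ bz : H, z ∈ S → (d bz = bz ∧ h.repr bz z = 1 ∧
        ∀ y : W, y ≠ z → (MemVZv (h.repr bz y) ∧ (h.repr bz y ≠ 0 → ble cs y z))) := by
      intro z
      by_cases hz : z ∈ S
      · have hzx : z ≠ x := (Finset.mem_erase.mp hz).1
        have hzs : h.repr c z ≠ 0 := Finsupp.mem_support_iff.mp (Finset.mem_of_mem_erase hz)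
        have hlz : ℓ z < n := by
          have := ble_length_lt cs (hsupp z hzs) hzx
          omega
        obtain ⟨w, h1, h2, h3⟩ := ihn (ℓ z) hlz z rfl
        exact ⟨w, fun _ => ⟨h1, h2, h3⟩⟩
      · exact ⟨0, fun hmem => absurd hmem hz⟩
    choose bz hbz using hbz'
    have heval : ∀ y, h.repr (c - ∑ z ∈ S, (LaurentPolynomial.C (μ z)) • bz z) y
        = h.repr c y - ∑ z ∈ S, LaurentPolynomial.C (μ z) * h.repr (bz z) y := by
      intro y
      rw [map_sub, Finsupp.sub_apply, map_sum, Finsupp.finset_sum_apply]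
      congr 1
      refine Finset.sum_congr rfl (fun z hz => ?_)
      rw [map_smul, Finsupp.smul_apply, smul_eq_mul]
    refine ⟨c - ∑ z ∈ S, (LaurentPolynomial.C (μ z)) • bz z, ?_, ?_, ?_⟩
    · rw [map_sub, hcd, map_sum d]
      congr 1
      refine Finset.sum_congr rfl (fun z hz => ?_)
      rw [hd_smul, invert_C, (hbz z hz).1]
    · rw [heval, hcx]
      have hzero : ∀ z ∈ S, LaurentPolynomial.C (μ z) * h.repr (bz z) x = 0 := by
        intro z hz
        have hzx : z ≠ x := (Finset.mem_erase.mp hz).1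
        have hxz : x ≠ z := fun he => hzx he.symm
        have h0 : h.repr (bz z) x = 0 := by
          by_contra hne
          have hble := ((hbz z hz).2.2 x hxz).2 hne
          have h1 := ble_length_le cs hble
          have hzs : h.repr c z ≠ 0 := Finsupp.mem_support_iff.mp (Finset.mem_of_mem_erase hz)
          have h2 := ble_length_lt cs (hsupp z hzs) hzx
          omega
        rw [h0, mul_zero]
      rw [Finset.sum_eq_zero hzero, sub_zero]
    · intro y hyx
      constructor
      · by_cases hyS : y ∈ S
        · have hsum : ∑ z ∈ S, LaurentPolynomial.C (μ z) * h.repr (bz z) y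
              = (∑ z ∈ S.erase y, LaurentPolynomial.C (μ z) * h.repr (bz z) y)
                + LaurentPolynomial.C (μ y) := by
            rw [← Finset.sum_erase_add S _ hyS, (hbz y hyS).2.1, mul_one]
          rw [heval y, hsum]
          have hre : h.repr c y - ((∑ z ∈ S.erase y,
                LaurentPolynomial.C (μ z) * h.repr (bz z) y) + LaurentPolynomial.C (μ y))
              = (h.repr c y - LaurentPolynomial.C (μ y))
                - ∑ z ∈ S.erase y, LaurentPolynomial.C (μ z) * h.repr (bz z) y := by
            ring
          rw [hre]
          refine memVZv_sub (hμ y hyx) (memVZv_sum _ _ fun z hz => ?_)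
          have hzS : z ∈ S := Finset.mem_of_mem_erase hz
          have hzy : z ≠ y := Finset.ne_of_mem_erase hz
          exact memVZv_C_mul _ (((hbz z hzS).2.2 y (fun he => hzy he.symm)).1)
        · have hc0 : h.repr c y = 0 := by
            by_contra hne
            exact hyS (Finset.mem_erase.mpr ⟨hyx, Finsupp.mem_support_iff.mpr hne⟩)
          rw [heval y, hc0, zero_sub]
          refine memVZv_neg (memVZv_sum _ _ fun z hz => ?_)
          have hzy : z ≠ y := fun he => hyS (he ▸ hz)
          exact memVZv_C_mul _ (((hbz z hz).2.2 y (fun he => hzy he.symm)).1)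
      · intro hbne
        rw [heval y] at hbne
        by_cases hcy : h.repr c y = 0
        · rw [hcy, zero_sub, neg_ne_zero] at hbne
          obtain ⟨z, hzS, hznz⟩ : ∃ z ∈ S, LaurentPolynomial.C (μ z) * h.repr (bz z) y ≠ 0 := by
            by_contra hcon
            push_neg at hcon
            exact hbne (Finset.sum_eq_zero hcon)
          have hrnz : h.repr (bz z) y ≠ 0 := fun h0 => hznz (by rw [h0, mul_zero])
          have hzx_ble : ble cs z x :=
            hsupp z (Finsupp.mem_support_iff.mp (Finset.mem_of_mem_erase hzS))
          by_cases hyz : y = z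
          · subst hyz; exact hzx_ble
          · exact ble_trans cs (((hbz z hzS).2.2 y hyz).2 hrnz) hzx_ble
        · exact hsupp y hcy

end Hecke

end KLProof

/-- For every `x ∈ W` there exists a self-dual element `bₓ ∈ H` with
`bₓ ∈ hₓ + ∑_{y<x} v ℤ[v] h_y`, where `<` is the Bruhat order. -/
theorem hecke_KL_basis_exists {B W : Type*} [Group W] {M : CoxeterMatrix B} (cs : CoxeterSystem M W)
    {H : Type*} [Ring H] [Algebra (LaurentPolynomial ℤ) H]
    -- `h` is the standard basis of the Hecke algebra `H` of `(W, S)` over `ℤ[v, v⁻¹]`,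
    -- where `v` is the Laurent variable `T 1`
    (h : Module.Basis W (LaurentPolynomial ℤ) H) (h_one : h 1 = 1)
    -- the multiplication rules characterizing the Hecke algebra:
    -- `hₛ hₓ = h_{sx}` if `sx > x`, and `hₛ hₓ = h_{sx} + (v⁻¹ - v) hₓ` if `sx < x`
    (h_mul_gt : ∀ (i : B) (x : W), cs.length (cs.simple i * x) > cs.length x →
      h (cs.simple i) * h x = h (cs.simple i * x))
    (h_mul_lt : ∀ (i : B) (x : W), cs.length (cs.simple i * x) < cs.length x →
      h (cs.simple i) * h x = h (cs.simple i * x) + ((T (-1) - T 1 : LaurentPolynomial ℤ)) • h x)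
    -- `d` is the Kazhdan–Lusztig duality: the ring endomorphism of `H` with
    -- `d(v·a) = v⁻¹·d(a)` and `d(hₓ) = (h_{x⁻¹})⁻¹`
    (d : H →+* H)
    (hd_smul : ∀ (p : LaurentPolynomial ℤ) (a : H), d (p • a) = (invert p) • d a)
    (hd_h : ∀ x : W, d (h x) = Ring.inverse (h (x⁻¹))) :
    ∀ x : W, ∃ b : H, d b = b ∧ h.repr b x = 1 ∧
      ∀ y : W, y ≠ x →
        MemVZv (h.repr b y) ∧ ((h.repr b) y ≠ 0 → cs.bruhatLT y x) := by
  intro x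
  obtain ⟨b, hb1, hb2, hb3⟩ :=
    KLProof.kl_aux cs h h_one h_mul_gt h_mul_lt d hd_smul hd_h (cs.length x) x rfl
  exact ⟨b, hb1, hb2, fun y hy => ⟨(hb3 y hy).1,
    fun hne => ⟨KLProof.bruhatLE_of_ble cs ((hb3 y hy).2 hne), hy⟩⟩⟩
end

section
/- If h ∈ H satisfies h ∈ Σ_{y∈W} vℤ[v]·h_y and d(h) = h, then h = 0. Consequently, the element b_x with b_x ∈ h_x + Σ_y vℤ[v]h_y and d(b_x) = b_x is unique for each x ∈ W. -/
open LaurentPolynomial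

/-- A nonzero Laurent polynomial in `v·ℤ[v]` is not fixed by `invert`. -/
lemma memVZv_invert_eq_self {p : LaurentPolynomial ℤ} (hp : MemVZv p)
    (h : invert p = p) : p = 0 := by
  obtain ⟨q, rfl⟩ := hp
  by_contra hne
  have hq : q ≠ 0 := by
    intro hq0
    subst hq0
    simp at hne
  -- invert (toLaurent q) = toLaurent q.reverse * T (-q.natDegree)
  have hrev : invert (Polynomial.toLaurent q) = Polynomial.toLaurent q.reverse
      * T (-(q.natDegree : ℤ)) := by
    rw [toLaurent_reverse, mul_T_assoc]
    simp
  have h2 : invert (Polynomial.toLaurent q * T 1)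
      = Polynomial.toLaurent q.reverse * T (-(q.natDegree : ℤ) + -1) := by
    rw [map_mul, invert_T, hrev, mul_T_assoc]
  rw [h2] at h
  -- multiply both sides by T (natDegree + 1)
  have h3 : Polynomial.toLaurent q.reverse
      = Polynomial.toLaurent q * T ((q.natDegree : ℤ) + 2) := by
    have h' := congrArg (· * T ((q.natDegree : ℤ) + 1)) h
    simp only [mul_T_assoc] at h'
    rw [show (-(q.natDegree : ℤ) + -1 + ((q.natDegree : ℤ) + 1)) = 0 by ring, T_zero,
      mul_one] at h'
    rw [show ((1 : ℤ) + ((q.natDegree : ℤ) + 1)) = (q.natDegree : ℤ) + 2 by ring] at h'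
    exact h'
  have h4 : Polynomial.toLaurent q.reverse
      = Polynomial.toLaurent (q * Polynomial.X ^ (q.natDegree + 2)) := by
    rw [map_mul, Polynomial.toLaurent_X_pow, h3]
    norm_num
  have h5 : q.reverse = q * Polynomial.X ^ (q.natDegree + 2) :=
    Polynomial.toLaurent_injective h4
  have hdeg : (q * Polynomial.X ^ (q.natDegree + 2)).natDegree
      = q.natDegree + (q.natDegree + 2) := by
    rw [Polynomial.natDegree_mul hq (pow_ne_zero _ Polynomial.X_ne_zero), Polynomial.natDegree_X_pow]
  have := q.reverse_natDegree_le
  rw [h5, hdeg] at this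
  omega

/-- If `a ∈ H` satisfies `a ∈ ∑_y v ℤ[v] h_y` and `d(a) = a`, then
`a = 0`. Consequently, the element `bₓ` with `bₓ ∈ hₓ + ∑_y v ℤ[v] h_y` and `d(bₓ) = bₓ`
is unique for each `x ∈ W`. (Following the context, we assume the existence of self-dual
elements `b_y ∈ h_y + ∑_{z<y} v ℤ[v] h_z` for all `y`.) -/
theorem hecke_KL_selfdual_unique {B W : Type*} [Group W] {M : CoxeterMatrix B} (cs : CoxeterSystem M W)
    {H : Type*} [Ring H] [Algebra (LaurentPolynomial ℤ) H]
    -- `h` is the standard basis of the Hecke algebra `H` of `(W, S)` over `ℤ[v, v⁻¹]`,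
    -- where `v` is the Laurent variable `T 1`
    (h : Module.Basis W (LaurentPolynomial ℤ) H) (h_one : h 1 = 1)
    -- the multiplication rules characterizing the Hecke algebra:
    -- `hₛ hₓ = h_{sx}` if `sx > x`, and `hₛ hₓ = h_{sx} + (v⁻¹ - v) hₓ` if `sx < x`
    (h_mul_gt : ∀ (i : B) (x : W), cs.length (cs.simple i * x) > cs.length x →
      h (cs.simple i) * h x = h (cs.simple i * x))
    (h_mul_lt : ∀ (i : B) (x : W), cs.length (cs.simple i * x) < cs.length x →
      h (cs.simple i) * h x = h (cs.simple i * x) + ((T (-1) - T 1 : LaurentPolynomial ℤ)) • h x)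
    -- `d` is the Kazhdan–Lusztig duality: the ring endomorphism of `H` with
    -- `d(v·a) = v⁻¹·d(a)` and `d(hₓ) = (h_{x⁻¹})⁻¹`
    (d : H →+* H)
    (hd_smul : ∀ (p : LaurentPolynomial ℤ) (a : H), d (p • a) = (invert p) • d a)
    (hd_h : ∀ x : W, d (h x) = Ring.inverse (h (x⁻¹)))
    (hb_ex : ∀ x : W, ∃ b : H, d b = b ∧ h.repr b x = 1 ∧
      ∀ y : W, y ≠ x →
        MemVZv (h.repr b y) ∧ ((h.repr b) y ≠ 0 → cs.bruhatLT y x)) :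
    (∀ a : H, (∀ y : W, MemVZv (h.repr a y)) → d a = a → a = 0) ∧
    (∀ (x : W) (b b' : H),
      (d b = b ∧ h.repr b x = 1 ∧ ∀ y : W, y ≠ x → MemVZv (h.repr b y)) →
      (d b' = b' ∧ h.repr b' x = 1 ∧ ∀ y : W, y ≠ x → MemVZv (h.repr b' y)) →
      b = b') := by
  classical
  -- the image of a simple reflection under `d`
  have hsimple_inv : ∀ i : B, d (h (cs.simple i)) =
      h (cs.simple i) + ((T 1 - T (-1) : LaurentPolynomial ℤ)) • (1 : H) := by
    intro i
    have hlen : cs.length (cs.simple i * cs.simple i) < cs.length (cs.simple i) := by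
      rw [cs.simple_mul_simple_self, cs.length_one, cs.length_simple]; norm_num
    have hsq := h_mul_lt i (cs.simple i) hlen
    rw [cs.simple_mul_simple_self, h_one] at hsq
    have hc : ((T (-1) - T 1 : LaurentPolynomial ℤ)) + (T 1 - T (-1)) = 0 := by ring
    have hmul : h (cs.simple i) * (h (cs.simple i) +
        ((T 1 - T (-1) : LaurentPolynomial ℤ)) • (1 : H)) = 1 := by
      rw [mul_add, hsq, mul_smul_comm, mul_one, add_assoc, ← add_smul, hc, zero_smul, add_zero]
    have hmul' : (h (cs.simple i) + ((T 1 - T (-1) : LaurentPolynomial ℤ)) • (1 : H)) *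
        h (cs.simple i) = 1 := by
      rw [add_mul, hsq, smul_mul_assoc, one_mul, add_assoc, ← add_smul, hc, zero_smul, add_zero]
    have : d (h (cs.simple i)) = Ring.inverse (h (cs.simple i)) := by
      rw [hd_h, cs.inv_simple]
    rw [this]
    exact Ring.inverse_unit ⟨h (cs.simple i), _, hmul, hmul'⟩
  -- multiplying by a simple reflection raises the length filtration by at most one
  have hmul_span : ∀ (i : B) (m : ℕ) (r : H),
      r ∈ Submodule.span (LaurentPolynomial ℤ) (h '' {z | cs.length z < m}) →
      h (cs.simple i) * r ∈
        Submodule.span (LaurentPolynomial ℤ) (h '' {z | cs.length z < m + 1}) := by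
    intro i m r hr
    induction hr using Submodule.span_induction with
    | mem u hu =>
      obtain ⟨z, hz, rfl⟩ := hu
      rcases cs.length_simple_mul z i with hgt | hlt
      · rw [h_mul_gt i z (by omega)]
        exact Submodule.subset_span ⟨cs.simple i * z, by simp only [Set.mem_setOf_eq] at hz ⊢; omega, rfl⟩
      · rw [h_mul_lt i z (by omega)]
        refine Submodule.add_mem _ (Submodule.subset_span
          ⟨cs.simple i * z, by simp only [Set.mem_setOf_eq] at hz ⊢; omega, rfl⟩) ?_
        exact Submodule.smul_mem _ _ (Submodule.subset_span
          ⟨z, by simp only [Set.mem_setOf_eq] at hz ⊢; omega, rfl⟩)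
    | zero => rw [mul_zero]; exact Submodule.zero_mem _
    | add u w _ _ hu hw => rw [mul_add]; exact Submodule.add_mem _ hu hw
    | smul c u _ hu => rw [mul_smul_comm]; exact Submodule.smul_mem _ _ hu
  -- triangularity of `d` with respect to the length filtration
  have tri : ∀ x : W, d (h x) - h x ∈
      Submodule.span (LaurentPolynomial ℤ) (h '' {z | cs.length z < cs.length x}) := by
    have key : ∀ n : ℕ, ∀ x : W, cs.length x ≤ n → d (h x) - h x ∈
        Submodule.span (LaurentPolynomial ℤ) (h '' {z | cs.length z < cs.length x}) := by
      intro n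
      induction n with
      | zero =>
        intro x hx
        have hx1 : x = 1 := cs.length_eq_zero_iff.mp (Nat.le_zero.mp hx)
        subst hx1
        rw [hd_h, inv_one, h_one, Ring.inverse_one, sub_self]
        exact Submodule.zero_mem _
      | succ n ih =>
        intro x hx
        rcases Nat.lt_or_ge (cs.length x) (n + 1) with hlt | hge
        · exact ih x (Nat.lt_succ_iff.mp hlt)
        have hxn : cs.length x = n + 1 := le_antisymm hx hge
        have hx1 : x ≠ 1 := by
          intro e; rw [e, cs.length_one] at hxn; omega
        obtain ⟨i, hi⟩ := cs.exists_leftDescent_of_ne_one hx1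
        have hi' : cs.length (cs.simple i * x) < cs.length x := hi
        set x' := cs.simple i * x with hx'def
        have hxx' : cs.simple i * x' = x := by
          rw [hx'def, ← mul_assoc, cs.simple_mul_simple_self, one_mul]
        have hlen' : cs.length x' = n := by
          have hlm := cs.length_simple_mul x i
          rw [← hx'def] at hlm
          omega
        have hgt2 : cs.length (cs.simple i * x') > cs.length x' := by
          rw [hxx', hxn, hlen']; omega
        have hmulx : h (cs.simple i) * h x' = h x := by
          rw [h_mul_gt i x' hgt2, hxx']
        have hdx' := ih x' (by omega)
        rw [hlen'] at hdx'
        have expand : d (h x) - h x =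
            h (cs.simple i) * (d (h x') - h x') +
            (((T 1 - T (-1) : LaurentPolynomial ℤ)) • h x' +
             ((T 1 - T (-1) : LaurentPolynomial ℤ)) • (d (h x') - h x')) := by
          have h1 : d (h x) = d (h (cs.simple i)) * d (h x') := by
            rw [← map_mul, hmulx]
          rw [h1, hsimple_inv i, ← hmulx]
          rw [add_mul, smul_mul_assoc, one_mul, mul_sub, smul_sub]
          abel
        rw [expand, hxn]
        refine Submodule.add_mem _ ?_ (Submodule.add_mem _ ?_ ?_)
        · exact hmul_span i n _ hdx'
        · exact Submodule.smul_mem _ _ (Submodule.subset_span ⟨x', by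
            simp only [Set.mem_setOf_eq]; omega, rfl⟩)
        · refine Submodule.smul_mem _ _ (Submodule.span_mono ?_ hdx')
          exact Set.image_mono fun z hz => by
            simp only [Set.mem_setOf_eq] at hz ⊢; omega
    exact fun x => key (cs.length x) x le_rfl
  have part1 : ∀ a : H, (∀ y : W, MemVZv (h.repr a y)) → d a = a → a = 0 := by
    intro a hva hda
    by_contra ha
    have hsupp : (h.repr a).support.Nonempty := by
      rw [Finsupp.support_nonempty_iff]
      intro h0
      exact ha (by simpa using congrArg h.repr.symm h0)
    obtain ⟨y, hy, hymax⟩ := (h.repr a).support.exists_max_image cs.length hsupp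
    have ha_sum : ∑ z ∈ (h.repr a).support, h.repr a z • h z = a := by
      conv_rhs => rw [← h.linearCombination_repr a]
      rw [Finsupp.linearCombination_apply, Finsupp.sum]
    have hda_sum : d a = ∑ z ∈ (h.repr a).support, invert (h.repr a z) • d (h z) := by
      conv_lhs => rw [← ha_sum]
      rw [map_sum]
      exact Finset.sum_congr rfl fun z _ => hd_smul _ _
    have hrepr : h.repr (d a) y = invert (h.repr a y) := by
      rw [hda_sum, map_sum]
      have hterm : ∀ z ∈ (h.repr a).support,
          (h.repr (invert (h.repr a z) • d (h z))) y =
            if z = y then invert (h.repr a z) else 0 := by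
        intro z hz
        have h0 : (h.repr (d (h z) - h z)) y = 0 := by
          by_contra h0
          have hmem : y ∈ (h.repr (d (h z) - h z)).support := Finsupp.mem_support_iff.mpr h0
          have hsub := h.repr_support_subset_of_mem_span _ (tri z) hmem
          simp only [Set.mem_setOf_eq] at hsub
          exact absurd hsub (not_lt.mpr (hymax z hz))
        have h2 : (h.repr (d (h z))) y = (h.repr (h z)) y := by
          rwa [map_sub, Finsupp.sub_apply, sub_eq_zero] at h0
        rw [map_smul, Finsupp.smul_apply, h2, h.repr_self, smul_eq_mul,
          Finsupp.single_apply, mul_ite, mul_one, mul_zero]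
      calc (∑ z ∈ (h.repr a).support, h.repr (invert (h.repr a z) • d (h z))) y
          = ∑ z ∈ (h.repr a).support, (h.repr (invert (h.repr a z) • d (h z))) y := by
            rw [Finsupp.finset_sum_apply]
        _ = ∑ z ∈ (h.repr a).support, if z = y then invert (h.repr a z) else 0 :=
            Finset.sum_congr rfl hterm
        _ = invert (h.repr a y) := by rw [Finset.sum_ite_eq' _ y _, if_pos hy]
    have heq : invert (h.repr a y) = h.repr a y := by rw [← hrepr, hda]
    have : h.repr a y = 0 := memVZv_invert_eq_self (hva y) heq
    exact (Finsupp.mem_support_iff.mp hy) this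
  refine ⟨part1, ?_⟩
  rintro x b b' ⟨hdb, hbx, hby⟩ ⟨hdb', hbx', hby'⟩
  have hzero : b - b' = 0 := by
    refine part1 (b - b') ?_ (by rw [map_sub, hdb, hdb'])
    intro y
    rw [map_sub, Finsupp.sub_apply]
    by_cases hyx : y = x
    · subst hyx
      rw [hbx, hbx', sub_self]
      exact ⟨0, by simp⟩
    · obtain ⟨q, hq⟩ := hby y hyx
      obtain ⟨q', hq'⟩ := hby' y hyx
      exact ⟨q - q', by rw [hq, hq', map_sub, sub_mul]⟩
  exact sub_eq_zero.mp hzero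
end

section
/- Dyer's formula: in the Hecke algebra of the universal Coxeter group U_n, for x with (unique) reduced expression x = r s ⋯: (1) b_r b_x = (v + v⁻¹) b_x; (2) b_t b_x = b_{tx} if t ∉ {r,s}; (3) b_s b_x = b_{sx} + b_{rx} if s ≠ r. -/
open LaurentPolynomial

namespace DyerUniv

open scoped Classical

abbrev R := LaurentPolynomial ℤ

instance : CoeFun R (fun _ => ℤ → ℤ) := ⟨fun p => p.coeff⟩

def VP (p : R) : Prop := ∀ k : ℤ, k ≤ 0 → p k = 0

def VP0 (p : R) : Prop := ∀ k : ℤ, k < 0 → p k = 0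

lemma R_add_apply (p q : R) (k : ℤ) : (p + q) k = p k + q k := Finsupp.add_apply p.coeff q.coeff k

lemma R_sub_apply (p q : R) (k : ℤ) : (p - q) k = p k - q k := Finsupp.sub_apply p.coeff q.coeff k

lemma R_neg_apply (p : R) (k : ℤ) : (-p) k = -(p k) := Finsupp.neg_apply p.coeff k

lemma T_mul_apply (n : ℤ) (p : R) (k : ℤ) : ((T n * p : R)) k = p (k - n) := by
  rw [T_mul]
  have h2 := AddMonoidAlgebra.coeff_mul_single_apply p (1 : ℤ) n k
  rw [mul_one, ← sub_eq_add_neg] at h2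
  exact h2

lemma T1_mul_apply (p : R) (k : ℤ) : ((T 1 * p : R)) k = p (k - 1) := T_mul_apply 1 p k

lemma Tm1_mul_apply (p : R) (k : ℤ) : ((T (-1) * p : R)) k = p (k + 1) := by
  rw [T_mul_apply, sub_neg_eq_add]

lemma R_one_apply (k : ℤ) : (1 : R) k = if k = 0 then 1 else 0 := by
  rw [← T_zero, T_apply]
  simp [eq_comm]

lemma toLaurent_apply_neg (q : Polynomial ℤ) (k : ℤ) (hk : k < 0) : (q.toLaurent) k = 0 := by
  have hsupp := support_coeff_toLaurent q
  by_contra hne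
  have : k ∈ (q.toLaurent).coeff.support := Finsupp.mem_support_iff.mpr hne
  rw [hsupp] at this
  obtain ⟨n, -, hn⟩ := Finset.mem_map.mp this
  simp only [Nat.castEmbedding_apply] at hn
  omega

lemma VP_of_mem {p : R} (hp : MemVZv p) : VP p := by
  obtain ⟨q, rfl⟩ := hp
  intro k hk
  have h2 := AddMonoidAlgebra.coeff_mul_single_apply q.toLaurent (1 : ℤ) (1 : ℤ) k
  rw [mul_one] at h2
  exact h2.trans (toLaurent_apply_neg q _ (by omega))

lemma VP.vp0 {p : R} (hp : VP p) : VP0 p := fun k hk => hp k (le_of_lt hk)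

lemma VP_invert_self_eq_zero {p : R} (hp : VP p) (hself : invert p = p) : p = 0 := by
  apply LaurentPolynomial.ext
  intro k
  rcases le_or_gt k 0 with hk | hk
  · rw [hp k hk]; rfl
  · have : p (-k) = p k := by rw [← invert_apply, hself]
    rw [← this, hp (-k) (by omega)]; rfl

open CoxeterSystem

variable {B W : Type*} [Group W] {M : CoxeterMatrix B} (cs : CoxeterSystem M W)
variable {H : Type*} [Ring H] [Algebra R H]

local prefix:100 "π" => cs.wordProd
local prefix:100 "ℓ" => cs.length
local prefix:100 "S" => cs.simple

section NF

/-- Words with no two adjacent equal letters. -/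
abbrev NW (B : Type*) := {l : List B // l.IsChain (· ≠ ·)}

open scoped Classical in
/-- The action of a generator on normal-form words. -/
noncomputable def sigf (t : B) (l : NW B) : NW B :=
  if h : l.val.head? = some t then ⟨l.val.tail, l.prop.tail⟩
  else ⟨t :: l.val, List.isChain_cons.mpr ⟨fun y hy e => h (e ▸ hy), l.prop⟩⟩

lemma sigf_invol (t : B) : Function.Involutive (sigf (B := B) t) := by
  intro l
  by_cases hh : l.val.head? = some t
  · obtain ⟨a, u, hv⟩ : ∃ a u, l.val = a :: u := by
      cases e : l.val with
      | nil => rw [e] at hh; simp at hh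
      | cons a u => exact ⟨a, u, rfl⟩
    have ha : a = t := by rw [hv] at hh; simpa using hh
    have e1 : sigf t l = ⟨l.val.tail, l.prop.tail⟩ := by unfold sigf; rw [dif_pos hh]
    have htail : (l.val.tail).head? ≠ some t := by
      rcases e2 : u.head? with _ | c
      · simp [hv, e2]
      · have : a ≠ c := by
          have := l.prop
          rw [hv] at this
          rcases u with _ | ⟨c', u'⟩
          · simp at e2
          · simp only [List.head?_cons, Option.some.injEq] at e2; subst e2
            exact (List.isChain_cons_cons.mp this).1
        subst ha
        simp [hv, e2]
        exact fun h => this h.symm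
    have e2 : sigf t ⟨l.val.tail, l.prop.tail⟩ =
        ⟨t :: l.val.tail, List.isChain_cons.mpr ⟨fun y hy e => htail (e ▸ hy), l.prop.tail⟩⟩ := by
      unfold sigf; rw [dif_neg htail]
    rw [e1, e2]
    apply Subtype.ext
    simp [hv, ha]
  · have e1 : sigf t l =
        ⟨t :: l.val, List.isChain_cons.mpr ⟨fun y hy e => hh (e ▸ hy), l.prop⟩⟩ := by
      unfold sigf; rw [dif_neg hh]
    have e2 : sigf t ⟨t :: l.val, List.isChain_cons.mpr ⟨fun y hy e => hh (e ▸ hy), l.prop⟩⟩ =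
        ⟨l.val, l.prop⟩ := by
      unfold sigf; rw [dif_pos (by simp)]
      exact Subtype.ext (by simp)
    rw [e1, e2]

lemma sigf_pi (t : B) (l : NW B) : π (sigf t l).val = S t * π l.val := by
  unfold sigf
  split
  · rename_i hh
    obtain ⟨a, u, hv⟩ : ∃ a u, l.val = a :: u := by
      cases e : l.val with
      | nil => rw [e] at hh; simp at hh
      | cons a u => exact ⟨a, u, rfl⟩
    have ha : a = t := by rw [hv] at hh; simpa using hh
    subst ha
    simp [hv, wordProd_cons, ← mul_assoc]
  · simp [wordProd_cons]

lemma sigf_len (t : B) (l : NW B) : (sigf t l).val.length ≤ l.val.length + 1 := by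
  unfold sigf
  split
  · simp [List.length_tail]; omega
  · simp

variable (hu : ∀ i j : B, i ≠ j → M i j = 0)

include hu

/-- The regular action of the universal Coxeter group on normal-form words. -/
noncomputable def phi : W →* Equiv.Perm (NW B) :=
  cs.lift ⟨fun t => (sigf_invol t).toPerm, show M.IsLiftable _ by
    intro i i'
    by_cases hii : i = i'
    · subst hii
      rw [M.diagonal i, pow_one]
      ext l
      simp [Function.Involutive.coe_toPerm, sigf_invol i l]
    · rw [hu i i' hii, pow_zero]⟩

lemma phi_simple (t : B) (l : NW B) : phi cs hu (S t) l = sigf t l := by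
  rw [phi, lift_apply_simple]
  simp [Function.Involutive.coe_toPerm]

lemma phi_pi_val (ω : List B) (l : NW B) :
    π ((phi cs hu (π ω)) l).val = π ω * π l.val ∧
      ((phi cs hu (π ω)) l).val.length ≤ ω.length + l.val.length := by
  induction ω generalizing l with
  | nil => simp [wordProd_nil, map_one]
  | cons t ρ ih =>
    rw [wordProd_cons, map_mul]
    have key : (phi cs hu (S t) * phi cs hu (π ρ)) l = sigf t ((phi cs hu (π ρ)) l) := by
      rw [Equiv.Perm.mul_apply, phi_simple]
    rw [key]
    constructor
    · rw [sigf_pi, (ih l).1, mul_assoc]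
    · calc (sigf t ((phi cs hu (π ρ)) l)).val.length
          ≤ ((phi cs hu (π ρ)) l).val.length + 1 := sigf_len _ _
        _ ≤ (ρ.length + l.val.length) + 1 := by have := (ih l).2; omega
        _ = (t :: ρ).length + l.val.length := by simp; omega

/-- The normal form of an element of the universal Coxeter group. -/
noncomputable def nf (w : W) : List B := ((phi cs hu) w ⟨[], List.isChain_nil⟩).val

lemma chain'_nf (w : W) : (nf cs hu w).IsChain (· ≠ ·) := ((phi cs hu) w ⟨[], List.isChain_nil⟩).prop

lemma pi_nf (w : W) : π (nf cs hu w) = w := by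
  obtain ⟨ω, _, rfl⟩ := cs.exists_reduced_word' w
  simpa [nf, wordProd_nil] using (phi_pi_val cs hu ω ⟨[], List.isChain_nil⟩).1

lemma len_nf (w : W) : (nf cs hu w).length = ℓ w := by
  refine le_antisymm ?_ ?_
  · obtain ⟨ω, hred, rfl⟩ := cs.exists_reduced_word' w
    have h2 := (phi_pi_val cs hu ω ⟨[], List.isChain_nil⟩).2
    have h3 : (nf cs hu (π ω)).length ≤ ω.length := by simpa [nf] using h2
    have hl : ℓ (π ω) = ω.length := hred
    omega
  · have := cs.length_wordProd_le (nf cs hu w)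
    rwa [pi_nf] at this

lemma nf_wordProd (ω : List B) (hch : ω.IsChain (· ≠ ·)) : nf cs hu (π ω) = ω := by
  induction ω with
  | nil => simp [nf, wordProd_nil, map_one]
  | cons t ρ ih =>
    have hch' : ρ.IsChain (· ≠ ·) := hch.tail
    have hh : (nf cs hu (π ρ)).head? ≠ some t := by
      rw [ih hch']
      rcases ρ with _ | ⟨c, ρ'⟩
      · simp
      · have : t ≠ c := (List.isChain_cons_cons.mp hch).1
        simp; exact fun e => this e.symm
    rw [nf, wordProd_cons, map_mul, Equiv.Perm.mul_apply, phi_simple]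
    have : ((phi cs hu (π ρ)) ⟨[], List.isChain_nil⟩) = ⟨nf cs hu (π ρ), chain'_nf cs hu _⟩ := by
      apply Subtype.ext; rfl
    rw [this]
    unfold sigf
    rw [dif_neg hh]
    simp [ih hch']

lemma length_pi_chain' (ω : List B) (hch : ω.IsChain (· ≠ ·)) : ℓ (π ω) = ω.length := by
  conv_rhs => rw [← nf_wordProd cs hu ω hch]
  exact (len_nf cs hu _).symm

lemma isReduced_of_chain' (ω : List B) (hch : ω.IsChain (· ≠ ·)) : cs.IsReduced ω :=
  length_pi_chain' cs hu ω hch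

lemma nf_simple_mul (t : B) (w : W) :
    nf cs hu (S t * w) = (sigf t ⟨nf cs hu w, chain'_nf cs hu w⟩).val := by
  rw [nf, map_mul, Equiv.Perm.mul_apply, phi_simple]
  rfl

lemma nf_simple_mul_of_head_ne (t : B) (w : W) (hh : (nf cs hu w).head? ≠ some t) :
    nf cs hu (S t * w) = t :: nf cs hu w := by
  rw [nf_simple_mul]; unfold sigf; rw [dif_neg hh]

lemma length_simple_mul_of_head_ne (t : B) (w : W) (hh : (nf cs hu w).head? ≠ some t) :
    ℓ (S t * w) = ℓ w + 1 := by
  rw [← len_nf cs hu, nf_simple_mul_of_head_ne cs hu t w hh]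
  simp [len_nf]

lemma descent_iff (t : B) (w : W) : ℓ (S t * w) < ℓ w ↔ (nf cs hu w).head? = some t := by
  constructor
  · intro hlt
    by_contra hh
    rw [length_simple_mul_of_head_ne cs hu t w hh] at hlt
    omega
  · intro hh
    obtain ⟨a, u, hv⟩ : ∃ a u, nf cs hu w = a :: u := by
      cases e : nf cs hu w with
      | nil => rw [e] at hh; simp at hh
      | cons a u => exact ⟨a, u, rfl⟩
    have ha : a = t := by rw [hv] at hh; simpa using hh
    have hw : w = S t * π u := by
      conv_lhs => rw [← pi_nf cs hu w]
      rw [hv, ha, wordProd_cons]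
    have h1 : ℓ w = u.length + 1 := by
      rw [← len_nf cs hu, hv]; simp
    have h2 : S t * w = π u := by rw [hw, simple_mul_simple_cancel_left]
    have : ℓ (S t * w) ≤ u.length := by rw [h2]; exact cs.length_wordProd_le u
    omega

lemma chain'_of_isReduced (ω : List B) (hred : cs.IsReduced ω) : ω.IsChain (· ≠ ·) := by
  induction ω with
  | nil => exact List.isChain_nil
  | cons a tail ih =>
    rcases tail with _ | ⟨c, rest⟩
    · simp
    · have htail : cs.IsReduced (c :: rest) := by
        have := CoxeterSystem.IsReduced.drop hred 1
        simpa using this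
      refine List.isChain_cons_cons.mpr ⟨?_, ih htail⟩
      intro hac
      subst hac
      have : π (a :: a :: rest) = π rest := by
        rw [wordProd_cons, wordProd_cons, simple_mul_simple_cancel_left]
      have h1 : ℓ (π (a :: a :: rest)) = rest.length + 2 := hred
      have h2 : ℓ (π rest) ≤ rest.length := cs.length_wordProd_le rest
      rw [this] at h1
      omega


end NF

/-- All the data and axioms of the KL setting, bundled. -/
structure Ctx (cs : CoxeterSystem M W) (H : Type*) [Ring H] [Algebra R H] where
  h : Module.Basis W R H
  b : W → H
  d : H →+* H
  h_one : h 1 = 1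
  h_mul_gt : ∀ (i : B) (x : W), cs.length (cs.simple i * x) > cs.length x →
      h (cs.simple i) * h x = h (cs.simple i * x)
  h_mul_lt : ∀ (i : B) (x : W), cs.length (cs.simple i * x) < cs.length x →
      h (cs.simple i) * h x = h (cs.simple i * x) + ((T (-1) - T 1 : R)) • h x
  hd_smul : ∀ (p : R) (a : H), d (p • a) = (invert p) • d a
  hd_h : ∀ x : W, d (h x) = Ring.inverse (h (x⁻¹))
  hb_self : ∀ x : W, d (b x) = b x
  hb_diag : ∀ x : W, h.repr (b x) x = 1
  hb_tri : ∀ x y : W, y ≠ x →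
      MemVZv (h.repr (b x) y) ∧ ((h.repr (b x)) y ≠ 0 → cs.bruhatLT y x)

variable {cs} (C : Ctx cs H)

lemma repr_smul_apply (p : R) (c : H) (z : W) : C.h.repr (p • c) z = p * C.h.repr c z := by
  rw [map_smul, Finsupp.smul_apply, smul_eq_mul]

lemma repr_simple_mul (t : B) (c : H) (z : W) :
    C.h.repr (C.h (S t) * c) z = C.h.repr c (S t * z) +
      (if ℓ (S t * z) < ℓ z then (T (-1) - T 1) * C.h.repr c z else 0) := by
  classical
  have key : (Finsupp.lapply z ∘ₗ (C.h.repr : H →ₗ[R] (W →₀ R)) ∘ₗ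
        LinearMap.mulLeft R (C.h (S t))) =
      ((Finsupp.lapply (S t * z) ∘ₗ (C.h.repr : H →ₗ[R] (W →₀ R))) +
        (if ℓ (S t * z) < ℓ z then ((T (-1) - T 1 : R)) else 0) •
          (Finsupp.lapply z ∘ₗ (C.h.repr : H →ₗ[R] (W →₀ R)))) := by
    apply C.h.ext
    intro w
    simp only [LinearMap.comp_apply, LinearMap.mulLeft_apply, LinearMap.add_apply,
      LinearMap.smul_apply, Finsupp.lapply_apply, LinearEquiv.coe_coe, Module.Basis.repr_self,
      smul_eq_mul]
    rcases Nat.lt_or_gt_of_ne (cs.length_simple_mul_ne w t) with hlt | hgt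
    · rw [C.h_mul_lt t w hlt, map_add, map_smul, Finsupp.add_apply, Module.Basis.repr_self,
        Finsupp.smul_apply, Module.Basis.repr_self, smul_eq_mul]
      by_cases hw : w = z
      · subst hw
        have hc : ℓ (S t * w) < ℓ w := hlt
        rw [if_pos hc]
        have h1 : ¬ (S t * w = w) := fun e => by
          have := cs.length_simple_mul_ne w t; rw [e] at this; exact this rfl
        have h2 : ¬ (w = S t * w) := fun e => h1 e.symm
        rw [Finsupp.single_apply, Finsupp.single_apply, Finsupp.single_apply]
        rw [if_pos rfl, if_neg h2, if_neg h1]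
        try ring
      · rw [Finsupp.single_apply, Finsupp.single_apply, Finsupp.single_apply]
        have e1 : (S t * w = z) ↔ (w = S t * z) := by
          constructor
          · intro e; rw [← e, simple_mul_simple_cancel_left]
          · intro e; rw [e, simple_mul_simple_cancel_left]
        have h2 : ¬ (w = z) := hw
        by_cases e2 : S t * w = z
        · rw [if_pos e2, if_pos (e1.mp e2), if_neg h2]
          split <;> ring
        · rw [if_neg e2, if_neg (fun e => e2 (e1.mpr e)), if_neg h2]
          split <;> ring
    · rw [C.h_mul_gt t w hgt, Module.Basis.repr_self]
      rw [Finsupp.single_apply, Finsupp.single_apply, Finsupp.single_apply]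
      have e1 : (S t * w = z) ↔ (w = S t * z) := by
        constructor
        · intro e; rw [← e, simple_mul_simple_cancel_left]
        · intro e; rw [e, simple_mul_simple_cancel_left]
      by_cases hw : w = z
      · subst hw
        have hc : ¬ ℓ (S t * w) < ℓ w := by omega
        rw [if_neg hc]
        have h1 : ¬ (S t * w = w) := fun e => by
          have := cs.length_simple_mul_ne w t; rw [e] at this; exact this rfl
        have h2 : ¬ (w = S t * w) := fun e => h1 e.symm
        rw [if_neg h1, if_neg h2]
        simp
      · by_cases e2 : S t * w = z
        · rw [if_pos e2, if_pos (e1.mp e2)]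
          split <;> [skip; skip] <;> simp [Finsupp.single_apply, hw]
        · rw [if_neg e2, if_neg (fun e => e2 (e1.mpr e))]
          split <;> simp [Finsupp.single_apply, hw]
  have := LinearMap.congr_fun key c
  simp only [LinearMap.comp_apply, LinearMap.mulLeft_apply, LinearMap.add_apply,
    LinearMap.smul_apply, Finsupp.lapply_apply, LinearEquiv.coe_coe, smul_eq_mul] at this
  rw [this]
  split <;> ring

lemma exists_cons (hu : ∀ i j : B, i ≠ j → M i j = 0) (w : W) (hw : w ≠ 1) :
    ∃ a u, nf cs hu w = a :: u := by
  cases e : nf cs hu w with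
  | nil =>
    exfalso
    apply hw
    have := pi_nf cs hu w
    rw [e, wordProd_nil] at this
    exact this.symm
  | cons a u => exact ⟨a, u, rfl⟩

lemma bruhat_length {y x : W} (hlt : cs.bruhatLT y x) : ℓ y < ℓ x := by
  obtain ⟨⟨ω, hr, hx, ω', hsub, hr', hy⟩, hne⟩ := hlt
  have l1 : ℓ x = ω.length := by rw [← hx]; exact hr
  have l2 : ℓ y = ω'.length := by rw [← hy]; exact hr'
  have hle := hsub.length_le
  rcases lt_or_eq_of_le hle with hlt2 | heq
  · omega
  · exfalso
    apply hne
    rw [← hx, ← hy, hsub.eq_of_length heq]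

lemma cc_vp {x y : W} (hne : y ≠ x) : VP (C.h.repr (C.b x) y) :=
  VP_of_mem (C.hb_tri x y hne).1

lemma cc_vp0 (x y : W) : VP0 (C.h.repr (C.b x) y) := by
  by_cases hx : y = x
  · subst hx
    rw [C.hb_diag]
    intro k hk
    rw [R_one_apply, if_neg (by omega)]
  · exact (cc_vp C hx).vp0

lemma cc_zero_of_length {x y : W} (hge : ℓ x ≤ ℓ y) (hne : y ≠ x) :
    C.h.repr (C.b x) y = 0 := by
  by_contra hne0
  have := bruhat_length ((C.hb_tri x y hne).2 hne0)
  omega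

lemma d_h_simple (t : B) : C.d (C.h (S t)) = C.h (S t) + ((T 1 - T (-1) : R)) • (1 : H) := by
  have hsq : S t * S t = 1 := cs.simple_mul_simple_self t
  have hlt : ℓ (S t * S t) < ℓ (S t) := by
    rw [hsq, cs.length_one, cs.length_simple]
    omega
  have key : ((T (-1) - T 1 : R) + (T 1 - T (-1))) = 0 := by ring
  have hmul : C.h (S t) * (C.h (S t) + ((T 1 - T (-1) : R)) • 1) = 1 := by
    rw [mul_add, C.h_mul_lt t (S t) hlt, hsq, C.h_one, mul_smul_comm, mul_one,
      add_assoc, ← add_smul, key, zero_smul, add_zero]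
  have hmul2 : (C.h (S t) + ((T 1 - T (-1) : R)) • 1) * C.h (S t) = 1 := by
    rw [add_mul, C.h_mul_lt t (S t) hlt, hsq, C.h_one, smul_mul_assoc, one_mul,
      add_assoc, ← add_smul, key, zero_smul, add_zero]
  have hu2 : Ring.inverse (C.h (S t)) = C.h (S t) + ((T 1 - T (-1) : R)) • 1 := by
    have := Ring.inverse_unit (⟨C.h (S t), C.h (S t) + ((T 1 - T (-1) : R)) • 1,
      hmul, hmul2⟩ : Hˣ)
    exact this
  rw [C.hd_h, cs.inv_simple, hu2]

lemma d_tri (hu : ∀ i j : B, i ≠ j → M i j = 0) (n : ℕ) :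
    ∀ (y : W), ℓ y ≤ n → ∀ z, ℓ y ≤ ℓ z →
      C.h.repr (C.d (C.h y)) z = if z = y then 1 else 0 := by
  classical
  induction n with
  | zero =>
    intro y hy z hz
    have h1 : y = 1 := cs.length_eq_zero_iff.mp (by omega)
    subst h1
    rw [C.h_one, map_one, ← C.h_one, Module.Basis.repr_self, Finsupp.single_apply]
    by_cases hz1 : z = 1
    · subst hz1; simp
    · rw [if_neg (fun e => hz1 e.symm), if_neg hz1]
  | succ n ih =>
    intro y hy z hz
    by_cases h0 : ℓ y ≤ n
    · exact ih y h0 z hz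
    have hlen : ℓ y = n + 1 := by omega
    have hne1 : y ≠ 1 := by
      intro e; rw [e, cs.length_one] at hlen; omega
    obtain ⟨a, u, hnf⟩ := exists_cons (cs := cs) hu y hne1
    have hch : (a :: u).IsChain (· ≠ ·) := hnf ▸ chain'_nf cs hu y
    have hy' : y = S a * π u := by
      conv_lhs => rw [← pi_nf cs hu y, hnf, wordProd_cons]
    have hlu : ℓ (π u) = u.length := length_pi_chain' cs hu u hch.tail
    have hlenu : u.length + 1 = ℓ y := by
      rw [← len_nf cs hu y, hnf]; simp
    have hgt : ℓ (S a * π u) > ℓ (π u) := by rw [← hy']; omega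
    have hmul : C.h y = C.h (S a) * C.h (π u) := by
      rw [C.h_mul_gt a (π u) hgt, ← hy']
    rw [hmul, map_mul, d_h_simple, add_mul, smul_mul_assoc, one_mul, map_add,
      Finsupp.add_apply, repr_smul_apply, repr_simple_mul]
    have hz0 : C.h.repr (C.d (C.h (π u))) z = 0 := by
      rw [ih (π u) (by omega) z (by omega), if_neg]
      intro e
      rw [e] at hz
      omega
    have haz : ℓ (π u) ≤ ℓ (S a * z) := by
      rcases cs.length_simple_mul z a with h1 | h1 <;> omega
    rw [ih (π u) (by omega) (S a * z) haz]
    simp only [hz0, mul_zero, ite_self, add_zero]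
    have e1 : (S a * z = π u) ↔ (z = y) := by
      constructor
      · intro e
        rw [hy', ← e, simple_mul_simple_cancel_left]
      · intro e
        rw [e, hy', simple_mul_simple_cancel_left]
    rw [if_congr e1 rfl rfl]

lemma selfdual_vp_eq_zero (hu : ∀ i j : B, i ≠ j → M i j = 0) (c : H)
    (hd : C.d c = c) (hvp : ∀ z, VP (C.h.repr c z)) : c = 0 := by
  classical
  by_contra hne
  have hrepr : C.h.repr c ≠ 0 := fun e => hne (by
    have := congrArg C.h.repr.symm e
    simpa using this)
  have hsupp : (C.h.repr c).support.Nonempty := Finsupp.support_nonempty_iff.mpr hrepr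
  obtain ⟨y, hy_mem, hy_max⟩ := Finset.exists_max_image (C.h.repr c).support (fun z => ℓ z) hsupp
  have hc : ((C.h.repr c).sum fun z r => r • C.h z) = c := by
    rw [← Finsupp.linearCombination_apply, C.h.linearCombination_repr]
  have hdc : C.d c = ∑ z ∈ (C.h.repr c).support, (invert (C.h.repr c z)) • C.d (C.h z) := by
    conv_lhs => rw [← hc]
    rw [Finsupp.sum, map_sum]
    apply Finset.sum_congr rfl
    intro z _
    rw [C.hd_smul]
  have hry : C.h.repr (C.d c) y = invert (C.h.repr c y) := by
    rw [hdc, map_sum, Finsupp.finset_sum_apply]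
    have : ∀ z ∈ (C.h.repr c).support,
        C.h.repr ((invert (C.h.repr c z)) • C.d (C.h z)) y
          = if y = z then invert (C.h.repr c z) else 0 := by
      intro z hz
      rw [repr_smul_apply, d_tri C hu (ℓ y) z (hy_max z hz) y (hy_max z hz)]
      rw [mul_ite, mul_one, mul_zero]
    rw [Finset.sum_congr rfl this, Finset.sum_ite_eq, if_pos hy_mem]
  rw [hd] at hry
  have hp0 : C.h.repr c y = 0 :=
    VP_invert_self_eq_zero (hvp y) hry.symm
  exact (Finsupp.mem_support_iff.mp hy_mem) hp0

lemma b_one : C.b 1 = C.h 1 := by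
  apply C.h.repr.injective
  apply Finsupp.ext
  intro z
  rw [Module.Basis.repr_self]
  by_cases hz : z = 1
  · subst hz
    rw [C.hb_diag, Finsupp.single_apply, if_pos rfl]
  · rw [Finsupp.single_apply, if_neg (fun e => hz e.symm)]
    by_contra hne0
    have := bruhat_length ((C.hb_tri 1 z hz).2 hne0)
    rw [cs.length_one] at this
    omega

lemma simple_ne_one (t : B) : S t ≠ (1 : W) := by
  intro e
  have := cs.length_simple t
  rw [e, cs.length_one] at this
  omega

lemma b_simple (hu : ∀ i j : B, i ≠ j → M i j = 0) (t : B) :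
    C.b (S t) = C.h (S t) + (T 1 : R) • C.h 1 := by
  have hd : C.d (C.b (S t) - C.h (S t) - (T 1 : R) • C.h 1)
      = C.b (S t) - C.h (S t) - (T 1 : R) • C.h 1 := by
    rw [map_sub, map_sub, C.hb_self, d_h_simple, C.hd_smul, C.h_one, map_one, invert_T]
    have e : ((T 1 - T (-1) : R) + T (-1)) = T 1 := by ring
    have this2 : (C.h (S t) + (T 1 - T (-1) : R) • 1) + (T (-1) : R) • (1 : H)
        = C.h (S t) + (T 1 : R) • (1 : H) := by
      rw [add_assoc, ← add_smul, e]
    rw [sub_sub, this2, ← sub_sub]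
  have hvp : ∀ z, VP (C.h.repr (C.b (S t) - C.h (S t) - (T 1 : R) • C.h 1) z) := by
    intro z
    rw [map_sub, map_sub, Finsupp.sub_apply, Finsupp.sub_apply, repr_smul_apply,
      Module.Basis.repr_self, Module.Basis.repr_self]
    intro k hk
    rw [R_sub_apply, R_sub_apply]
    by_cases hz : z = S t
    · subst hz
      rw [C.hb_diag, Finsupp.single_apply, if_pos rfl, Finsupp.single_apply,
        if_neg (fun e => simple_ne_one (cs := cs) t e.symm)]
      rw [mul_zero]
      simp
    · rw [Finsupp.single_apply, if_neg (fun e => hz e.symm)]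
      rw [cc_vp C hz k hk]
      by_cases h1 : z = 1
      · subst h1
        rw [Finsupp.single_apply, if_pos rfl, mul_one, T_apply, if_neg (by omega)]
        simp
      · rw [Finsupp.single_apply, if_neg (fun e => h1 e.symm), mul_zero]
        simp
  have := selfdual_vp_eq_zero C hu _ hd hvp
  have h2 : C.b (S t) - (C.h (S t) + (T 1 : R) • C.h 1) = 0 := by
    rw [sub_add_eq_sub_sub]; exact this
  exact sub_eq_zero.mp h2

lemma repr_b_simple_mul (hu : ∀ i j : B, i ≠ j → M i j = 0) (t : B) (c : H) (z : W) :
    C.h.repr (C.b (S t) * c) z = C.h.repr c (S t * z)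
      + (if ℓ (S t * z) < ℓ z then (T (-1) - T 1) * C.h.repr c z else 0)
      + T 1 * C.h.repr c z := by
  rw [b_simple C hu t, add_mul, smul_mul_assoc, C.h_one, one_mul, map_add, Finsupp.add_apply,
    repr_smul_apply, repr_simple_mul]

lemma base1 (hu : ∀ i j : B, i ≠ j → M i j = 0) (t : B) :
    C.b (S t) * C.b (S t) = ((T 1 + T (-1) : R)) • C.b (S t) := by
  have hsq : S t * S t = 1 := cs.simple_mul_simple_self t
  have hlt : ℓ (S t * S t) < ℓ (S t) := by
    rw [hsq, cs.length_one, cs.length_simple]; omega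
  rw [b_simple C hu t, C.h_one]
  rw [mul_add, add_mul, add_mul]
  rw [C.h_mul_lt t (S t) hlt, hsq, C.h_one]
  rw [mul_smul_comm, mul_one, smul_mul_assoc, one_mul, smul_mul_assoc, one_mul, smul_smul]
  rw [smul_add]
  rw [smul_smul]
  have hTT : (T 1 * T (-1) : R) = 1 := by rw [← T_add]; norm_num
  match_scalars
  · rw [add_mul, show (T (-1) * T 1 : R) = 1 from by rw [← T_add]; norm_num]
    ring
  · ring

lemma mu_nil (hu : ∀ i j : B, i ≠ j → M i j = 0) (a : B) :
    ∀ t y, t ≠ a → ℓ (S t * y) < ℓ y →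
      (C.h.repr (C.b (π [a])) y) 1 = if y = π ([] : List B) then 1 else 0 := by
  intro t y hta hdesc
  have hxa : π [a] = S a := by rw [wordProd_cons, wordProd_nil, mul_one]
  have hhead : (nf cs hu y).head? = some t := (descent_iff cs hu t y).mp hdesc
  have hy1 : y ≠ π ([] : List B) := by
    rw [wordProd_nil]
    intro e
    rw [e, mul_one, cs.length_simple, cs.length_one] at hdesc
    omega
  have hy1' : y ≠ 1 := by rw [wordProd_nil] at hy1; exact hy1
  have hySa : y ≠ S a := by
    intro e
    have : nf cs hu y = [a] := by
      rw [e, ← (by rw [wordProd_cons, wordProd_nil, mul_one] : π [a] = S a)]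
      exact nf_wordProd cs hu [a] (by simp)
    rw [this] at hhead
    simp at hhead
    exact hta hhead.symm
  rw [if_neg hy1, hxa, b_simple C hu a, map_add, Finsupp.add_apply, repr_smul_apply,
    Module.Basis.repr_self, Module.Basis.repr_self, Finsupp.single_apply, Finsupp.single_apply,
    if_neg (fun e => hySa e.symm), if_neg (fun e => hy1' e.symm), mul_zero, add_zero]
  rfl

lemma step_mul (hu : ∀ i j : B, i ≠ j → M i j = 0) (a : B) (u : List B)
    (hch : (a :: u).IsChain (· ≠ ·)) (t : B) (hta : t ≠ a)
    (hmu : ∀ t' y, t' ≠ a → ℓ (S t' * y) < ℓ y →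
      (C.h.repr (C.b (π (a :: u))) y) 1 = if y = π u then 1 else 0) :
    C.b (S t) * C.b (π (a :: u)) =
      C.b (S t * π (a :: u)) + (if u.head? = some t then C.b (π u) else 0) := by
  have hchu : u.IsChain (· ≠ ·) := hch.tail
  have hnfx : nf cs hu (π (a :: u)) = a :: u := nf_wordProd cs hu _ hch
  have hnfu : nf cs hu (π u) = u := nf_wordProd cs hu _ hchu
  have hlx : ℓ (π (a :: u)) = u.length + 1 := by
    rw [length_pi_chain' cs hu _ hch]; simp
  have hlu : ℓ (π u) = u.length := length_pi_chain' cs hu _ hchu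
  have htx : ℓ (S t * π (a :: u)) = ℓ (π (a :: u)) + 1 := by
    apply length_simple_mul_of_head_ne cs hu
    rw [hnfx]
    simp
    exact fun e => hta e.symm
  have hxne : S t * π (a :: u) ≠ π (a :: u) := by
    intro e
    rw [e] at htx
    omega
  have hxu : π (a :: u) ≠ π u := by
    intro e
    rw [e] at hlx
    omega
  have htxu : S t * π (a :: u) ≠ π u := by
    intro e
    have l1 : ℓ (S t * π (a :: u)) = u.length + 2 := by rw [htx, hlx]
    rw [e, hlu] at l1
    omega
  set c : H := C.b (S t) * C.b (π (a :: u)) - C.b (S t * π (a :: u))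
      - (if u.head? = some t then C.b (π u) else 0) with hc
  have hd : C.d c = c := by
    rw [hc, map_sub, map_sub, map_mul, C.hb_self, C.hb_self, C.hb_self,
      apply_ite C.d, C.hb_self, map_zero]
  have hvp : ∀ z, VP (C.h.repr c z) := by
    intro z
    have hite : C.h.repr (if u.head? = some t then C.b (π u) else 0) z
        = if u.head? = some t then C.h.repr (C.b (π u)) z else 0 := by
      split <;> simp
    rw [hc, map_sub, map_sub, Finsupp.sub_apply, Finsupp.sub_apply,
      repr_b_simple_mul C hu, hite]
    intro k hk
    rw [R_sub_apply, R_sub_apply, R_add_apply, R_add_apply]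
    by_cases hz : z = S t * π (a :: u)
    · have e : S t * z = π (a :: u) := by rw [hz, simple_mul_simple_cancel_left]
      have hcond : ℓ (S t * z) < ℓ z := by rw [e, hz, htx]; omega
      rw [if_pos hcond, e, C.hb_diag]
      have e2 : C.h.repr (C.b (π (a :: u))) z = 0 := by
        apply cc_zero_of_length C (by rw [hz, htx]; omega) (by rw [hz]; exact hxne)
      rw [e2, mul_zero, mul_zero]
      have e3 : C.h.repr (C.b (S t * π (a :: u))) z = 1 := by rw [hz]; exact C.hb_diag _
      rw [e3]
      have e4 : (if u.head? = some t then C.h.repr (C.b (π u)) z else 0) k = 0 := by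
        rw [apply_ite (fun p : R => p k)]
        split
        · rw [cc_vp C (by rw [hz]; exact htxu) k hk]
        · rfl
      rw [e4]
      simp
    · have htzx : S t * z ≠ π (a :: u) := fun e => hz (by
        rw [← e, simple_mul_simple_cancel_left])
      by_cases hcond : ℓ (S t * z) < ℓ z
      · have hheadz : (nf cs hu z).head? = some t := (descent_iff cs hu t z).mp hcond
        have hzx : z ≠ π (a :: u) := by
          intro e
          rw [e, hnfx] at hheadz
          simp at hheadz
          exact hta hheadz.symm
        rw [if_pos hcond, sub_mul, R_sub_apply, Tm1_mul_apply, T1_mul_apply]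
        rw [cc_vp C htzx k hk, cc_vp C hz k hk,
          cc_vp0 C (π (a :: u)) z (k - 1) (by omega)]
        rcases lt_or_eq_of_le hk with hk0 | hk0
        · rw [cc_vp C hzx (k + 1) (by omega)]
          have hE : (if u.head? = some t then C.h.repr (C.b (π u)) z else 0) k = 0 := by
            rw [apply_ite (fun p : R => p k)]
            split
            · rw [cc_vp0 C (π u) z k hk0]
            · rfl
          rw [hE]
          simp
        · subst hk0
          rw [show ((0 : ℤ) + 1) = 1 by ring, hmu t z hta hcond]
          by_cases hzu : z = π u
          · have hcondu : u.head? = some t := by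
              rw [hzu, hnfu] at hheadz
              exact hheadz
            rw [if_pos hzu, if_pos hcondu, hzu, C.hb_diag]
            rw [R_one_apply]
            simp
          · rw [if_neg hzu]
            have hE : (if u.head? = some t then C.h.repr (C.b (π u)) z else 0) 0 = 0 := by
              rw [apply_ite (fun p : R => p 0)]
              split
              · rw [cc_vp C hzu 0 le_rfl]
              · rfl
            rw [hE]
            simp
      · rw [if_neg hcond]
        have hE : (if u.head? = some t then C.h.repr (C.b (π u)) z else 0) k = 0 := by
          rw [apply_ite (fun p : R => p k)]
          split
          · rename_i hcondu
            have hzu : z ≠ π u := by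
              intro e
              apply hcond
              apply (descent_iff cs hu t z).mpr
              rw [e, hnfu]
              exact hcondu
            rw [cc_vp C hzu k hk]
          · rfl
        rw [cc_vp C htzx k hk, T1_mul_apply, cc_vp0 C (π (a :: u)) z (k - 1) (by omega),
          cc_vp C hz k hk, hE]
        simp
  have hzero := selfdual_vp_eq_zero C hu c hd hvp
  rw [hc, sub_sub] at hzero
  exact sub_eq_zero.mp hzero

lemma main (hu : ∀ i j : B, i ≠ j → M i j = 0) : ∀ n : ℕ, ∀ (a : B) (u : List B),
    (a :: u).IsChain (· ≠ ·) → u.length ≤ n →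
    (C.b (S a) * C.b (π (a :: u)) = ((T 1 + T (-1) : R)) • C.b (π (a :: u))) ∧
    (∀ t y, t ≠ a → ℓ (S t * y) < ℓ y →
      (C.h.repr (C.b (π (a :: u))) y) 1 = if y = π u then 1 else 0) ∧
    (∀ t, t ≠ a → C.b (S t) * C.b (π (a :: u)) =
      C.b (S t * π (a :: u)) + (if u.head? = some t then C.b (π u) else 0)) := by
  intro n
  induction n with
  | zero =>
    intro a u hch hlen
    have hu0 : u = [] := List.length_eq_zero_iff.mp (by omega)
    subst hu0
    have hxa : π [a] = S a := by rw [wordProd_cons, wordProd_nil, mul_one]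
    refine ⟨?_, mu_nil C hu a, ?_⟩
    · rw [hxa]; exact base1 C hu a
    · intro t hta
      exact step_mul C hu a [] hch t hta (mu_nil C hu a)
  | succ n ih =>
    intro a u hch hlen
    by_cases hle : u.length ≤ n
    · exact ih a u hch hle
    obtain ⟨bb, r, rfl⟩ : ∃ bb r, u = bb :: r := by
      cases u with
      | nil => exact absurd (by simp : ([] : List B).length ≤ n) hle
      | cons bb r => exact ⟨bb, r, rfl⟩
    simp only [List.length_cons] at hlen hle
    have hlr : r.length = n := by omega
    have hchu : (bb :: r).IsChain (· ≠ ·) := hch.tail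
    have hab : a ≠ bb := (List.isChain_cons_cons.mp hch).1
    have IHu := ih bb r hchu (by omega)
    have hSa : S a * π (bb :: r) = π (a :: bb :: r) := (cs.wordProd_cons a (bb :: r)).symm
    have hdag : C.b (π (a :: bb :: r)) = C.b (S a) * C.b (π (bb :: r))
        - (if r.head? = some a then C.b (π r) else 0) := by
      have h23 := IHu.2.2 a hab
      rw [hSa] at h23
      rw [h23, add_sub_cancel_right]
    have hmu : ∀ t y, t ≠ a → ℓ (S t * y) < ℓ y →
        (C.h.repr (C.b (π (a :: bb :: r))) y) 1 = if y = π (bb :: r) then 1 else 0 := by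
      intro t y hta hdesc
      have hheady : (nf cs hu y).head? = some t := (descent_iff cs hu t y).mp hdesc
      have hay_ne : (nf cs hu y).head? ≠ some a := by
        intro e
        rw [hheady] at e
        exact hta (Option.some.inj e)
      have hay : ℓ (S a * y) = ℓ y + 1 := length_simple_mul_of_head_ne cs hu a y hay_ne
      rw [hdag, map_sub, Finsupp.sub_apply, repr_b_simple_mul C hu]
      have hite : C.h.repr (if r.head? = some a then C.b (π r) else 0) y
          = if r.head? = some a then C.h.repr (C.b (π r)) y else 0 := by
        split <;> simp
      rw [hite, R_sub_apply, R_add_apply, R_add_apply, if_neg (by omega : ¬ ℓ (S a * y) < ℓ y)]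
      have hAdesc : ℓ (S a * (S a * y)) < ℓ (S a * y) := by
        rw [simple_mul_simple_cancel_left]; omega
      have hA := IHu.2.1 a (S a * y) hab hAdesc
      rw [hA]
      have hB : (T 1 * C.h.repr (C.b (π (bb :: r))) y : R) 1
          = if y = π (bb :: r) then 1 else 0 := by
        rw [T1_mul_apply, show ((1 : ℤ) - 1) = 0 from by ring]
        by_cases hyx : y = π (bb :: r)
        · rw [if_pos hyx, hyx, C.hb_diag, R_one_apply, if_pos rfl]
        · rw [if_neg hyx, cc_vp C hyx 0 le_rfl]
      rw [hB]
      have hC : (if r.head? = some a then C.h.repr (C.b (π r)) y else 0) 1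
          = if S a * y = π r then 1 else 0 := by
        by_cases hcond : r.head? = some a
        · obtain ⟨r', rfl⟩ : ∃ r', r = a :: r' := by
            cases r with
            | nil => simp at hcond
            | cons c r' =>
              refine ⟨r', ?_⟩
              have : c = a := by simpa using hcond
              rw [this]
          have hchr : (a :: r').IsChain (· ≠ ·) := hchu.tail
          have hlr' : r'.length ≤ n := by
            simp only [List.length_cons] at hlr
            omega
          have IHr := ih a r' hchr hlr'
          rw [if_pos hcond, IHr.2.1 t y hta hdesc]
          have e1 : (S a * y = π (a :: r')) ↔ (y = π r') := by
            rw [wordProd_cons]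
            constructor
            · intro e; exact mul_left_cancel e
            · intro e; rw [e]
          exact (if_congr e1 rfl rfl).symm
        · rw [if_neg hcond]
          have hne2 : S a * y ≠ π r := by
            intro e
            have hnfay : nf cs hu (S a * y) = a :: nf cs hu y :=
              nf_simple_mul_of_head_ne cs hu a y hay_ne
            have hnfr : nf cs hu (π r) = r := nf_wordProd cs hu r hchu.tail
            rw [e, hnfr] at hnfay
            rw [hnfay] at hcond
            simp at hcond
          rw [if_neg hne2]
          rfl
      rw [hC]
      have hz1 : ((0 : R)) 1 = 0 := rfl
      rw [hz1]
      ring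
    refine ⟨?_, hmu, fun t hta => step_mul C hu a (bb :: r) hch t hta hmu⟩
    by_cases hcond : r.head? = some a
    · obtain ⟨r', rfl⟩ : ∃ r', r = a :: r' := by
        cases r with
        | nil => simp at hcond
        | cons c r' =>
          refine ⟨r', ?_⟩
          have : c = a := by simpa using hcond
          rw [this]
      have hlr' : r'.length ≤ n := by
        simp only [List.length_cons] at hlr
        omega
      have IHr := ih a r' hchu.tail hlr'
      rw [hdag, if_pos hcond]
      rw [mul_sub, ← mul_assoc, base1 C hu a, smul_mul_assoc, IHr.1, ← smul_sub]
    · rw [hdag, if_neg hcond, sub_zero, ← mul_assoc, base1 C hu a, smul_mul_assoc]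

end DyerUniv

/-- **Dyer's formula.** In the Hecke algebra of the universal Coxeter
group `Uₙ` (all `m_{sr} = ∞` for `s ≠ r`), for `x` with (unique) reduced expression
`x = r s ⋯`: (1) `b_r bₓ = (v + v⁻¹) bₓ`; (2) `b_t bₓ = b_{tx}` if `t ∉ {r, s}`;
(3) `bₛ bₓ = b_{sx} + b_{rx}` (here `s ≠ r`). -/
theorem hecke_dyer_formula {B W : Type*} [Group W] {M : CoxeterMatrix B} (cs : CoxeterSystem M W)
    {H : Type*} [Ring H] [Algebra (LaurentPolynomial ℤ) H]
    -- `h` is the standard basis of the Hecke algebra `H` of `(W, S)` over `ℤ[v, v⁻¹]`,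
    -- where `v` is the Laurent variable `T 1`
    (h : Module.Basis W (LaurentPolynomial ℤ) H) (h_one : h 1 = 1)
    -- the multiplication rules characterizing the Hecke algebra:
    -- `hₛ hₓ = h_{sx}` if `sx > x`, and `hₛ hₓ = h_{sx} + (v⁻¹ - v) hₓ` if `sx < x`
    (h_mul_gt : ∀ (i : B) (x : W), cs.length (cs.simple i * x) > cs.length x →
      h (cs.simple i) * h x = h (cs.simple i * x))
    (h_mul_lt : ∀ (i : B) (x : W), cs.length (cs.simple i * x) < cs.length x →
      h (cs.simple i) * h x = h (cs.simple i * x) + ((T (-1) - T 1 : LaurentPolynomial ℤ)) • h x)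
    -- `d` is the Kazhdan–Lusztig duality: the ring endomorphism of `H` with
    -- `d(v·a) = v⁻¹·d(a)` and `d(hₓ) = (h_{x⁻¹})⁻¹`
    (d : H →+* H)
    (hd_smul : ∀ (p : LaurentPolynomial ℤ) (a : H), d (p • a) = (invert p) • d a)
    (hd_h : ∀ x : W, d (h x) = Ring.inverse (h (x⁻¹)))
    -- `b x` is the Kazhdan–Lusztig basis element: the unique self-dual element with
    -- `b x ∈ hₓ + ∑_{y < x} v ℤ[v] h_y`
    (b : W → H)
    (hb_self : ∀ x : W, d (b x) = b x)
    (hb_diag : ∀ x : W, h.repr (b x) x = 1)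
    (hb_tri : ∀ x y : W, y ≠ x →
      MemVZv (h.repr (b x) y) ∧ ((h.repr (b x)) y ≠ 0 → cs.bruhatLT y x))
    (huniv : ∀ i j : B, i ≠ j → M i j = 0)
    (i j : B) (hij : i ≠ j) (ω : List B) (hred : cs.IsReduced (i :: j :: ω)) :
    b (cs.simple i) * b (cs.wordProd (i :: j :: ω)) =
        ((T 1 + T (-1) : LaurentPolynomial ℤ)) • b (cs.wordProd (i :: j :: ω)) ∧
    (∀ t : B, t ≠ i → t ≠ j →
      b (cs.simple t) * b (cs.wordProd (i :: j :: ω)) =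
        b (cs.simple t * cs.wordProd (i :: j :: ω))) ∧
    b (cs.simple j) * b (cs.wordProd (i :: j :: ω)) =
      b (cs.simple j * cs.wordProd (i :: j :: ω)) +
        b (cs.simple i * cs.wordProd (i :: j :: ω)) := by
  classical
  set C : DyerUniv.Ctx cs H := ⟨h, b, d, h_one, h_mul_gt, h_mul_lt, hd_smul, hd_h,
    hb_self, hb_diag, hb_tri⟩ with hC
  have hch : (i :: j :: ω).IsChain (· ≠ ·) :=
    DyerUniv.chain'_of_isReduced cs huniv (i :: j :: ω) hred
  have hm := DyerUniv.main C huniv (j :: ω).length i (j :: ω) hch le_rfl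
  refine ⟨hm.1, ?_, ?_⟩
  · intro t hti htj
    have h2 := hm.2.2 t hti
    rw [if_neg (by
      simp only [List.head?_cons]
      exact fun e => htj (Option.some.inj e).symm), add_zero] at h2
    exact h2
  · have h3 := hm.2.2 j (fun e => hij e.symm)
    rw [if_pos (by simp only [List.head?_cons])] at h3
    have e2 : cs.wordProd (j :: ω) = cs.simple i * cs.wordProd (i :: j :: ω) := by
      rw [cs.wordProd_cons i (j :: ω), CoxeterSystem.simple_mul_simple_cancel_left]
    rw [e2] at h3
    exact h3
end

section
/- With R = ℝ[x,y,z], s swapping x,y, and B_s = R ⊗_{R^s} R(1), there is an isomorphism of graded R-bimodules B_s ⊗_R B_s ≅ B_s(1) ⊕ B_s(-1). -/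
open MvPolynomial TensorProduct

set_option synthInstance.maxHeartbeats 1000000
set_option maxHeartbeats 2000000

/-- `R = ℝ[x,y,z]` (`x = X 0`, `y = X 1`, `z = X 2`), with the paper's grading: the usual
grading multiplied by two, so a polynomial homogeneous of standard degree `a` has paper
degree `2a`. -/
noncomputable abbrev RR3 : Type := MvPolynomial (Fin 3) ℝ

/-- The action of the simple reflection `s`, exchanging `x` and `y`. -/
noncomputable def sAct : RR3 ≃ₐ[ℝ] RR3 :=
  MvPolynomial.renameEquiv ℝ (Equiv.swap (0 : Fin 3) 1)

/-- The invariant subring `Rˢ`. -/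
noncomputable def Rs : Subalgebra ℝ RR3 :=
  AlgHom.equalizer (sAct : RR3 →ₐ[ℝ] RR3) (AlgHom.id ℝ RR3)

noncomputable def dd : RR3 := X 0 - X 1

lemma sAct_X0 : sAct (X 0 : RR3) = X 1 := by
  simp [sAct, renameEquiv_apply, rename_X, Equiv.swap_apply_left]

lemma sAct_X1 : sAct (X 1 : RR3) = X 0 := by
  simp [sAct, renameEquiv_apply, rename_X, Equiv.swap_apply_right]

lemma sAct_X2 : sAct (X 2 : RR3) = X 2 := by
  simp [sAct, renameEquiv_apply, rename_X]
  rw [Equiv.swap_apply_of_ne_of_ne (by decide) (by decide)]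

lemma sAct_dd : sAct dd = -dd := by
  simp [dd, map_sub, sAct_X0, sAct_X1]

lemma dd_ne : (dd : RR3) ≠ 0 := by
  have : (X 0 : RR3) ≠ X 1 := fun h => by
    simpa using (MvPolynomial.X_injective h : (0 : Fin 3) = 1)
  simpa [dd, sub_ne_zero] using this

lemma mem_Rs {a : RR3} : a ∈ Rs ↔ sAct a = a := Iff.rfl

noncomputable def Φ : RR3 →ₐ[ℝ] MvPolynomial (Fin 2) ℝ :=
  ((Polynomial.aeval (X 0 : MvPolynomial (Fin 2) ℝ)).restrictScalars ℝ).comp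
    (MvPolynomial.finSuccEquiv ℝ 2).toAlgHom

lemma Φ_X0 : Φ (X 0 : RR3) = X 0 := by
  simp [Φ, finSuccEquiv_X_zero]

lemma Φ_X1 : Φ (X 1 : RR3) = X 0 := by
  have : (X 1 : RR3) = X (Fin.succ 0) := rfl
  simp [Φ, this, finSuccEquiv_X_succ]

lemma Φ_X2 : Φ (X 2 : RR3) = X 1 := by
  have : (X 2 : RR3) = X (Fin.succ 1) := rfl
  simp [Φ, this, finSuccEquiv_X_succ]

lemma Φ_sAct (q : RR3) : Φ (sAct q) = Φ q := by
  have h : Φ.comp (sAct : RR3 →ₐ[ℝ] RR3) = Φ := by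
    apply MvPolynomial.algHom_ext
    intro i
    fin_cases i
    · show Φ (sAct (X 0)) = Φ (X 0)
      rw [sAct_X0, Φ_X1, Φ_X0]
    · show Φ (sAct (X 1)) = Φ (X 1)
      rw [sAct_X1, Φ_X1, Φ_X0]
    · show Φ (sAct (X 2)) = Φ (X 2)
      rw [sAct_X2]
  exact congrArg (fun g => g q) h

lemma hdvd (q : RR3) : dd ∣ q - sAct q := by
  set e := MvPolynomial.finSuccEquiv ℝ 2 with he
  have h2 : e dd ∣ e (q - sAct q) := by
    have hdd : e dd = Polynomial.X - Polynomial.C (X 0) := by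
      have h1 : (X 1 : RR3) = X (Fin.succ 0) := rfl
      simp [dd, he, map_sub, finSuccEquiv_X_zero, h1, finSuccEquiv_X_succ]
    rw [hdd, Polynomial.dvd_iff_isRoot]
    have hq : ∀ r : RR3, Polynomial.eval (X 0 : MvPolynomial (Fin 2) ℝ) (e r) = Φ r :=
      fun r => (congrFun (Polynomial.coe_aeval_eq_eval (X 0)) (e r)).symm
    rw [Polynomial.IsRoot, map_sub, Polynomial.eval_sub, hq, hq, Φ_sAct, sub_self]
  have h3 := map_dvd e.symm h2
  simpa using h3


/-- Demazure operator: `Dem q = (q - s q)/(x - y)`. -/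
noncomputable def Dem (q : RR3) : RR3 := (hdvd q).choose

lemma Dem_spec (q : RR3) : q - sAct q = dd * Dem q := (hdvd q).choose_spec

lemma Dem_unique {q c : RR3} (h : q - sAct q = dd * c) : Dem q = c :=
  mul_left_cancel₀ dd_ne ((Dem_spec q).symm.trans h)

lemma Dem_add (q q' : RR3) : Dem (q + q') = Dem q + Dem q' :=
  Dem_unique (by rw [map_add, mul_add, ← Dem_spec, ← Dem_spec]; ring)

lemma Dem_invMul {a : RR3} (ha : sAct a = a) (q : RR3) : Dem (a * q) = a * Dem q :=
  Dem_unique (by rw [map_mul, ha, ← mul_sub, Dem_spec q]; ring)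

lemma Dem_one : Dem (1 : RR3) = 0 :=
  Dem_unique (by simp)

lemma sAct_sAct (q : RR3) : sAct (sAct q) = q := by
  have h : (sAct : RR3 →ₐ[ℝ] RR3).comp (sAct : RR3 →ₐ[ℝ] RR3) = AlgHom.id ℝ RR3 := by
    apply MvPolynomial.algHom_ext
    intro i
    fin_cases i
    · show sAct (sAct (X 0)) = X 0
      rw [sAct_X0, sAct_X1]
    · show sAct (sAct (X 1)) = X 1
      rw [sAct_X1, sAct_X0]
    · show sAct (sAct (X 2)) = X 2
      rw [sAct_X2, sAct_X2]
  exact congrArg (fun g => g q) h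

lemma sAct_Dem (q : RR3) : sAct (Dem q) = Dem q := by
  have h := congrArg sAct (Dem_spec q)
  rw [map_sub, map_mul, sAct_dd, sAct_sAct] at h
  have h2 : q - sAct q = dd * sAct (Dem q) := by linear_combination -h
  exact (Dem_unique h2).symm

/-- `δ = (x - y)/2`. -/
noncomputable def del : RR3 := C (2⁻¹ : ℝ) * dd

lemma sAct_C (r : ℝ) : sAct (C r : RR3) = C r := by simp [sAct]

lemma sAct_del : sAct del = -del := by
  simp [del, map_mul, sAct_C, sAct_dd]

lemma two_C_half : (2 : RR3) * C (2⁻¹ : ℝ) = 1 := by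
  have : (2 : RR3) = C (2 : ℝ) := by rw [map_ofNat]
  rw [this, ← C_mul]
  norm_num

lemma Dem_del : Dem del = 1 := Dem_unique (by
  rw [sAct_del, sub_neg_eq_add, mul_one, del]
  linear_combination dd * two_C_half)

/-- The invariant part: `E q = (q + s q)/2`. -/
noncomputable def Ei (q : RR3) : RR3 := q - del * Dem q

lemma Ei_spec (q : RR3) : q = Ei q + del * Dem q := by rw [Ei]; ring

lemma Ei_add (q q' : RR3) : Ei (q + q') = Ei q + Ei q' := by
  rw [Ei, Ei, Ei, Dem_add]; ring

lemma Ei_invMul {a : RR3} (ha : sAct a = a) (q : RR3) : Ei (a * q) = a * Ei q := by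
  rw [Ei, Ei, Dem_invMul ha]; ring

lemma Ei_one : Ei (1 : RR3) = 1 := by rw [Ei, Dem_one]; ring

lemma Dem_del_mul {a : RR3} (ha : sAct a = a) : Dem (a * del) = a := by
  rw [Dem_invMul ha, Dem_del, mul_one]

lemma Ei_del : Ei del = 0 := by
  rw [Ei, Dem_del, mul_one, sub_self]

lemma Ei_del_mul {a : RR3} (ha : sAct a = a) : Ei (a * del) = 0 := by
  rw [Ei_invMul ha, Ei_del, mul_zero]

lemma twoEi (q : RR3) : Ei q = C (2⁻¹ : ℝ) * (q + sAct q) := by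
  have h1 := Dem_spec q
  rw [Ei, del]
  linear_combination C (2⁻¹:ℝ) * h1 - q * two_C_half

lemma sAct_Ei (q : RR3) : sAct (Ei q) = Ei q := by
  rw [twoEi, map_mul, sAct_C, map_add, sAct_sAct]
  ring

section Homog

lemma homogeneousComponent_mul_left {φ : RR3} {m : ℕ} (hφ : φ.IsHomogeneous m)
    (n : ℕ) (ψ : RR3) :
    homogeneousComponent (m + n) (φ * ψ) = φ * homogeneousComponent n ψ := by
  induction ψ using MvPolynomial.induction_on' with
  | monomial d r =>
    rw [homogeneousComponent_of_mem
      ((mem_homogeneousSubmodule _ _).mpr (hφ.mul (isHomogeneous_monomial r rfl))),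
      homogeneousComponent_of_mem
      ((mem_homogeneousSubmodule _ _).mpr (isHomogeneous_monomial r rfl))]
    by_cases h : n = d.degree
    · rw [if_pos (by omega), if_pos h]
    · rw [if_neg (by omega), if_neg h, mul_zero]
  | add p q hp hq =>
    rw [mul_add, map_add, map_add, hp, hq, mul_add]

lemma isHomogeneous_of_mul {φ ψ : RR3} {m n : ℕ} (hφ : φ.IsHomogeneous m)
    (hφ0 : φ ≠ 0) (h : (φ * ψ).IsHomogeneous (m + n)) : ψ.IsHomogeneous n := by
  have key : ∀ i, i ≠ n → homogeneousComponent i ψ = 0 := by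
    intro i hi
    have h1 : homogeneousComponent (m + i) (φ * ψ) = φ * homogeneousComponent i ψ :=
      homogeneousComponent_mul_left hφ i ψ
    have h2 : homogeneousComponent (m + i) (φ * ψ) = 0 := by
      rw [homogeneousComponent_of_mem ((mem_homogeneousSubmodule _ _).mpr h),
        if_neg (by omega)]
    rcases mul_eq_zero.mp (h1.symm.trans h2) with h' | h'
    · exact absurd h' hφ0
    · exact h'
  have hψ : ψ = homogeneousComponent n ψ := by
    conv_lhs => rw [← sum_homogeneousComponent ψ]
    rw [Finset.sum_eq_single n (fun i _ hi => key i hi)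
      (fun hn => homogeneousComponent_eq_zero n ψ (by simp at hn; omega))]
  exact hψ ▸ homogeneousComponent_isHomogeneous n ψ

lemma dd_isHomogeneous : (dd : RR3).IsHomogeneous 1 :=
  (isHomogeneous_X ℝ (0 : Fin 3)).sub (isHomogeneous_X ℝ 1)

lemma sAct_isHomogeneous {q : RR3} {b : ℕ} (hq : q.IsHomogeneous b) :
    (sAct q).IsHomogeneous b := hq.rename_isHomogeneous

lemma Dem_isHomogeneous {q : RR3} {b : ℕ} (hq : q.IsHomogeneous b) (hD : Dem q ≠ 0) :
    ∃ b' : ℕ, b' + 1 = b ∧ (Dem q).IsHomogeneous b' := by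
  cases b with
  | zero =>
    exfalso
    have h0 := homogeneousComponent_of_mem
      ((mem_homogeneousSubmodule _ _).mpr hq) (m := 0)
    rw [if_pos rfl, homogeneousComponent_zero] at h0
    have hs : sAct q = q := by rw [← h0, sAct_C]
    exact hD (Dem_unique (by rw [hs, sub_self, mul_zero]))
  | succ k =>
    refine ⟨k, rfl, ?_⟩
    have hsub : (dd * Dem q).IsHomogeneous (1 + k) := by
      rw [← Dem_spec q]
      have := hq.sub (sAct_isHomogeneous hq)
      rwa [show 1 + k = k + 1 by omega]
    exact isHomogeneous_of_mul dd_isHomogeneous dd_ne hsub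

lemma Ei_isHomogeneous {q : RR3} {b : ℕ} (hq : q.IsHomogeneous b) :
    (Ei q).IsHomogeneous b := by
  rw [twoEi]
  simpa using ((hq.add (sAct_isHomogeneous hq)).C_mul (2⁻¹ : ℝ))

end Homog

/-- The Soergel bimodule `Bₛ = R ⊗_{Rˢ} R (1)` (as an `R`-bimodule; the grading shift is
accounted for in the grading predicates below). -/
noncomputable abbrev Bs : Type := RR3 ⊗[Rs] RR3

noncomputable instance iABs : Algebra Rs Bs := Algebra.TensorProduct.leftAlgebra

/-- The product `Bₛ Bₛ = Bₛ ⊗_R Bₛ ≅ R ⊗_{Rˢ} R ⊗_{Rˢ} R (2)`. -/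
noncomputable abbrev BsBs : Type := @TensorProduct Rs _ RR3 Bs _ _ _ iABs.toModule

noncomputable instance : CommRing BsBs :=
  Algebra.TensorProduct.instCommRing (R := Rs) (A := RR3) (B := Bs)

noncomputable instance iRBs : Algebra ℝ Bs := Algebra.TensorProduct.leftAlgebra

noncomputable instance iRBsBs : Algebra ℝ BsBs :=
  Algebra.TensorProduct.leftAlgebra (R := Rs) (A := RR3) (B := Bs) (S := ℝ)

lemma smulRs (a : Rs) (p : RR3) : a • p = (a : RR3) * p := rfl

/-- `r ↦ w ⊗ r` -/
noncomputable def mkB (w : RR3) : RR3 →ₗ[Rs] Bs := TensorProduct.mk Rs RR3 RR3 w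

lemma mkB_apply (w r : RR3) : mkB w r = w ⊗ₜ r := rfl

noncomputable def HL : RR3 →ₗ[Rs] RR3 →ₗ[Rs] RR3 →ₗ[Rs] Bs × Bs :=
  LinearMap.mk₂ Rs (fun p q => (mkB (Ei q * p)).prod (mkB (Dem q * p)))
    (fun p p' q => by
      ext r <;>
        simp [mkB_apply, mul_add, add_tmul])
    (fun a p q => by
      ext r <;>
        simp [mkB_apply, smulRs, smul_tmul', mul_left_comm] <;> rfl)
    (fun p q q' => by
      ext r <;>
        simp [mkB_apply, Ei_add, Dem_add, add_mul, add_tmul])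
    (fun a p q => by
      ext r <;>
        simp [mkB_apply, smulRs, smul_tmul', Ei_invMul a.2, Dem_invMul a.2, mul_assoc] <;> rfl)

lemma HL_apply (p q r : RR3) : HL p q r = ((Ei q * p) ⊗ₜ r, (Dem q * p) ⊗ₜ r) := rfl

noncomputable def fL : BsBs →ₗ[Rs] Bs × Bs :=
  TensorProduct.lift ((TensorProduct.lift.equiv (RingHom.id Rs) RR3 RR3 (Bs × Bs)).toLinearMap.comp HL)

lemma fL_tmul (p q r : RR3) :
    fL (p ⊗ₜ (q ⊗ₜ r)) = ((Ei q * p) ⊗ₜ r, (Dem q * p) ⊗ₜ r) := by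
  simp [fL, TensorProduct.lift.equiv, HL_apply, TensorProduct.uncurry_apply]
  rfl

lemma smul_mid (b : Rs) (x : RR3) (y : Bs) : ((b • x) ⊗ₜ y : BsBs) = x ⊗ₜ (b • y) :=
  (CompatibleSMul.isScalarTower (R := Rs) (R' := Rs) (M := RR3) (N := Bs)).smul_tmul b x y

noncomputable def gc (c : RR3) : Bs →ₗ[Rs] BsBs :=
  TensorProduct.lift (LinearMap.mk₂ Rs (fun p r => (p ⊗ₜ (c ⊗ₜ r) : BsBs))
    (fun p p' r => by simp [add_tmul])
    (fun a p r => by rfl)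
    (fun p r r' => by simp [tmul_add])
    (fun a p r => by rw [tmul_smul]; exact (smul_mid _ _ _).symm))

lemma gc_tmul (c p r : RR3) : gc c (p ⊗ₜ r) = p ⊗ₜ (c ⊗ₜ r) := rfl

noncomputable def gL : Bs × Bs →ₗ[Rs] BsBs := (gc 1).coprod (gc del)

lemma shift {a : RR3} (ha : sAct a = a) (p c r : RR3) :
    ((a * p) ⊗ₜ (c ⊗ₜ r) : BsBs) = p ⊗ₜ ((a * c) ⊗ₜ r) := by
  rw [show a * p = (⟨a, mem_Rs.mpr ha⟩ : Rs) • p from rfl, smul_mid]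
  rfl

lemma fL_gL : fL.comp gL = LinearMap.id := by
  apply LinearMap.prod_ext <;> apply TensorProduct.ext' <;> intro p r
  · show fL (gc 1 (p ⊗ₜ r) + gc del 0) = ((p ⊗ₜ r : Bs), (0 : Bs))
    simp [gL, gc_tmul, fL_tmul, Ei_one, Dem_one, Ei_del, Dem_del]
  · show fL (gc 1 0 + gc del (p ⊗ₜ r)) = ((0 : Bs), (p ⊗ₜ r : Bs))
    simp [gL, gc_tmul, fL_tmul, Ei_one, Dem_one, Ei_del, Dem_del]

lemma gL_fL : gL.comp fL = LinearMap.id := by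
  ext p q r
  show gL (fL (p ⊗ₜ (q ⊗ₜ r))) = p ⊗ₜ (q ⊗ₜ r)
  rw [fL_tmul]
  show gc 1 ((Ei q * p) ⊗ₜ r) + gc del ((Dem q * p) ⊗ₜ r) = p ⊗ₜ (q ⊗ₜ r)
  rw [gc_tmul, gc_tmul, shift (sAct_Ei q), shift (sAct_Dem q), ← tmul_add, ← add_tmul,
    mul_one]
  have : Ei q + Dem q * del = q := by rw [Ei]; ring
  rw [this]

noncomputable def eRs : BsBs ≃ₗ[Rs] Bs × Bs := LinearEquiv.ofLinear fL gL fL_gL gL_fL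

/-- The degree-`n` component of `Bₛ = R ⊗_{Rˢ} R (1)`: spanned by the pure tensors
`p ⊗ₜ q` with `p, q` homogeneous of standard degrees `a, b` and `2a + 2b - 1 = n`
(variables sit in degree `2` and `(1)` shifts degrees down by one). -/
noncomputable def BsDeg (n : ℤ) : Submodule ℝ Bs :=
  Submodule.span ℝ {u : Bs | ∃ (p q : RR3) (a b : ℕ),
    p.IsHomogeneous a ∧ q.IsHomogeneous b ∧ u = p ⊗ₜ q ∧ 2 * (a : ℤ) + 2 * b - 1 = n}

/-- The degree-`n` component of `Bₛ Bₛ ≅ R ⊗_{Rˢ} R ⊗_{Rˢ} R (2)`. -/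
noncomputable def BsBsDeg (n : ℤ) : Submodule ℝ BsBs :=
  Submodule.span ℝ {u : BsBs | ∃ (p q r : RR3) (a b c : ℕ),
    p.IsHomogeneous a ∧ q.IsHomogeneous b ∧ r.IsHomogeneous c ∧
    u = p ⊗ₜ (q ⊗ₜ r) ∧ 2 * (a : ℤ) + 2 * b + 2 * c - 2 = n}

lemma bimod (p q : RR3) (u : BsBs) :
    fL (((p ⊗ₜ 1 : BsBs) * u) * (1 ⊗ₜ (1 ⊗ₜ q))) =
      ((p ⊗ₜ 1 : Bs) * (fL u).1 * (1 ⊗ₜ q), (p ⊗ₜ 1 : Bs) * (fL u).2 * (1 ⊗ₜ q)) := by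
  induction u using TensorProduct.induction_on with
  | zero => simp; rfl
  | add u v hu hv =>
    rw [mul_add, add_mul, map_add, map_add, hu, hv]
    simp [mul_add, add_mul, Prod.ext_iff]
  | tmul a v =>
    induction v using TensorProduct.induction_on with
    | zero =>
      rw [tmul_zero]
      simp; rfl
    | add v w hv hw =>
      rw [tmul_add, mul_add, add_mul, map_add, map_add, hv, hw]
      simp [mul_add, add_mul, Prod.ext_iff]
    | tmul b c =>
      simp only [Algebra.TensorProduct.tmul_mul_tmul, one_mul, mul_one, fL_tmul]
      have h1 : Ei b * (p * a) = p * (Ei b * a) := by ring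
      have h2 : Dem b * (p * a) = p * (Dem b * a) := by ring
      rw [h1, h2]

lemma grading (n : ℤ) (u : BsBs) (hu : u ∈ BsBsDeg n) :
    ((eRs.restrictScalars ℝ) u).1 ∈ BsDeg (n + 1) ∧
      ((eRs.restrictScalars ℝ) u).2 ∈ BsDeg (n - 1) := by
  set fR : BsBs →ₗ[ℝ] Bs × Bs :=
    ((eRs.restrictScalars ℝ : BsBs ≃ₗ[ℝ] Bs × Bs) : BsBs →ₗ[ℝ] Bs × Bs) with hfR
  have hmem : fR u ∈ Submodule.map fR (BsBsDeg n) := ⟨u, hu, rfl⟩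
  have hle : Submodule.map fR (BsBsDeg n) ≤ (BsDeg (n + 1)).prod (BsDeg (n - 1)) := by
    rw [BsBsDeg, Submodule.map_span, Submodule.span_le]
    rintro v ⟨w, ⟨p, q, r, a, b, c, hp, hq, hr, rfl, hn⟩, rfl⟩
    have hw : fR (p ⊗ₜ (q ⊗ₜ r)) = ((Ei q * p) ⊗ₜ r, (Dem q * p) ⊗ₜ r) := fL_tmul p q r
    rw [SetLike.mem_coe, hw, Submodule.mem_prod]
    constructor
    · exact Submodule.subset_span
        ⟨Ei q * p, r, b + a, c, (Ei_isHomogeneous hq).mul hp, hr, rfl, by push_cast; omega⟩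
    · by_cases hD : Dem q = 0
      · show ((Dem q * p) ⊗ₜ r : Bs) ∈ _
        rw [hD, zero_mul, zero_tmul]
        exact Submodule.zero_mem _
      · obtain ⟨b', hb', hDh⟩ := Dem_isHomogeneous hq hD
        exact Submodule.subset_span
          ⟨Dem q * p, r, b' + a, c, hDh.mul hp, hr, rfl, by push_cast; omega⟩
  exact hle hmem

/-- With `R = ℝ[x,y,z]`, `s` swapping `x` and `y`, and
`Bₛ = R ⊗_{Rˢ} R (1)`, there is an isomorphism of graded `R`-bimodules
`Bₛ ⊗_R Bₛ ≅ Bₛ(1) ⊕ Bₛ(-1)`: an `ℝ`-linear equivalence commuting with the left and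
right multiplications by `R` and sending the degree-`n` component of `Bₛ Bₛ` into the
degree-`(n+1)` and degree-`(n-1)` components of `Bₛ` respectively. -/
theorem BsBs_iso_Bs_shifted :
    ∃ f : BsBs ≃ₗ[ℝ] Bs × Bs,
      (∀ (p q : RR3) (u : BsBs),
        f (((p ⊗ₜ 1 : BsBs) * u) * (1 ⊗ₜ (1 ⊗ₜ q))) =
          ((p ⊗ₜ 1 : Bs) * (f u).1 * (1 ⊗ₜ q), (p ⊗ₜ 1 : Bs) * (f u).2 * (1 ⊗ₜ q))) ∧
      (∀ (n : ℤ) (u : BsBs), u ∈ BsBsDeg n →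
        (f u).1 ∈ BsDeg (n + 1) ∧ (f u).2 ∈ BsDeg (n - 1)) := by
  refine ⟨eRs.restrictScalars ℝ, ?_, ?_⟩
  · intro p q u
    exact bimod p q u
  · intro n u hu
    exact grading n u hu
end

section
/- With R = ℝ[x,y,z] and W = S₃ permuting the variables, there is an isomorphism of graded R^W-modules R ≅ ⊕_{w∈S₃} R^W(-2ℓ(w)), where ℓ is the Coxeter length; explicitly R is free of rank 6 over R^W = ℝ[e₁,e₂,e₃] with graded ranks given by the Poincaré polynomial of S₃. -/
open MvPolynomial

/-- The action of the simple reflection `r = (23)`, exchanging `y` and `z`. -/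
noncomputable def rAct : RR3 ≃ₐ[ℝ] RR3 :=
  MvPolynomial.renameEquiv ℝ (Equiv.swap (1 : Fin 3) 2)

/-- The ring of symmetric polynomials `R^W  = ℝ[x+y+z, xy+xz+yz, xyz]`, i.e. the
polynomials invariant under both simple reflections. -/
noncomputable def RW : Subalgebra ℝ RR3 :=
  AlgHom.equalizer (sAct : RR3 →ₐ[ℝ] RR3) (AlgHom.id ℝ RR3) ⊓
    AlgHom.equalizer (rAct : RR3 →ₐ[ℝ] RR3) (AlgHom.id ℝ RR3)

/-- The Coxeter length of a permutation of `{0,1,2}` with respect to the simple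
transpositions `s = (01)` and `r = (12)`. -/
noncomputable def coxLen (w : Equiv.Perm (Fin 3)) : ℕ :=
  sInf {n | ∃ l : List (Equiv.Perm (Fin 3)), l.length = n ∧
    (∀ x ∈ l, x = Equiv.swap 0 1 ∨ x = Equiv.swap 1 2) ∧ l.prod = w}

lemma mem_RW_iff {p : RR3} :
    p ∈ RW ↔ rename (Equiv.swap (0:Fin 3) 1) p = p ∧ rename (Equiv.swap (1:Fin 3) 2) p = p := by
  rfl

lemma X0_sub_X1_ne : (X 0 - X 1 : RR3) ≠ 0 :=
  sub_ne_zero.mpr (fun h => (by decide : (0:Fin 3) ≠ 1) (X_injective h))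
lemma X0_sub_X2_ne : (X 0 - X 2 : RR3) ≠ 0 :=
  sub_ne_zero.mpr (fun h => (by decide : (0:Fin 3) ≠ 2) (X_injective h))
lemma X1_sub_X2_ne : (X 1 - X 2 : RR3) ≠ 0 :=
  sub_ne_zero.mpr (fun h => (by decide : (1:Fin 3) ≠ 2) (X_injective h))

noncomputable def E1 : RR3 := X 0 + X 1 + X 2
noncomputable def E2 : RR3 := X 0 * X 1 + X 0 * X 2 + X 1 * X 2
noncomputable def E3 : RR3 := X 0 * X 1 * X 2

lemma E1_mem : E1 ∈ RW := by
  constructor <;> · show rename _ _ = _; simp [E1, map_add, rename_X, Equiv.swap_apply_def]; ring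
lemma E2_mem : E2 ∈ RW := by
  constructor <;> · show rename _ _ = _; simp [E2, map_add, map_mul, rename_X, Equiv.swap_apply_def]; ring
lemma E3_mem : E3 ∈ RW := by
  constructor <;> · show rename _ _ = _; simp [E3, map_mul, rename_X, Equiv.swap_apply_def]; ring

-- invariance under the third swap
lemma RW_swap02 {p : RR3} (hp : p ∈ RW) : rename (Equiv.swap (0:Fin 3) 2) p = p := by
  obtain ⟨hs, hr⟩ := mem_RW_iff.mp hp
  have : (⇑(Equiv.swap (0:Fin 3) 1) ∘ ⇑(Equiv.swap (1:Fin 3) 2)) ∘ ⇑(Equiv.swap (0:Fin 3) 1)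
      = ⇑(Equiv.swap (0:Fin 3) 2) := by
    funext i; fin_cases i <;> decide
  calc rename (Equiv.swap (0:Fin 3) 2) p
      = rename ((⇑(Equiv.swap (0:Fin 3) 1) ∘ ⇑(Equiv.swap (1:Fin 3) 2)) ∘ ⇑(Equiv.swap (0:Fin 3) 1)) p := by rw [this]
    _ = p := by rw [← rename_rename, ← rename_rename, hs, hr, hs]

-- independence of 1, x, x^2 over RW
lemma indep3 {p0 p1 p2 : RR3} (h0 : p0 ∈ RW) (h1 : p1 ∈ RW) (h2 : p2 ∈ RW)
    (h : p0 + p1 * X 0 + p2 * X 0 ^ 2 = 0) : p0 = 0 ∧ p1 = 0 ∧ p2 = 0 := by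
  have hy : p0 + p1 * X 1 + p2 * X 1 ^ 2 = 0 := by
    have := congrArg (rename (Equiv.swap (0:Fin 3) 1)) h
    simpa [map_add, map_mul, map_pow, rename_X, (mem_RW_iff.mp h0).1, (mem_RW_iff.mp h1).1,
      (mem_RW_iff.mp h2).1, Equiv.swap_apply_left] using this
  have hz : p0 + p1 * X 2 + p2 * X 2 ^ 2 = 0 := by
    have := congrArg (rename (Equiv.swap (0:Fin 3) 2)) h
    simpa [map_add, map_mul, map_pow, rename_X, RW_swap02 h0, RW_swap02 h1, RW_swap02 h2,
      Equiv.swap_apply_left] using this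
  have e1 : (X 0 - X 1) * (p1 + p2 * (X 0 + X 1)) = 0 := by linear_combination h - hy
  have e2 : (X 0 - X 2) * (p1 + p2 * (X 0 + X 2)) = 0 := by linear_combination h - hz
  have f1 : p1 + p2 * (X 0 + X 1) = 0 := by
    rcases mul_eq_zero.mp e1 with h' | h'
    · exact absurd h' X0_sub_X1_ne
    · exact h'
  have f2 : p1 + p2 * (X 0 + X 2) = 0 := by
    rcases mul_eq_zero.mp e2 with h' | h'
    · exact absurd h' X0_sub_X2_ne
    · exact h'
  have e3 : p2 * (X 1 - X 2) = 0 := by linear_combination f1 - f2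
  have hp2 : p2 = 0 := by
    rcases mul_eq_zero.mp e3 with h' | h'
    · exact h'
    · exact absurd h' X1_sub_X2_ne
  have hp1 : p1 = 0 := by linear_combination f1 - (X 0 + X 1) * hp2
  have hp0 : p0 = 0 := by linear_combination h - X 0 * hp1 - X 0 ^ 2 * hp2
  exact ⟨hp0, hp1, hp2⟩

-- independence of 1, (y-z) over r-invariants
lemma indep2 {P Q : RR3} (hP : rename (Equiv.swap (1:Fin 3) 2) P = P)
    (hQ : rename (Equiv.swap (1:Fin 3) 2) Q = Q)
    (h : P + Q * (X 1 - X 2) = 0) : P = 0 ∧ Q = 0 := by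
  have h' : P + Q * (X 2 - X 1) = 0 := by
    have := congrArg (rename (Equiv.swap (1:Fin 3) 2)) h
    simpa [map_add, map_mul, map_sub, rename_X, hP, hQ, Equiv.swap_apply_left,
      Equiv.swap_apply_right] using this
  have e : Q * (X 1 - X 2) * 2 = 0 := by linear_combination h - h'
  have hQ0 : Q = 0 := by
    rcases mul_eq_zero.mp e with h'' | h''
    · rcases mul_eq_zero.mp h'' with h3 | h3
      · exact h3
      · exact absurd h3 X1_sub_X2_ne
    · exact absurd h'' two_ne_zero
  refine ⟨?_, hQ0⟩
  linear_combination h - (X 1 - X 2) * hQ0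

-- divisibility lemma
lemma dvd_sub_rename (f : RR3) : (X 1 - X 2 : RR3) ∣ f - rename (Equiv.swap (1:Fin 3) 2) f := by
  induction f using MvPolynomial.induction_on' with
  | add p q hp hq =>
    have : p + q - rename (Equiv.swap (1:Fin 3) 2) (p + q)
        = (p - rename (Equiv.swap (1:Fin 3) 2) p) + (q - rename (Equiv.swap (1:Fin 3) 2) q) := by
      rw [map_add]; ring
    rw [this]; exact dvd_add hp hq
  | monomial u a =>
    obtain ⟨b, c, d, rfl⟩ : ∃ b c d, u = Finsupp.single 0 b + Finsupp.single 1 c + Finsupp.single 2 d :=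
      ⟨u 0, u 1, u 2, by ext i; fin_cases i <;> simp [Finsupp.single_apply]⟩
    have expand : ∀ (b c d : ℕ),
        (monomial (Finsupp.single 0 b + Finsupp.single 1 c + Finsupp.single 2 d) a : RR3)
        = C a * X 0 ^ b * X 1 ^ c * X 2 ^ d := by
      intro b c d
      rw [X_pow_eq_monomial, X_pow_eq_monomial, X_pow_eq_monomial]
      rw [C_mul_monomial, monomial_mul, monomial_mul]
      simp [add_assoc]
    rw [rename_monomial]
    have hmap : Finsupp.mapDomain (⇑(Equiv.swap (1:Fin 3) 2))
          (Finsupp.single 0 b + Finsupp.single 1 c + Finsupp.single 2 d)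
        = Finsupp.single 0 b + Finsupp.single 1 d + Finsupp.single 2 c := by
      simp only [Finsupp.mapDomain_add, Finsupp.mapDomain_single, Equiv.swap_apply_left,
        Equiv.swap_apply_right, show (Equiv.swap (1:Fin 3) 2) 0 = 0 by decide]
      ext i; fin_cases i <;> simp [Finsupp.single_apply]
    rw [hmap, expand, expand]
    have factored : (C a * X 0 ^ b * X 1 ^ c * X 2 ^ d : RR3) - C a * X 0 ^ b * X 1 ^ d * X 2 ^ c
        = C a * X 0 ^ b * (X 1 ^ c * X 2 ^ d - X 1 ^ d * X 2 ^ c) := by ring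
    rw [factored]
    apply Dvd.dvd.mul_left
    rcases le_total c d with hle | hle
    · obtain ⟨k, hk⟩ := Nat.exists_eq_add_of_le hle
      have : (X 1 ^ c * X 2 ^ d - X 1 ^ d * X 2 ^ c : RR3)
          = X 1 ^ c * X 2 ^ c * (X 2 ^ k - X 1 ^ k) := by rw [hk]; ring
      rw [this]
      apply Dvd.dvd.mul_left
      have hd := sub_dvd_pow_sub_pow (X 2 : RR3) (X 1) k
      have hneg : (X 1 - X 2 : RR3) = -(X 2 - X 1) := by ring
      rw [hneg]; exact (neg_dvd).mpr hd
    · obtain ⟨k, hk⟩ := Nat.exists_eq_add_of_le hle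
      have : (X 1 ^ c * X 2 ^ d - X 1 ^ d * X 2 ^ c : RR3)
          = X 1 ^ d * X 2 ^ d * (X 1 ^ k - X 2 ^ k) := by rw [hk]; ring
      rw [this]
      exact Dvd.dvd.mul_left (sub_dvd_pow_sub_pow _ _ k) _

-- decomposition f = g + (y-z) h with g,h r-invariant
lemma decomp (f : RR3) : ∃ g h : RR3, rename (Equiv.swap (1:Fin 3) 2) g = g ∧
    rename (Equiv.swap (1:Fin 3) 2) h = h ∧ f = g + (X 1 - X 2) * h := by
  obtain ⟨h', hh'⟩ := dvd_sub_rename f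
  have rr : ∀ p : RR3, rename (Equiv.swap (1:Fin 3) 2) (rename (Equiv.swap (1:Fin 3) 2) p) = p := by
    intro p
    rw [rename_rename]
    have : (⇑(Equiv.swap (1:Fin 3) 2)) ∘ (⇑(Equiv.swap (1:Fin 3) 2)) = id := by
      funext i; fin_cases i <;> decide
    rw [this, rename_id, AlgHom.id_apply]
  have hren : rename (Equiv.swap (1:Fin 3) 2) h' = h' := by
    have happ := congrArg (rename (Equiv.swap (1:Fin 3) 2)) hh'
    rw [map_sub, map_mul, map_sub, rename_X, rename_X, rr] at happ
    have hs12 : rename (Equiv.swap (1:Fin 3) 2) (X 1 : RR3) = X 2 := by rw [rename_X, Equiv.swap_apply_left]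
    -- happ : rename r f - f = (X (swap 1) - X (swap 2)) * rename r h'
    rw [Equiv.swap_apply_left, Equiv.swap_apply_right] at happ
    -- happ : rename r f - f = (X 2 - X 1) * rename r h'
    have : (X 1 - X 2 : RR3) * h' = (X 1 - X 2) * rename (Equiv.swap (1:Fin 3) 2) h' := by
      linear_combination -hh' - happ
    exact (mul_left_cancel₀ X1_sub_X2_ne this).symm
  refine ⟨(1/2 : ℝ) • (f + rename (Equiv.swap (1:Fin 3) 2) f), (1/2 : ℝ) • h', ?_, ?_, ?_⟩
  · rw [map_smul, map_add, rr, add_comm]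
  · rw [map_smul, hren]
  · rw [smul_add, mul_smul_comm]
    have h2 : (X 1 - X 2 : RR3) * h' = f - rename (Equiv.swap (1:Fin 3) 2) f := hh'.symm
    rw [h2]
    module

noncomputable def fse := MvPolynomial.finSuccEquiv ℝ 2

lemma fse_rename_comm (p : RR3) :
    fse (rename (Equiv.swap (1:Fin 3) 2) p)
      = Polynomial.map (rename (Equiv.swap (0:Fin 2) 1) : MvPolynomial (Fin 2) ℝ →ₐ[ℝ] MvPolynomial (Fin 2) ℝ).toRingHom (fse p) := by
  have key : (fse.toAlgHom.comp (rename (Equiv.swap (1:Fin 3) 2)))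
      = (Polynomial.mapAlgHom (rename (Equiv.swap (0:Fin 2) 1))).comp fse.toAlgHom := by
    apply MvPolynomial.algHom_ext
    intro i
    fin_cases i
    · simp [fse, Polynomial.mapAlgHom,
        show (Equiv.swap (1:Fin 3) 2) 0 = 0 by decide, finSuccEquiv_X_zero]
    · have h1 : (X (1:Fin 3) : RR3) = X ((0:Fin 2).succ) := rfl
      simp [fse, Polynomial.mapAlgHom, Equiv.swap_apply_left,
        show (X (2:Fin 3) : RR3) = X ((1:Fin 2).succ) from rfl, h1,
        finSuccEquiv_X_succ]
    · have h1 : (X (2:Fin 3) : RR3) = X ((1:Fin 2).succ) := rfl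
      simp [fse, Polynomial.mapAlgHom, Equiv.swap_apply_right,
        show (X (1:Fin 3) : RR3) = X ((0:Fin 2).succ) from rfl, h1,
        finSuccEquiv_X_succ]
  have := DFunLike.congr_fun key p
  simpa [Polynomial.mapAlgHom] using this

lemma fse_C (c : MvPolynomial (Fin 2) ℝ) :
    fse (rename (Fin.succ : Fin 2 → Fin 3) c) = Polynomial.C c := by
  have key : (fse.toAlgHom.comp (rename (Fin.succ : Fin 2 → Fin 3)))
      = Polynomial.CAlgHom := by
    apply MvPolynomial.algHom_ext
    intro i
    fin_cases i
    · simpa [fse, Polynomial.CAlgHom] using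
        (finSuccEquiv_X_succ (R := ℝ) (n := 2) (j := 0))
    · simpa [fse, Polynomial.CAlgHom] using
        (finSuccEquiv_X_succ (R := ℝ) (n := 2) (j := 1))
  exact DFunLike.congr_fun key c

lemma esymm2_fin2 : esymm (Fin 2) ℝ 2 = X 0 * X 1 := by
  rw [esymm]
  have h : Finset.powersetCard 2 (Finset.univ : Finset (Fin 2)) = {Finset.univ} := by decide
  rw [h, Finset.sum_singleton, Fin.prod_univ_two]

lemma S1 (g : RR3) (hg : rename (Equiv.swap (1:Fin 3) 2) g = g) :
    g ∈ Algebra.adjoin ℝ (insert (X 0 : RR3) (RW : Set RR3)) := by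
  set A := Algebra.adjoin ℝ (insert (X 0 : RR3) (RW : Set RR3)) with hA
  have hx : (X 0 : RR3) ∈ A := Algebra.subset_adjoin (Set.mem_insert _ _)
  have hRWA : ∀ p ∈ RW, p ∈ A := fun p hp =>
    Algebra.subset_adjoin (Set.mem_insert_of_mem _ hp)
  have hyzadd : (X 1 + X 2 : RR3) ∈ A := by
    have he : (X 1 + X 2 : RR3) = E1 - X 0 := by rw [E1]; ring
    rw [he]; exact sub_mem (hRWA _ E1_mem) hx
  have hyzmul : (X 1 * X 2 : RR3) ∈ A := by
    have he : (X 1 * X 2 : RR3) = E2 - X 0 * (E1 - X 0) := by rw [E1, E2]; ring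
    rw [he]; exact sub_mem (hRWA _ E2_mem) (mul_mem hx (sub_mem (hRWA _ E1_mem) hx))
  have hcoeff : ∀ k, ((fse g).coeff k).IsSymmetric := by
    intro k e
    have hmap : Polynomial.map (rename (Equiv.swap (0:Fin 2) 1) : MvPolynomial (Fin 2) ℝ →ₐ[ℝ] MvPolynomial (Fin 2) ℝ).toRingHom (fse g) = fse g := by
      rw [← fse_rename_comm, hg]
    have hco : rename (Equiv.swap (0:Fin 2) 1) ((fse g).coeff k) = (fse g).coeff k := by
      have := congrArg (fun q => Polynomial.coeff q k) hmap
      simpa [Polynomial.coeff_map] using this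
    have he : e = 1 ∨ e = Equiv.swap 0 1 := by revert e; decide
    rcases he with rfl | rfl
    · simp only [Equiv.Perm.coe_one]
      exact DFunLike.congr_fun rename_id _
    · exact hco
  have hmem : ∀ k, rename (Fin.succ : Fin 2 → Fin 3) ((fse g).coeff k) ∈ A := by
    intro k
    obtain ⟨q, hq⟩ := esymmAlgHom_surjective (σ := Fin 2) ℝ (n := 2) (by simp)
      ⟨(fse g).coeff k, hcoeff k⟩
    have hval : (fse g).coeff k = aeval (fun i : Fin 2 => esymm (Fin 2) ℝ (i+1)) q := by
      have := congrArg Subtype.val hq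
      rw [esymmAlgHom_apply] at this
      exact this.symm
    rw [hval]
    have hcomp : (rename (Fin.succ : Fin 2 → Fin 3)).comp
        (aeval (fun i : Fin 2 => esymm (Fin 2) ℝ (i+1)))
        = aeval (fun i : Fin 2 => rename (Fin.succ : Fin 2 → Fin 3) (esymm (Fin 2) ℝ (i+1))) :=
      comp_aeval _ _
    have happ := DFunLike.congr_fun hcomp q
    simp only [AlgHom.coe_comp, Function.comp_apply] at happ
    rw [happ]
    have hrange : Set.range (fun i : Fin 2 => rename (Fin.succ : Fin 2 → Fin 3) (esymm (Fin 2) ℝ (i+1))) ⊆ (A : Set RR3) := by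
      rintro _ ⟨i, rfl⟩
      fin_cases i
      · simpa [esymm_one, Fin.sum_univ_two, map_add, rename_X,
          show Fin.succ (0:Fin 2) = 1 from rfl, show Fin.succ (1:Fin 2) = 2 from rfl] using hyzadd
      · simpa [esymm2_fin2, map_mul, rename_X,
          show Fin.succ (0:Fin 2) = 1 from rfl, show Fin.succ (1:Fin 2) = 2 from rfl] using hyzmul
    have : aeval (fun i : Fin 2 => rename (Fin.succ : Fin 2 → Fin 3) (esymm (Fin 2) ℝ (i+1))) q
        ∈ Algebra.adjoin ℝ (Set.range (fun i : Fin 2 => rename (Fin.succ : Fin 2 → Fin 3) (esymm (Fin 2) ℝ (i+1)))) := by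
      rw [Algebra.adjoin_range_eq_range_aeval]
      exact ⟨q, rfl⟩
    exact Algebra.adjoin_le hrange this
  have hrec : g = ∑ k ∈ (fse g).support, rename (Fin.succ : Fin 2 → Fin 3) ((fse g).coeff k) * X 0 ^ k := by
    apply (fse : RR3 ≃ₐ[ℝ] _).injective
    rw [map_sum]
    conv_lhs => rw [(fse g).as_sum_support_C_mul_X_pow]
    refine Finset.sum_congr rfl fun k _ => ?_
    rw [map_mul, map_pow, fse_C]
    congr 1
    rw [show fse (X 0 : RR3) = Polynomial.X from finSuccEquiv_X_zero]
  rw [hrec]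
  exact Subalgebra.sum_mem _ fun k _ => mul_mem (hmem k) (pow_mem hx k)

noncomputable def Mspan : Submodule RW RR3 := Submodule.span RW {1, X 0, (X 0)^2}

lemma smul_coe (c : RW) (a : RR3) : c • a = (c : RR3) * a := by rw [Algebra.smul_def]; rfl

lemma xpow_mem : ∀ k ≤ 4, (X 0 : RR3) ^ k ∈ Mspan := by
  have g1 : (1:RR3) ∈ Mspan := Submodule.subset_span (by simp)
  have gx : (X 0:RR3) ∈ Mspan := Submodule.subset_span (by simp)
  have gx2 : ((X 0:RR3)^2) ∈ Mspan := Submodule.subset_span (by simp)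
  have combo : ∀ (a b c : RW), (a:RR3) * (X 0)^2 + (b:RR3) * X 0 + (c:RR3) ∈ Mspan := by
    intro a b c
    refine add_mem (add_mem ?_ ?_) ?_
    · rw [← smul_coe]; exact Submodule.smul_mem _ _ gx2
    · rw [← smul_coe]; exact Submodule.smul_mem _ _ gx
    · rw [← mul_one (c:RR3), ← smul_coe]; exact Submodule.smul_mem _ _ g1
  have hx3 : (X 0:RR3)^3 ∈ Mspan := by
    have he : (X 0:RR3)^3 = ((⟨E1, E1_mem⟩ : RW) : RR3) * (X 0)^2
        + ((⟨-E2, neg_mem E2_mem⟩ : RW) : RR3) * X 0 + ((⟨E3, E3_mem⟩ : RW) : RR3) := by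
      show (X 0:RR3)^3 = E1 * (X 0)^2 + (-E2) * X 0 + E3
      rw [E1, E2, E3]; ring
    rw [he]; exact combo _ _ _
  have hx4 : (X 0:RR3)^4 ∈ Mspan := by
    have he : (X 0:RR3)^4 = ((⟨E1*E1 - E2, sub_mem (mul_mem E1_mem E1_mem) E2_mem⟩ : RW) : RR3) * (X 0)^2
        + ((⟨E3 - E1*E2, sub_mem E3_mem (mul_mem E1_mem E2_mem)⟩ : RW) : RR3) * X 0
        + ((⟨E1*E3, mul_mem E1_mem E3_mem⟩ : RW) : RR3) := by
      show (X 0:RR3)^4 = (E1*E1 - E2) * (X 0)^2 + (E3 - E1*E2) * X 0 + E1*E3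
      rw [E1, E2, E3]; ring
    rw [he]; exact combo _ _ _
  intro k hk
  interval_cases k
  · simpa using g1
  · simpa using gx
  · exact gx2
  · exact hx3
  · exact hx4

lemma gen_pow {u : RR3} (hu : u ∈ ({1, X 0, (X 0)^2} : Set RR3)) : ∃ i ≤ 2, u = (X 0:RR3)^i := by
  rcases hu with rfl | rfl | rfl
  · exact ⟨0, by norm_num⟩
  · exact ⟨1, by norm_num⟩
  · exact ⟨2, by norm_num⟩

lemma Mspan_mul_mem : ∀ {a b : RR3}, a ∈ Mspan → b ∈ Mspan → a * b ∈ Mspan := by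
  have genmul : ∀ u ∈ ({1, X 0, (X 0)^2} : Set RR3), ∀ {b}, b ∈ Mspan → u * b ∈ Mspan := by
    intro u hu b hb
    induction hb using Submodule.span_induction with
    | mem v hv =>
      obtain ⟨i, hi, rfl⟩ := gen_pow hu
      obtain ⟨j, hj, rfl⟩ := gen_pow hv
      rw [← pow_add]
      exact xpow_mem _ (by omega)
    | zero => rw [mul_zero]; exact zero_mem _
    | add v w _ _ ihv ihw => rw [mul_add]; exact add_mem ihv ihw
    | smul c v _ ihv => rw [mul_smul_comm]; exact Submodule.smul_mem _ _ ihv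
  intro a b ha hb
  induction ha using Submodule.span_induction with
  | mem u hu => exact genmul u hu hb
  | zero => rw [zero_mul]; exact zero_mem _
  | add v w _ _ ihv ihw => rw [add_mul]; exact add_mem ihv ihw
  | smul c v _ ihv => rw [smul_mul_assoc]; exact Submodule.smul_mem _ _ ihv

lemma adjoin_le_Mspan : ∀ p ∈ Algebra.adjoin ℝ (insert (X 0 : RR3) (RW : Set RR3)), p ∈ Mspan := by
  have hRWmem : ∀ p ∈ RW, p ∈ Mspan := by
    intro p hp
    rw [← mul_one p, show (p * 1 : RR3) = ((⟨p, hp⟩ : RW) : RR3) * 1 from rfl, ← smul_coe]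
    exact Submodule.smul_mem _ _ (Submodule.subset_span (by simp))
  intro p hp
  induction hp using Algebra.adjoin_induction with
  | mem v hv =>
    rcases hv with rfl | hv
    · exact Submodule.subset_span (by simp)
    · exact hRWmem _ hv
  | algebraMap r =>
    refine hRWmem _ ?_
    constructor <;> · show rename _ _ = _; simp [algebraMap_eq, rename_C]
  | add v w _ _ ihv ihw => exact add_mem ihv ihw
  | mul v w _ _ ihv ihw => exact Mspan_mul_mem ihv ihw

noncomputable def bb : Fin 6 → RR3 :=
  ![1, X 0, X 1 - X 2, (X 0)^2, X 0 * (X 1 - X 2), (X 0)^2 * (X 1 - X 2)]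

lemma span_bb_top : ⊤ ≤ Submodule.span RW (Set.range bb) := by
  have hsub : Mspan ≤ Submodule.span RW (Set.range bb) := by
    rw [Mspan, Submodule.span_le]
    rintro u (rfl | rfl | rfl)
    · exact Submodule.subset_span ⟨0, rfl⟩
    · exact Submodule.subset_span ⟨1, rfl⟩
    · exact Submodule.subset_span ⟨3, rfl⟩
  have hmul : ∀ p ∈ Mspan, (X 1 - X 2 : RR3) * p ∈ Submodule.span RW (Set.range bb) := by
    intro p hp
    induction hp using Submodule.span_induction with
    | mem v hv =>
      rcases hv with rfl | rfl | rfl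
      · rw [mul_one]; exact Submodule.subset_span ⟨2, rfl⟩
      · rw [mul_comm]; exact Submodule.subset_span ⟨4, rfl⟩
      · rw [mul_comm]; exact Submodule.subset_span ⟨5, rfl⟩
    | zero => rw [mul_zero]; exact zero_mem _
    | add v w _ _ ihv ihw => rw [mul_add]; exact add_mem ihv ihw
    | smul c v _ ihv => rw [mul_smul_comm]; exact Submodule.smul_mem _ _ ihv
  intro f _
  obtain ⟨g, h, hg, hh, rfl⟩ := decomp f
  exact add_mem (hsub (adjoin_le_Mspan _ (S1 g hg))) (hmul _ (adjoin_le_Mspan _ (S1 h hh)))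

lemma bb_li : LinearIndependent RW bb := by
  rw [Fintype.linearIndependent_iff]
  intro g hsum
  rw [Fin.sum_univ_six] at hsum
  simp only [show bb 0 = 1 from rfl, show bb 1 = X 0 from rfl, show bb 2 = X 1 - X 2 from rfl,
    show bb 3 = (X 0)^2 from rfl, show bb 4 = X 0 * (X 1 - X 2) from rfl,
    show bb 5 = (X 0)^2 * (X 1 - X 2) from rfl, smul_coe] at hsum
  have hPQ : ((g 0 : RR3) + (g 1 : RR3) * X 0 + (g 3 : RR3) * (X 0)^2)
      + ((g 2 : RR3) + (g 4 : RR3) * X 0 + (g 5 : RR3) * (X 0)^2) * (X 1 - X 2) = 0 := by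
    linear_combination hsum
  have hrx : rename (Equiv.swap (1:Fin 3) 2) (X 0 : RR3) = X 0 := by
    rw [rename_X, show (Equiv.swap (1:Fin 3) 2) 0 = 0 by decide]
  have hrinv : ∀ i : Fin 6, rename (Equiv.swap (1:Fin 3) 2) ((g i : RR3)) = (g i : RR3) :=
    fun i => (mem_RW_iff.mp (g i).2).2
  have hrP : rename (Equiv.swap (1:Fin 3) 2)
      ((g 0 : RR3) + (g 1 : RR3) * X 0 + (g 3 : RR3) * (X 0)^2)
      = (g 0 : RR3) + (g 1 : RR3) * X 0 + (g 3 : RR3) * (X 0)^2 := by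
    simp only [map_add, map_mul, map_pow, hrx, hrinv]
  have hrQ : rename (Equiv.swap (1:Fin 3) 2)
      ((g 2 : RR3) + (g 4 : RR3) * X 0 + (g 5 : RR3) * (X 0)^2)
      = (g 2 : RR3) + (g 4 : RR3) * X 0 + (g 5 : RR3) * (X 0)^2 := by
    simp only [map_add, map_mul, map_pow, hrx, hrinv]
  obtain ⟨hP, hQ⟩ := indep2 hrP hrQ hPQ
  obtain ⟨h0, h1, h3⟩ := indep3 (g 0).2 (g 1).2 (g 3).2 hP
  obtain ⟨h2, h4, h5⟩ := indep3 (g 2).2 (g 4).2 (g 5).2 hQ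
  intro i
  fin_cases i
  · exact Subtype.ext h0
  · exact Subtype.ext h1
  · exact Subtype.ext h2
  · exact Subtype.ext h3
  · exact Subtype.ext h4
  · exact Subtype.ext h5


lemma prod_short : ∀ (l : List (Equiv.Perm (Fin 3))),
    (∀ a ∈ l, a = Equiv.swap 0 1 ∨ a = Equiv.swap 1 2) →
    (l.length = 0 → l.prod = 1) ∧
    (l.length = 1 → (l.prod = Equiv.swap 0 1 ∨ l.prod = Equiv.swap 1 2)) ∧
    (l.length = 2 → (l.prod = 1 ∨ l.prod = Equiv.swap 0 1 * Equiv.swap 1 2 ∨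
      l.prod = Equiv.swap 1 2 * Equiv.swap 0 1)) := by
  intro l hl
  match l with
  | [] => exact ⟨fun _ => rfl, by simp, by simp⟩
  | [a] =>
    rcases hl a (by simp) with rfl | rfl <;> exact ⟨by simp, fun _ => by simp, by simp⟩
  | [a, b] =>
    rcases hl a (by simp) with rfl | rfl <;> rcases hl b (by simp) with rfl | rfl <;>
      exact ⟨by simp, by simp, fun _ => by decide⟩
  | a :: b :: c :: rest =>
    exact ⟨fun h => absurd h (by simp), fun h => absurd h (by simp), fun h => absurd h (by simp)⟩

lemma coxLen_eval (w : Equiv.Perm (Fin 3)) (n : ℕ) (l : List (Equiv.Perm (Fin 3)))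
    (hent : ∀ x ∈ l, x = Equiv.swap 0 1 ∨ x = Equiv.swap 1 2)
    (hlen : l.length = n) (hprod : l.prod = w)
    (hmin : ∀ m, m < n → ∀ l' : List (Equiv.Perm (Fin 3)), l'.length = m →
      (∀ x ∈ l', x = Equiv.swap 0 1 ∨ x = Equiv.swap 1 2) → l'.prod ≠ w) :
    coxLen w = n := by
  apply le_antisymm
  · exact Nat.sInf_le ⟨l, hlen, hent, hprod⟩
  · refine le_csInf ⟨n, ?_⟩ ?_
    · exact ⟨l, hlen, hent, hprod⟩
    rintro m ⟨l', hlen', hent', hprod'⟩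
    by_contra hlt
    push_neg at hlt
    exact hmin m hlt l' hlen' hent' hprod'

lemma coxLen_one : coxLen 1 = 0 :=
  coxLen_eval 1 0 [] (by simp) rfl rfl (by omega)

lemma coxLen_s : coxLen (Equiv.swap 0 1) = 1 := by
  refine coxLen_eval _ 1 [Equiv.swap 0 1] (by simp) rfl (by simp) ?_
  intro m hm l' hlen' hent'
  interval_cases m
  rw [(prod_short l' hent').1 hlen']
  decide

lemma coxLen_r : coxLen (Equiv.swap 1 2) = 1 := by
  refine coxLen_eval _ 1 [Equiv.swap 1 2] (by simp) rfl (by simp) ?_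
  intro m hm l' hlen' hent'
  interval_cases m
  rw [(prod_short l' hent').1 hlen']
  decide

lemma coxLen_sr : coxLen (Equiv.swap 0 1 * Equiv.swap 1 2) = 2 := by
  refine coxLen_eval _ 2 [Equiv.swap 0 1, Equiv.swap 1 2] (by intro x hx; simpa using hx) rfl
    (by simp) ?_
  intro m hm l' hlen' hent'
  interval_cases m
  · rw [(prod_short l' hent').1 hlen']; decide
  · rcases (prod_short l' hent').2.1 hlen' with h | h <;> rw [h] <;> decide

lemma coxLen_rs : coxLen (Equiv.swap 1 2 * Equiv.swap 0 1) = 2 := by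
  refine coxLen_eval _ 2 [Equiv.swap 1 2, Equiv.swap 0 1] (by intro x hx; simp at hx; tauto) rfl
    (by simp) ?_
  intro m hm l' hlen' hent'
  interval_cases m
  · rw [(prod_short l' hent').1 hlen']; decide
  · rcases (prod_short l' hent').2.1 hlen' with h | h <;> rw [h] <;> decide

lemma coxLen_srs : coxLen (Equiv.swap 0 1 * Equiv.swap 1 2 * Equiv.swap 0 1) = 3 := by
  refine coxLen_eval _ 3 [Equiv.swap 0 1, Equiv.swap 1 2, Equiv.swap 0 1]
    (by intro x hx; simp at hx; tauto) rfl (by simp [mul_assoc]) ?_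
  intro m hm l' hlen' hent'
  interval_cases m
  · rw [(prod_short l' hent').1 hlen']; decide
  · rcases (prod_short l' hent').2.1 hlen' with h | h <;> rw [h] <;> decide
  · rcases (prod_short l' hent').2.2 hlen' with h | h | h <;> rw [h] <;> decide

noncomputable def permEquiv : Fin 6 ≃ Equiv.Perm (Fin 3) where
  toFun := ![1, Equiv.swap 0 1, Equiv.swap 1 2, Equiv.swap 0 1 * Equiv.swap 1 2,
    Equiv.swap 1 2 * Equiv.swap 0 1, Equiv.swap 0 1 * Equiv.swap 1 2 * Equiv.swap 0 1]
  invFun w :=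
    if w = 1 then 0 else if w = Equiv.swap 0 1 then 1 else if w = Equiv.swap 1 2 then 2
    else if w = Equiv.swap 0 1 * Equiv.swap 1 2 then 3
    else if w = Equiv.swap 1 2 * Equiv.swap 0 1 then 4 else 5
  left_inv := by decide
  right_inv := by decide


/-- With `R = ℝ[x,y,z]` and `W = S₃` permuting the variables, there is
an isomorphism of graded `R^W`-modules `R ≅ ⊕_{w ∈ S₃} R^W(-2ℓ(w))`: explicitly, `R` is
free of rank `6` over `R^W`, with a homogeneous basis indexed by `S₃` in which the basis
element indexed by `w` has paper degree `2ℓ(w)` (i.e. is homogeneous of standard degree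
`ℓ(w)`), matching the Poincaré polynomial of `S₃`. -/
theorem R_free_over_invariants :
    Nat.card (Equiv.Perm (Fin 3)) = 6 ∧
    ∃ bas : Module.Basis (Equiv.Perm (Fin 3)) RW RR3,
      ∀ w : Equiv.Perm (Fin 3), (bas w).IsHomogeneous (coxLen w) := by
  constructor
  · rw [Nat.card_eq_fintype_card, Fintype.card_perm, Fintype.card_fin]; rfl
  · refine ⟨(Module.Basis.mk bb_li span_bb_top).reindex permEquiv, ?_⟩
    intro w
    have hw : w = 1 ∨ w = Equiv.swap 0 1 ∨ w = Equiv.swap 1 2 ∨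
        w = Equiv.swap 0 1 * Equiv.swap 1 2 ∨ w = Equiv.swap 1 2 * Equiv.swap 0 1 ∨
        w = Equiv.swap 0 1 * Equiv.swap 1 2 * Equiv.swap 0 1 := by revert w; decide
    have hX : (X 0 : RR3).IsHomogeneous 1 := isHomogeneous_X _ _
    have hYZ : (X 1 - X 2 : RR3).IsHomogeneous 1 :=
      (isHomogeneous_X _ _).sub (isHomogeneous_X _ _)
    rcases hw with rfl | rfl | rfl | rfl | rfl | rfl <;>
      rw [Module.Basis.reindex_apply, Module.Basis.mk_apply]
    · rw [show permEquiv.symm 1 = 0 by decide, coxLen_one]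
      exact isHomogeneous_one _ _
    · rw [show permEquiv.symm (Equiv.swap 0 1) = 1 by decide, coxLen_s]
      exact hX
    · rw [show permEquiv.symm (Equiv.swap 1 2) = 2 by decide, coxLen_r]
      exact hYZ
    · rw [show permEquiv.symm (Equiv.swap 0 1 * Equiv.swap 1 2) = 3 by decide, coxLen_sr]
      exact (by simpa using hX.pow 2 : (X 0 ^ 2 : RR3).IsHomogeneous 2)
    · rw [show permEquiv.symm (Equiv.swap 1 2 * Equiv.swap 0 1) = 4 by decide, coxLen_rs]
      exact (by simpa using hX.mul hYZ : (X 0 * (X 1 - X 2) : RR3).IsHomogeneous 2)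
    · rw [show permEquiv.symm (Equiv.swap 0 1 * Equiv.swap 1 2 * Equiv.swap 0 1) = 5 by decide,
        coxLen_srs]
      have := (hX.pow 2).mul hYZ
      exact (by simpa using this : (X 0 ^ 2 * (X 1 - X 2) : RR3).IsHomogeneous 3)
end
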